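/- arXiv:1712.07504 — 3 statements merged into one kernel-verified Lean document; each statement's English description precedes it below -/
import Mathlib

section
/- For every k ≥ 1, the counterexample graph G_k has exactly 8 perfect matchings. -/
/-- The number of perfect matchings of a graph, counted as the number of
subgraphs that are perfect matchings. -/
noncomputable def pmCount {V : Type*} (G : SimpleGraph V) : ℕ :=
  Nat.card {M : G.Subgraph // M.IsPerfectMatching}

/-- The number of near-perfect matchings of `G` with holes exactly at `u` and `v`,
i.e. matchings covering every vertex except `u` and `v`. -/
noncomputable def npCount {V : Type*} (G : SimpleGraph V) (u v : V) : ℕ :=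
  Nat.card {M : G.Subgraph // M.IsMatching ∧ M.verts = Set.univ \ {u, v}}

/-- The edge set of the chain-of-boxes gadget `B_k`, realized on the natural numbers:
the path vertices `v_0, …, v_{2k-1}` are `0, …, 2k-1`, and for `i < k` the extra
vertices are `a_i = 2k + 2i` and `b_i = 2k + 2i + 1`. -/
def boxEdges (k : ℕ) : Set (Sym2 ℕ) :=
  {e | ∃ j, j + 2 ≤ 2 * k ∧ e = s(j, j + 1)} ∪
  {e | ∃ i, i < k ∧ e = s(2 * i, 2 * k + 2 * i)} ∪
  {e | ∃ i, i < k ∧ e = s(2 * k + 2 * i, 2 * k + 2 * i + 1)} ∪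
  {e | ∃ i, i < k ∧ e = s(2 * k + 2 * i + 1, 2 * i + 1)}

/-- Relabelling of the vertices of a chain-of-boxes copy: the path endpoint
`v_0` (index `0`) is sent to `e0`, the path endpoint `v_{2k-1}` (index `2k-1`)
is sent to `e1`, and every other vertex `n` is sent to `base + n`. -/
def relabelBox (k e0 e1 base : ℕ) (n : ℕ) : ℕ :=
  if n = 0 then e0 else if n = 2 * k - 1 then e1 else base + n

/-- Edge set of the torpid-mixing gadget `H_k`, realized on ℕ.  The 12-cycle is
`a = 0, x₁ = 1, w₁ = 2, u = 3, w₂ = 4, x₂ = 5, b = 6, y₂ = 7, z₂ = 8, v = 9,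
z₁ = 10, y₁ = 11` (in cyclic order), together with the chord `{a, b}` and four
disjoint copies of the chain-of-boxes gadget `B_k` whose path endpoints
`(v_0, v_{2k-1})` are identified with `(w₁, a)`, `(a, z₁)`, `(w₂, b)`, `(b, z₂)`
respectively; the internal vertices of the `j`-th copy are relabelled into the
range starting at `12 + 4kj`. -/
def gadgetEdges (k : ℕ) : Set (Sym2 ℕ) :=
  {e | ∃ i, i < 12 ∧ e = s(i, (i + 1) % 12)} ∪ {s(0, 6)} ∪
  Sym2.map (relabelBox k 2 0 12) '' boxEdges k ∪
  Sym2.map (relabelBox k 0 10 (12 + 4 * k)) '' boxEdges k ∪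
  Sym2.map (relabelBox k 4 6 (12 + 8 * k)) '' boxEdges k ∪
  Sym2.map (relabelBox k 6 8 (12 + 12 * k)) '' boxEdges k

/-- Vertex set of the torpid-mixing gadget `H_k`: the 12 cycle vertices together
with the internal (non-endpoint) vertices of the four chain-of-boxes copies. -/
def gadgetVerts (k : ℕ) : Set ℕ :=
  {n | n < 12} ∪
  {m | ∃ j, j < 4 ∧ ∃ n, 0 < n ∧ n < 4 * k ∧ n ≠ 2 * k - 1 ∧ m = 12 + 4 * k * j + n}

/-- The torpid-mixing gadget `H_k`. -/
def gadgetGraph (k : ℕ) : SimpleGraph (gadgetVerts k) :=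
  (SimpleGraph.fromEdgeSet (gadgetEdges k)).induce (gadgetVerts k)

/-- Relabelling of the vertices of a copy of the torpid-mixing gadget: the vertex
`u` (index `3`) is sent to `u'`, the vertex `v` (index `9`) is sent to `v'`, and
every other vertex `n` is sent to `base + n`. -/
def relabelGadget (u' v' base : ℕ) (n : ℕ) : ℕ :=
  if n = 3 then u' else if n = 9 then v' else base + n

/-- Edge set of the counterexample graph `G_k`, realized on ℕ.  The 12-cycle is
`t₁ = 0, u₁ = 1, v₁ = 2, t₂ = 3, u₂ = 4, v₂ = 5, t₃ = 6, u₃ = 7, v₃ = 8,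
t₄ = 9, u₄ = 10, v₄ = 11` (in cyclic order); each edge `{u_i, v_i}` (those
`{i, i+1}` with `i % 3 = 1`) is deleted and replaced by a disjoint copy of the
torpid-mixing gadget `H_k` whose vertices `u` and `v` are identified with `u_i`
and `v_i`; the remaining vertices of the `j`-th copy (`j = i - 1 ∈ {0,1,2,3}`)
are relabelled into the range starting at `12 + (16k + 12)j`. -/
def counterEdges (k : ℕ) : Set (Sym2 ℕ) :=
  {e | ∃ i, i < 12 ∧ i % 3 ≠ 1 ∧ e = s(i, (i + 1) % 12)} ∪
  {e | ∃ j, j < 4 ∧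
    e ∈ Sym2.map (relabelGadget (3 * j + 1) (3 * j + 2) (12 + (16 * k + 12) * j)) ''
      gadgetEdges k}

/-- Vertex set of the counterexample graph `G_k`: the 12 cycle vertices together
with the vertices of the four gadget copies other than their `u` and `v`. -/
def counterVerts (k : ℕ) : Set ℕ :=
  {n | n < 12} ∪
  {m | ∃ j, j < 4 ∧ ∃ n ∈ gadgetVerts k, n ≠ 3 ∧ n ≠ 9 ∧
    m = 12 + (16 * k + 12) * j + n}

/-- The counterexample graph `G_k`. -/
def counterGraph (k : ℕ) : SimpleGraph (counterVerts k) :=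
  (SimpleGraph.fromEdgeSet (counterEdges k)).induce (counterVerts k)

namespace CGAux
open SimpleGraph

/-! ### Membership normal forms -/

lemma mem_map_image {f : ℕ → ℕ} {S : Set (Sym2 ℕ)} {a b : ℕ} :
    s(a,b) ∈ Sym2.map f '' S ↔
      ∃ x y, s(x,y) ∈ S ∧ (a = f x ∧ b = f y ∨ a = f y ∧ b = f x) := by
  constructor
  · rintro ⟨e, he, hme⟩
    induction e with
    | _ x y =>
      rw [Sym2.map_pair_eq] at hme
      rcases Sym2.eq_iff.1 hme with ⟨rfl, rfl⟩ | ⟨rfl, rfl⟩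
      · exact ⟨x, y, he, Or.inl ⟨rfl, rfl⟩⟩
      · exact ⟨x, y, he, Or.inr ⟨rfl, rfl⟩⟩
  · rintro ⟨x, y, h, (⟨rfl, rfl⟩ | ⟨rfl, rfl⟩)⟩
    · exact ⟨s(x,y), h, Sym2.map_pair_eq f x y⟩
    · exact ⟨s(x,y), h, by rw [Sym2.map_pair_eq, Sym2.eq_swap]⟩

def boxRel (k a b : ℕ) : Prop :=
  (∃ j, j + 2 ≤ 2*k ∧ (a = j ∧ b = j+1 ∨ a = j+1 ∧ b = j)) ∨
  (∃ i, i < k ∧ (a = 2*i ∧ b = 2*k+2*i ∨ a = 2*k+2*i ∧ b = 2*i)) ∨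
  (∃ i, i < k ∧ (a = 2*k+2*i ∧ b = 2*k+2*i+1 ∨ a = 2*k+2*i+1 ∧ b = 2*k+2*i)) ∨
  (∃ i, i < k ∧ (a = 2*k+2*i+1 ∧ b = 2*i+1 ∨ a = 2*i+1 ∧ b = 2*k+2*i+1))

lemma boxRel_symm {k a b : ℕ} (h : boxRel k a b) : boxRel k b a := by
  rcases h with ⟨j, hj, h⟩ | ⟨i, hi, h⟩ | ⟨i, hi, h⟩ | ⟨i, hi, h⟩
  · exact Or.inl ⟨j, hj, by tauto⟩
  · exact Or.inr (Or.inl ⟨i, hi, by tauto⟩)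
  · exact Or.inr (Or.inr (Or.inl ⟨i, hi, by tauto⟩))
  · exact Or.inr (Or.inr (Or.inr ⟨i, hi, by tauto⟩))

lemma mem_boxEdges {k a b : ℕ} : s(a,b) ∈ boxEdges k ↔ boxRel k a b := by
  simp only [boxEdges, boxRel, Set.mem_union, Set.mem_setOf_eq, Sym2.eq_iff, or_assoc]

/-- chain endpoints within the gadget -/
def chA (c : ℕ) : ℕ := if c = 0 then 2 else if c = 1 then 0 else if c = 2 then 4 else 6
def chB (c : ℕ) : ℕ := if c = 0 then 0 else if c = 1 then 10 else if c = 2 then 6 else 8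

/-- embedding of the `c`-th chain into the gadget labels -/
def ψ (k c n : ℕ) : ℕ := relabelBox k (chA c) (chB c) (12 + 4*k*c) n

lemma mem_gadgetEdges {k a b : ℕ} : s(a,b) ∈ gadgetEdges k ↔
    (∃ i, i < 12 ∧ (a = i ∧ b = (i+1)%12 ∨ a = (i+1)%12 ∧ b = i)) ∨
    ((a = 0 ∧ b = 6) ∨ (a = 6 ∧ b = 0)) ∨
    (∃ c, c < 4 ∧ ∃ x y, boxRel k x y ∧
      (a = ψ k c x ∧ b = ψ k c y ∨ a = ψ k c y ∧ b = ψ k c x)) := by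
  have e2 : 12 + 4*k*2 = 12 + 8*k := by ring
  have e3 : 12 + 4*k*3 = 12 + 12*k := by ring
  constructor
  · intro h
    rcases h with ((((h | h) | h) | h) | h) | h
    · exact Or.inl (by rcases h with ⟨i, hi, he⟩; exact ⟨i, hi, Sym2.eq_iff.1 he⟩)
    · exact Or.inr (Or.inl (Sym2.eq_iff.1 (Set.mem_singleton_iff.1 h)))
    · rcases mem_map_image.1 h with ⟨x, y, hxy, hc⟩
      exact Or.inr (Or.inr ⟨0, by norm_num, x, y, mem_boxEdges.1 hxy,
        by simpa [ψ, chA, chB] using hc⟩)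
    · rcases mem_map_image.1 h with ⟨x, y, hxy, hc⟩
      exact Or.inr (Or.inr ⟨1, by norm_num, x, y, mem_boxEdges.1 hxy,
        by simpa [ψ, chA, chB] using hc⟩)
    · rcases mem_map_image.1 h with ⟨x, y, hxy, hc⟩
      exact Or.inr (Or.inr ⟨2, by norm_num, x, y, mem_boxEdges.1 hxy,
        by simpa [ψ, chA, chB, e2] using hc⟩)
    · rcases mem_map_image.1 h with ⟨x, y, hxy, hc⟩
      exact Or.inr (Or.inr ⟨3, by norm_num, x, y, mem_boxEdges.1 hxy,
        by simpa [ψ, chA, chB, e3] using hc⟩)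
  · intro h
    rcases h with ⟨i, hi, he⟩ | (he | he) | ⟨c, hc, x, y, hxy, he⟩
    · refine Or.inl (Or.inl (Or.inl (Or.inl (Or.inl ⟨i, hi, ?_⟩))))
      rcases he with ⟨rfl, rfl⟩ | ⟨rfl, rfl⟩ <;> [rfl; exact Sym2.eq_swap]
    · obtain ⟨rfl, rfl⟩ := he
      exact Or.inl (Or.inl (Or.inl (Or.inl (Or.inr rfl))))
    · obtain ⟨rfl, rfl⟩ := he
      exact Or.inl (Or.inl (Or.inl (Or.inl (Or.inr Sym2.eq_swap))))
    · interval_cases c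
      · exact Or.inl (Or.inl (Or.inl (Or.inr (mem_map_image.2
          ⟨x, y, mem_boxEdges.2 hxy, by simpa [ψ, chA, chB] using he⟩))))
      · exact Or.inl (Or.inl (Or.inr (mem_map_image.2
          ⟨x, y, mem_boxEdges.2 hxy, by simpa [ψ, chA, chB] using he⟩)))
      · exact Or.inl (Or.inr (mem_map_image.2
          ⟨x, y, mem_boxEdges.2 hxy, by simpa [ψ, chA, chB, e2] using he⟩))
      · exact Or.inr (mem_map_image.2
          ⟨x, y, mem_boxEdges.2 hxy, by simpa [ψ, chA, chB, e3] using he⟩)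

/-- embedding of the `j`-th gadget copy into the counterexample labels -/
def φ (k j n : ℕ) : ℕ := relabelGadget (3*j+1) (3*j+2) (12 + (16*k+12)*j) n

lemma mem_counterEdges {k a b : ℕ} : s(a,b) ∈ counterEdges k ↔
    (∃ i, i < 12 ∧ i % 3 ≠ 1 ∧ (a = i ∧ b = (i+1)%12 ∨ a = (i+1)%12 ∧ b = i)) ∨
    (∃ j, j < 4 ∧ ∃ x y, s(x,y) ∈ gadgetEdges k ∧
      (a = φ k j x ∧ b = φ k j y ∨ a = φ k j y ∧ b = φ k j x)) := by
  constructor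
  · intro h
    rcases h with ⟨i, hi, hm, he⟩ | ⟨j, hj, he⟩
    · exact Or.inl ⟨i, hi, hm, Sym2.eq_iff.1 he⟩
    · rcases mem_map_image.1 he with ⟨x, y, hxy, hc⟩
      exact Or.inr ⟨j, hj, x, y, hxy, by simpa [φ] using hc⟩
  · intro h
    rcases h with ⟨i, hi, hm, he⟩ | ⟨j, hj, x, y, hxy, he⟩
    · refine Or.inl ⟨i, hi, hm, ?_⟩
      rcases he with ⟨rfl, rfl⟩ | ⟨rfl, rfl⟩ <;> [rfl; exact Sym2.eq_swap]
    · exact Or.inr ⟨j, hj, mem_map_image.2 ⟨x, y, hxy, by simpa [φ] using he⟩⟩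

end CGAux
namespace CGAux

/-! ### Box-level facts -/

lemma boxRel_lt {k a b : ℕ} (hk : 1 ≤ k) (h : boxRel k a b) : a < 4*k ∧ b < 4*k := by
  rcases h with ⟨j,hj,h⟩|⟨i,hi,h⟩|⟨i,hi,h⟩|⟨i,hi,h⟩ <;> omega

lemma BN_a {k i z : ℕ} (hi : i < k) (h : boxRel k (2*k+2*i) z) :
    z = 2*i ∨ z = 2*k+2*i+1 := by
  rcases h with ⟨j,hj,h⟩|⟨i',hi',h⟩|⟨i',hi',h⟩|⟨i',hi',h⟩ <;> omega

lemma BN_path {k n z : ℕ} (h0 : 0 < n) (h1 : n < 2*k-1) (h : boxRel k n z) :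
    z = n-1 ∨ z = n+1 ∨ z = 2*k+n := by
  rcases h with ⟨j,hj,h⟩|⟨i',hi',h⟩|⟨i',hi',h⟩|⟨i',hi',h⟩ <;> omega

lemma BN_e1 {k z : ℕ} (hk : 1 ≤ k) (h : boxRel k (2*k-1) z) :
    z = 2*k-2 ∨ z = 4*k-1 := by
  rcases h with ⟨j,hj,h⟩|⟨i',hi',h⟩|⟨i',hi',h⟩|⟨i',hi',h⟩ <;> omega

lemma BN_e0 {k z : ℕ} (hk : 1 ≤ k) (h : boxRel k 0 z) :
    z = 1 ∨ z = 2*k := by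
  rcases h with ⟨j,hj,h⟩|⟨i',hi',h⟩|⟨i',hi',h⟩|⟨i',hi',h⟩ <;> omega

/-- The chain forcing lemma: if the endpoint `v₀` of an embedded chain-of-boxes is
matched outside the chain, then the interior matching is forced, and the other
endpoint `v_{2k-1}` is also matched outside the chain. -/
lemma boxForce {k : ℕ} (A : ℕ → ℕ → Prop) (f : ℕ → ℕ) (hk : 1 ≤ k)
    (hsym : ∀ x y, A x y → A y x)
    (hirr : ∀ x, ¬ A x x)
    (huni : ∀ x y z, A x y → A x z → y = z)
    (hinj : ∀ x y, x < 4*k → y < 4*k → f x = f y → x = y)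
    (hA : ∀ x, 0 < x → x < 4*k → x ≠ 2*k-1 → ∀ y, A (f x) y →
      ∃ z, z < 4*k ∧ y = f z ∧ boxRel k x z)
    (hex : ∀ x, 0 < x → x < 4*k → x ≠ 2*k-1 → ∃ y, A (f x) y)
    (q : ℕ) (hq : A (f 0) q) (hqout : ∀ z, z < 4*k → q ≠ f z) :
    (∀ i, i < k → A (f (2*k+2*i)) (f (2*k+2*i+1))) ∧
    (∀ i, 2*i+2 < 2*k → A (f (2*i+1)) (f (2*i+2))) ∧
    (∀ y, A (f (2*k-1)) y → ∀ z, z < 4*k → y ≠ f z) := by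
  set INV : ℕ → Prop := fun i => ∀ y, A (f (2*i)) y → y ≠ f (2*k+2*i) ∧ y ≠ f (2*i+1)
    with hINV
  have step : ∀ i, i < k → INV i →
      A (f (2*k+2*i)) (f (2*k+2*i+1)) ∧ (2*i+2 < 2*k → A (f (2*i+1)) (f (2*i+2))) := by
    intro i hik hinv
    obtain ⟨y, hy⟩ := hex (2*k+2*i) (by omega) (by omega) (by omega)
    obtain ⟨z, hz4, rfl, hbr⟩ := hA _ (by omega) (by omega) (by omega) y hy
    have hab : A (f (2*k+2*i)) (f (2*k+2*i+1)) := by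
      rcases BN_a hik hbr with rfl | rfl
      · exact absurd (hinv _ (hsym _ _ hy)).1 (by simp)
      · exact hy
    refine ⟨hab, fun h2 => ?_⟩
    obtain ⟨y', hy'⟩ := hex (2*i+1) (by omega) (by omega) (by omega)
    obtain ⟨z', hz4', rfl, hbr'⟩ := hA _ (by omega) (by omega) (by omega) y' hy'
    have := BN_path (n := 2*i+1) (by omega) (by omega) hbr'
    rcases this with h | h | h
    · exfalso
      have : (2*i+1) - 1 = 2*i := by omega
      rw [h, this] at hy'
      exact (hinv _ (hsym _ _ hy')).2 rfl
    · rw [h] at hy'; simpa [show 2*i+1+1 = 2*i+2 by omega] using hy'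
    · exfalso
      rw [show 2*k+(2*i+1) = 2*k+2*i+1 by omega] at h
      rw [h] at hy'
      have := huni _ _ _ (hsym _ _ hy') (hsym _ _ hab)
      exact absurd (hinj _ _ (by omega) (by omega) this) (by omega)
  have aux : ∀ i, i < k →
      INV i ∧ A (f (2*k+2*i)) (f (2*k+2*i+1)) ∧ (2*i+2 < 2*k → A (f (2*i+1)) (f (2*i+2))) := by
    intro i
    induction i with
    | zero =>
      intro h0
      have hinv : INV 0 := by
        intro y hy
        have : y = q := huni _ _ _ (by simpa using hy) hq
        subst this
        exact ⟨hqout _ (by omega), hqout _ (by omega)⟩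
      exact ⟨hinv, step 0 h0 hinv⟩
    | succ i ih =>
      intro hik
      obtain ⟨hinv, hab, hpath⟩ := ih (by omega)
      have hp := hpath (by omega)
      have hinv' : INV (i+1) := by
        intro y hy
        have hy2 : A (f (2*i+2)) y := by simpa [show 2*(i+1) = 2*i+2 by omega] using hy
        have : y = f (2*i+1) := huni _ _ _ hy2 (hsym _ _ hp)
        subst this
        constructor
        · intro hfe
          exact absurd (hinj _ _ (by omega) (by omega) hfe) (by omega)
        · intro hfe
          exact absurd (hinj _ _ (by omega) (by omega) hfe) (by omega)
      exact ⟨hinv', step (i+1) hik hinv'⟩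
  refine ⟨fun i hi => (aux i hi).2.1, fun i hi => (aux i (by omega)).2.2 hi, ?_⟩
  rintro y hy z hz4 rfl
  by_cases hz0 : z = 0
  · subst hz0
    have := huni _ _ _ (hsym _ _ hy) hq
    exact hqout _ (by omega) this.symm
  by_cases hze : z = 2*k-1
  · subst hze; exact hirr _ hy
  · have hyz := hsym _ _ hy
    obtain ⟨z', hz4', he, hbr⟩ := hA z (by omega) hz4 hze _ hyz
    have : z' = 2*k-1 := hinj _ _ hz4' (by omega) he.symm
    subst this
    rcases BN_e1 hk (boxRel_symm hbr) with rfl | rfl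
    · -- z = 2k-2 ; k ≥ 2 here since z ≠ 0
      have hk2 : 2 ≤ k := by omega
      have hp := (aux (k-2) (by omega)).2.2 (by omega)
      rw [show 2*(k-2)+1 = 2*k-3 by omega, show 2*(k-2)+2 = 2*k-2 by omega] at hp
      have := huni _ _ _ (hsym _ _ hp) hyz
      exact absurd (hinj _ _ (by omega) (by omega) this.symm) (by omega)
    · have hab := (aux (k-1) (by omega)).2.1
      rw [show 2*k+2*(k-1) = 4*k-2 by omega, show 4*k-2+1 = 4*k-1 by omega] at hab
      have := huni _ _ _ (hsym _ _ hab) hyz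
      exact absurd (hinj _ _ (by omega) (by omega) this.symm) (by omega)

end CGAux
namespace CGAux

/-! ### Vertex sets and embeddings -/

lemma mem_gadgetVerts {k m : ℕ} : m ∈ gadgetVerts k ↔
    m < 12 ∨ ∃ c, c < 4 ∧ ∃ n, 0 < n ∧ n < 4*k ∧ n ≠ 2*k-1 ∧ m = 12 + 4*k*c + n := by
  simp [gadgetVerts, Set.mem_union, Set.mem_setOf_eq]

lemma mem_counterVerts {k m : ℕ} : m ∈ counterVerts k ↔
    m < 12 ∨ ∃ j, j < 4 ∧ ∃ x, x ∈ gadgetVerts k ∧ x ≠ 3 ∧ x ≠ 9 ∧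
      m = 12 + (16*k+12)*j + x := by
  simp [counterVerts, Set.mem_union, Set.mem_setOf_eq]

lemma gadgetVerts_lt {k m : ℕ} (hk : 1 ≤ k) (hm : m ∈ gadgetVerts k) : m < 12 + 16*k := by
  rcases mem_gadgetVerts.1 hm with h | ⟨c, hc, n, h1, h2, h3, rfl⟩
  · omega
  · interval_cases c <;> omega

lemma chA_lt {c : ℕ} : chA c < 12 := by unfold chA; split_ifs <;> norm_num
lemma chB_lt {c : ℕ} : chB c < 12 := by unfold chB; split_ifs <;> norm_num

lemma psi_zero {k c : ℕ} : ψ k c 0 = chA c := by simp [ψ, relabelBox]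
lemma psi_last {k c : ℕ} (hk : 1 ≤ k) : ψ k c (2*k-1) = chB c := by
  simp [ψ, relabelBox]; omega

lemma psi_interior {k c n : ℕ} (h0 : n ≠ 0) (h1 : n ≠ 2*k-1) :
    ψ k c n = 12 + 4*k*c + n := by
  simp [ψ, relabelBox, h0, h1]

lemma psi_mem {k c x : ℕ} (hk : 1 ≤ k) (hc : c < 4) (hx : x < 4*k) :
    ψ k c x ∈ gadgetVerts k := by
  by_cases h0 : x = 0
  · subst h0; rw [psi_zero]; exact mem_gadgetVerts.2 (Or.inl chA_lt)
  by_cases h1 : x = 2*k-1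
  · subst h1; rw [psi_last hk]; exact mem_gadgetVerts.2 (Or.inl chB_lt)
  · rw [psi_interior h0 h1]
    exact mem_gadgetVerts.2 (Or.inr ⟨c, hc, x, by omega, hx, h1, rfl⟩)

lemma gadgetEdges_verts {k a b : ℕ} (hk : 1 ≤ k) (h : s(a,b) ∈ gadgetEdges k) :
    a ∈ gadgetVerts k ∧ b ∈ gadgetVerts k := by
  rcases mem_gadgetEdges.1 h with ⟨i, hi, hc⟩ | hc | ⟨c, hc, x, y, hxy, he⟩
  · constructor <;> [rcases hc with ⟨rfl,rfl⟩|⟨rfl,rfl⟩; rcases hc with ⟨rfl,rfl⟩|⟨rfl,rfl⟩] <;>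
      exact mem_gadgetVerts.2 (Or.inl (by omega))
  · rcases hc with ⟨rfl, rfl⟩ | ⟨rfl, rfl⟩ <;>
      exact ⟨mem_gadgetVerts.2 (Or.inl (by omega)), mem_gadgetVerts.2 (Or.inl (by omega))⟩
  · have := boxRel_lt hk hxy
    rcases he with ⟨rfl, rfl⟩ | ⟨rfl, rfl⟩ <;>
      exact ⟨psi_mem hk hc (by omega), psi_mem hk hc (by omega)⟩

lemma phi_uv {k j : ℕ} : φ k j 3 = 3*j+1 ∧ φ k j 9 = 3*j+2 := by
  constructor <;> simp [φ, relabelGadget]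

lemma phi_other {k j x : ℕ} (h3 : x ≠ 3) (h9 : x ≠ 9) :
    φ k j x = 12 + (16*k+12)*j + x := by
  simp [φ, relabelGadget, h3, h9]

lemma phi_mem {k j x : ℕ} (hj : j < 4) (hx : x ∈ gadgetVerts k) :
    φ k j x ∈ counterVerts k := by
  by_cases h3 : x = 3
  · subst h3; rw [phi_uv.1]; exact mem_counterVerts.2 (Or.inl (by omega))
  by_cases h9 : x = 9
  · subst h9; rw [phi_uv.2]; exact mem_counterVerts.2 (Or.inl (by omega))
  · rw [phi_other h3 h9]
    exact mem_counterVerts.2 (Or.inr ⟨j, hj, x, hx, h3, h9, rfl⟩)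

/-- strong injectivity for the gadget embeddings -/
lemma phi_inj {k j j' x p : ℕ} (hk : 1 ≤ k) (hj : j < 4) (hj' : j' < 4)
    (hx : x ∈ gadgetVerts k) (hp : p ∈ gadgetVerts k)
    (h3 : x ≠ 3) (h9 : x ≠ 9) (h : φ k j x = φ k j' p) : j = j' ∧ x = p := by
  have hxl := gadgetVerts_lt hk hx
  have hpl := gadgetVerts_lt hk hp
  rw [phi_other h3 h9] at h
  by_cases p3 : p = 3
  · subst p3; rw [phi_uv.1] at h; omega
  by_cases p9 : p = 9
  · subst p9; rw [phi_uv.2] at h; omega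
  · rw [phi_other p3 p9] at h
    interval_cases j <;> interval_cases j' <;> omega

/-- injectivity of a single chain embedding -/
lemma psi_inj {k c x y : ℕ} (hk : 1 ≤ k) (hc : c < 4) (hx : x < 4*k) (hy : y < 4*k)
    (h : ψ k c x = ψ k c y) : x = y := by
  have hAB : chA c ≠ chB c := by interval_cases c <;> simp [chA, chB]
  by_cases x0 : x = 0 <;> by_cases x1 : x = 2*k-1 <;>
    by_cases y0 : y = 0 <;> by_cases y1 : y = 2*k-1 <;>
    try omega
  all_goals first
  | (subst x0; rw [psi_zero] at h)
  | (subst x1; rw [psi_last hk] at h)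
  | (rw [psi_interior x0 x1] at h)
  all_goals first
  | (subst y0; rw [psi_zero] at h)
  | (subst y1; rw [psi_last hk] at h)
  | (rw [psi_interior y0 y1] at h)
  all_goals first
  | omega
  | exact absurd h hAB
  | exact absurd h.symm hAB
  | (exfalso; have := chA_lt (c := c); omega)
  | (exfalso; have := chB_lt (c := c); omega)

/-- Transfer: an edge of the counter graph at an internal gadget vertex stays in
the same gadget copy. -/
lemma transfer_gadget {k j x y : ℕ} (hk : 1 ≤ k) (hj : j < 4)
    (hx : x ∈ gadgetVerts k) (h3 : x ≠ 3) (h9 : x ≠ 9)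
    (h : s(φ k j x, y) ∈ counterEdges k) :
    ∃ x', x' ∈ gadgetVerts k ∧ y = φ k j x' ∧ s(x, x') ∈ gadgetEdges k := by
  have hge : 12 ≤ φ k j x := by rw [phi_other h3 h9]; omega
  rcases mem_counterEdges.1 h with ⟨i, hi, him, hc⟩ | ⟨j', hj', p, q, hpq, hc⟩
  · exfalso; rcases hc with ⟨h1, _⟩ | ⟨h1, _⟩ <;> omega
  · obtain ⟨hpv, hqv⟩ := gadgetEdges_verts hk hpq
    rcases hc with ⟨h1, h2⟩ | ⟨h1, h2⟩
    · obtain ⟨rfl, rfl⟩ := phi_inj hk hj hj' hx hpv h3 h9 h1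
      exact ⟨q, hqv, h2, hpq⟩
    · obtain ⟨rfl, rfl⟩ := phi_inj hk hj hj' hx hqv h3 h9 h1
      exact ⟨p, hpv, h2, by rwa [Sym2.eq_swap]⟩

/-- Transfer: an edge of the gadget at an internal chain vertex stays in the chain. -/
lemma transfer_box {k c x y : ℕ} (hk : 1 ≤ k) (hc : c < 4)
    (h0 : 0 < x) (hx : x < 4*k) (hl : x ≠ 2*k-1)
    (h : s(ψ k c x, y) ∈ gadgetEdges k) :
    ∃ z, z < 4*k ∧ y = ψ k c z ∧ boxRel k x z := by
  have hge : 12 ≤ ψ k c x := by rw [psi_interior (by omega) hl]; omega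
  rcases mem_gadgetEdges.1 h with ⟨i, hi, hcs⟩ | hcs | ⟨c', hc', p, q, hpq, hcs⟩
  · exfalso
    rcases hcs with ⟨h1, _⟩ | ⟨h1, _⟩ <;> [omega; (rw [h1] at hge; omega)]
  · exfalso; rcases hcs with ⟨h1, _⟩ | ⟨h1, _⟩ <;> omega
  · have hpql := boxRel_lt hk hpq
    have key : ∀ p q : ℕ, p < 4*k → q < 4*k → boxRel k p q → ψ k c x = ψ k c' p →
        ∃ z, z < 4*k ∧ ψ k c' q = ψ k c z ∧ boxRel k x z := by
      intro p q hp hq hpq' heq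
      have hpi : p ≠ 0 ∧ p ≠ 2*k-1 := by
        constructor <;> rintro rfl
        · rw [psi_zero] at heq; have := chA_lt (c := c'); omega
        · rw [psi_last hk] at heq; have := chB_lt (c := c'); omega
      rw [psi_interior (by omega) hl, psi_interior hpi.1 hpi.2] at heq
      have hcc : c = c' ∧ x = p := by
        interval_cases c <;> interval_cases c' <;> omega
      obtain ⟨rfl, rfl⟩ := hcc
      exact ⟨q, hq, rfl, hpq'⟩
    rcases hcs with ⟨h1, h2⟩ | ⟨h1, h2⟩
    · obtain ⟨z, hz, he, hbr⟩ := key p q hpql.1 hpql.2 hpq h1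
      exact ⟨z, hz, h2.trans he, hbr⟩
    · obtain ⟨z, hz, he, hbr⟩ := key q p hpql.2 hpql.1 (boxRel_symm hpq) h1
      exact ⟨z, hz, h2.trans he, hbr⟩

end CGAux
namespace CGAux

/-- the forced interior matching of a chain of boxes -/
def boxPair (k n m : ℕ) : Prop :=
  (n % 2 = 1 ∧ n + 1 ≤ 2*k-2 ∧ m = n+1) ∨
  (n % 2 = 0 ∧ 2 ≤ n ∧ n ≤ 2*k-2 ∧ m = n-1) ∨
  (2*k ≤ n ∧ n < 4*k ∧ n % 2 = 0 ∧ m = n+1) ∨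
  (2*k+1 ≤ n ∧ n < 4*k ∧ n % 2 = 1 ∧ m = n-1)

lemma boxPair_lt {k n m : ℕ} (hk : 1 ≤ k) (h : boxPair k n m) :
    m < 4*k ∧ 0 < m ∧ m ≠ 2*k-1 ∧ 0 < n ∧ n < 4*k ∧ n ≠ 2*k-1 := by
  unfold boxPair at h; omega

lemma boxPair_symm {k n m : ℕ} (hk : 1 ≤ k) (h : boxPair k n m) : boxPair k m n := by
  unfold boxPair at *; omega

lemma boxPair_boxRel {k n m : ℕ} (hk : 1 ≤ k) (h : boxPair k n m) : boxRel k n m := by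
  rcases h with h | h | h | h
  · exact Or.inl ⟨n, by omega⟩
  · exact Or.inl ⟨m, by omega⟩
  · exact Or.inr (Or.inr (Or.inl ⟨(n-2*k)/2, by omega⟩))
  · exact Or.inr (Or.inr (Or.inl ⟨(m-2*k)/2, by omega⟩))

/-- the mirror symmetry of the chain of boxes -/
def σb (k n : ℕ) : ℕ := if n < 2*k then 2*k-1-n else 6*k-1-n

lemma sigma_lt {k n : ℕ} (hk : 1 ≤ k) (hn : n < 4*k) : σb k n < 4*k := by
  unfold σb; split_ifs <;> omega

lemma sigma_sigma {k n : ℕ} (hn : n < 4*k) : σb k (σb k n) = n := by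
  unfold σb; split_ifs <;> omega

lemma boxRel_sigma {k x z : ℕ} (hk : 1 ≤ k) (h : boxRel k x z) :
    boxRel k (σb k x) (σb k z) := by
  rcases h with ⟨j,hj,h⟩|⟨i,hi,h⟩|⟨i,hi,h⟩|⟨i,hi,h⟩
  · refine Or.inl ⟨2*k-2-j, by unfold σb; split_ifs <;> omega⟩
  · refine Or.inr (Or.inr (Or.inr ⟨k-1-i, by unfold σb; split_ifs <;> omega⟩))
  · refine Or.inr (Or.inr (Or.inl ⟨k-1-i, by unfold σb; split_ifs <;> omega⟩))
  · refine Or.inr (Or.inl ⟨k-1-i, by unfold σb; split_ifs <;> omega⟩)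

lemma pairsToC1 {k : ℕ} (A : ℕ → ℕ → Prop) (f : ℕ → ℕ) (hk : 1 ≤ k)
    (hsym : ∀ x y, A x y → A y x)
    (pairs1 : ∀ i, i < k → A (f (2*k+2*i)) (f (2*k+2*i+1)))
    (pairs2 : ∀ i, 2*i+2 < 2*k → A (f (2*i+1)) (f (2*i+2))) :
    ∀ x, 0 < x → x < 4*k → x ≠ 2*k-1 → ∃ m, boxPair k x m ∧ A (f x) (f m) := by
  intro x h0 h4 hl
  by_cases hx2 : x < 2*k
  · by_cases hpar : x % 2 = 1
    · refine ⟨x+1, Or.inl ⟨hpar, by omega, rfl⟩, ?_⟩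
      have := pairs2 ((x-1)/2) (by omega)
      rwa [show 2*((x-1)/2)+1 = x by omega, show 2*((x-1)/2)+2 = x+1 by omega] at this
    · refine ⟨x-1, Or.inr (Or.inl ⟨by omega, by omega, by omega, rfl⟩), ?_⟩
      have := pairs2 ((x-2)/2) (by omega)
      rw [show 2*((x-2)/2)+1 = x-1 by omega, show 2*((x-2)/2)+2 = x by omega] at this
      exact hsym _ _ this
  · by_cases hpar : x % 2 = 0
    · refine ⟨x+1, Or.inr (Or.inr (Or.inl ⟨by omega, h4, hpar, rfl⟩)), ?_⟩
      have := pairs1 ((x-2*k)/2) (by omega)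
      rwa [show 2*k+2*((x-2*k)/2)+1 = x+1 by omega, show 2*k+2*((x-2*k)/2) = x by omega] at this
    · refine ⟨x-1, Or.inr (Or.inr (Or.inr ⟨by omega, h4, by omega, rfl⟩)), ?_⟩
      have := pairs1 ((x-1-2*k)/2) (by omega)
      rw [show 2*k+2*((x-1-2*k)/2)+1 = x by omega,
        show 2*k+2*((x-1-2*k)/2) = x-1 by omega] at this
      exact hsym _ _ this

/-- Chain forcing from either endpoint. -/
lemma chainForce {k : ℕ} (A : ℕ → ℕ → Prop) (f : ℕ → ℕ) (hk : 1 ≤ k)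
    (hsym : ∀ x y, A x y → A y x)
    (hirr : ∀ x, ¬ A x x)
    (huni : ∀ x y z, A x y → A x z → y = z)
    (hinj : ∀ x y, x < 4*k → y < 4*k → f x = f y → x = y)
    (hA : ∀ x, 0 < x → x < 4*k → x ≠ 2*k-1 → ∀ y, A (f x) y →
      ∃ z, z < 4*k ∧ y = f z ∧ boxRel k x z)
    (hex : ∀ x, 0 < x → x < 4*k → x ≠ 2*k-1 → ∃ y, A (f x) y)
    (e q : ℕ) (he : e = 0 ∨ e = 2*k-1) (hq : A (f e) q) (hqout : ∀ z, z < 4*k → q ≠ f z) :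
    (∀ x, 0 < x → x < 4*k → x ≠ 2*k-1 → ∀ y, A (f x) y →
      ∃ m, boxPair k x m ∧ y = f m) ∧
    (∀ e', (e' = 0 ∨ e' = 2*k-1) → ∀ y, A (f e') y → ∀ z, z < 4*k → y ≠ f z) := by
  have main : (∀ i, i < k → A (f (2*k+2*i)) (f (2*k+2*i+1))) ∧
      (∀ i, 2*i+2 < 2*k → A (f (2*i+1)) (f (2*i+2))) ∧
      (∀ y, A (f (2*k-1)) y → ∀ z, z < 4*k → y ≠ f z) ∧
      (∀ y, A (f 0) y → ∀ z, z < 4*k → y ≠ f z) := by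
    rcases he with rfl | rfl
    · obtain ⟨p1, p2, p3⟩ := boxForce A f hk hsym hirr huni hinj hA hex q hq hqout
      refine ⟨p1, p2, p3, fun y hy z hz => ?_⟩
      have : y = q := huni _ _ _ hy hq
      subst this; exact hqout z hz
    · -- use the mirror symmetry
      have hinj' : ∀ x y, x < 4*k → y < 4*k → f (σb k x) = f (σb k y) → x = y := by
        intro x y hx hy h
        have := hinj _ _ (sigma_lt hk hx) (sigma_lt hk hy) h
        have hx2 := sigma_sigma (k := k) hx
        have hy2 := sigma_sigma (k := k) hy
        rw [← hx2, ← hy2, this]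
      have hs0 : σb k 0 = 2*k-1 := by unfold σb; split_ifs <;> omega
      have hsl : σb k (2*k-1) = 0 := by unfold σb; split_ifs <;> omega
      have hsint : ∀ x, 0 < x → x < 4*k → x ≠ 2*k-1 →
          (0 < σb k x ∧ σb k x < 4*k ∧ σb k x ≠ 2*k-1) := by
        intro x h1 h2 h3; unfold σb; split_ifs <;> omega
      obtain ⟨p1, p2, p3⟩ := boxForce A (fun n => f (σb k n)) hk hsym hirr huni hinj'
        (by
          intro x h0 h4 hl y hy
          obtain ⟨hi1, hi2, hi3⟩ := hsint x h0 h4 hl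
          obtain ⟨z, hz, rfl, hbr⟩ := hA _ hi1 hi2 hi3 y hy
          refine ⟨σb k z, sigma_lt hk hz, ?_, ?_⟩
          · show f z = f (σb k (σb k z)); rw [sigma_sigma hz]
          · have := boxRel_sigma hk hbr
            rwa [sigma_sigma h4] at this)
        (by
          intro x h0 h4 hl
          obtain ⟨hi1, hi2, hi3⟩ := hsint x h0 h4 hl
          exact hex _ hi1 hi2 hi3)
        q (by show A (f (σb k 0)) q; rwa [hs0]) (fun z hz => hqout _ (sigma_lt hk hz))
      have pairs1 : ∀ i, i < k → A (f (2*k+2*i)) (f (2*k+2*i+1)) := by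
        intro i hi
        have := p1 (k-1-i) (by omega)
        have e1 : σb k (2*k+2*(k-1-i)) = 2*k+2*i+1 := by unfold σb; split_ifs <;> omega
        have e2 : σb k (2*k+2*(k-1-i)+1) = 2*k+2*i := by unfold σb; split_ifs <;> omega
        simp only [e1, e2] at this
        exact hsym _ _ this
      have pairs2 : ∀ i, 2*i+2 < 2*k → A (f (2*i+1)) (f (2*i+2)) := by
        intro i hi
        have := p2 (k-2-i) (by omega)
        have e1 : σb k (2*(k-2-i)+1) = 2*i+2 := by unfold σb; split_ifs <;> omega
        have e2 : σb k (2*(k-2-i)+2) = 2*i+1 := by unfold σb; split_ifs <;> omega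
        simp only [e1, e2] at this
        exact hsym _ _ this
      refine ⟨pairs1, pairs2, fun y hy z hz => ?_, fun y hy z hz => ?_⟩
      · have : y = q := huni _ _ _ hy hq
        subst this; exact hqout z hz
      · have := p3 y (by show A (f (σb k (2*k-1))) y; rwa [hsl]) (σb k z) (sigma_lt hk hz)
        simpa [sigma_sigma hz] using this
  obtain ⟨p1, p2, p3, p4⟩ := main
  have C1 := pairsToC1 A f hk hsym p1 p2
  constructor
  · intro x h0 h4 hl y hy
    obtain ⟨m, hbp, hAm⟩ := C1 x h0 h4 hl
    exact ⟨m, hbp, huni _ _ _ hy hAm⟩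
  · rintro e' (rfl | rfl) y hy z hz
    · exact p4 y hy z hz
    · exact p3 y hy z hz

end CGAux
namespace CGAux

/-! ### Gadget-level neighbor structure -/

/-- adjacency in the 12-cycle plus chord -/
def adj12 (x z : ℕ) : Prop :=
  (z = (x+1)%12 ∨ x = (z+1)%12) ∨ (x = 0 ∧ z = 6) ∨ (x = 6 ∧ z = 0)

lemma GN {k x z : ℕ} (hk : 1 ≤ k) (hx : x < 12) (h : s(x,z) ∈ gadgetEdges k) :
    (z < 12 ∧ adj12 x z) ∨
    (∃ c, c < 4 ∧ ∃ e t, (e = 0 ∧ x = chA c ∨ e = 2*k-1 ∧ x = chB c) ∧ t < 4*k ∧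
      z = ψ k c t ∧ boxRel k e t) := by
  rcases mem_gadgetEdges.1 h with ⟨i, hi, hc⟩ | hc | ⟨c, hc, p, q, hpq, hcs⟩
  · left
    rcases hc with ⟨rfl, rfl⟩ | ⟨rfl, rfl⟩ <;> exact ⟨by omega, Or.inl (by omega)⟩
  · left
    rcases hc with ⟨rfl, rfl⟩ | ⟨rfl, rfl⟩ <;>
      exact ⟨by omega, Or.inr (by omega)⟩
  · right
    have hpql := boxRel_lt hk hpq
    have key : ∀ p q : ℕ, p < 4*k → q < 4*k → boxRel k p q → x = ψ k c p →
        ∃ e t, (e = 0 ∧ x = chA c ∨ e = 2*k-1 ∧ x = chB c) ∧ t < 4*k ∧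
          ψ k c q = ψ k c t ∧ boxRel k e t := by
      intro p q hp hq hbr hxe
      by_cases p0 : p = 0
      · subst p0; rw [psi_zero] at hxe
        exact ⟨0, q, Or.inl ⟨rfl, hxe⟩, hq, rfl, hbr⟩
      by_cases pl : p = 2*k-1
      · subst pl; rw [psi_last hk] at hxe
        exact ⟨2*k-1, q, Or.inr ⟨rfl, hxe⟩, hq, rfl, hbr⟩
      · rw [psi_interior p0 pl] at hxe; omega
    rcases hcs with ⟨h1, h2⟩ | ⟨h1, h2⟩
    · obtain ⟨e, t, h3, h4, h5, h6⟩ := key p q hpql.1 hpql.2 hpq h1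
      exact ⟨c, hc, e, t, h3, h4, h2.trans h5, h6⟩
    · obtain ⟨e, t, h3, h4, h5, h6⟩ := key q p hpql.2 hpql.1 (boxRel_symm hpq) h1
      exact ⟨c, hc, e, t, h3, h4, h2.trans h5, h6⟩

lemma psi_ne39 {k c x : ℕ} (hk : 1 ≤ k) (hc : c < 4) (hx : x < 4*k) :
    ψ k c x ≠ 3 ∧ ψ k c x ≠ 9 := by
  by_cases x0 : x = 0
  · subst x0; rw [psi_zero]; interval_cases c <;> simp [chA]
  by_cases xl : x = 2*k-1
  · subst xl; rw [psi_last hk]; interval_cases c <;> simp [chB]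
  · rw [psi_interior x0 xl]; omega

lemma psi_ne_small {k c x w : ℕ} (hk : 1 ≤ k) (hx : x < 4*k)
    (hw : w < 12) (hwa : w ≠ chA c) (hwb : w ≠ chB c) : w ≠ ψ k c x := by
  by_cases x0 : x = 0
  · subst x0; rw [psi_zero]; exact hwa
  by_cases xl : x = 2*k-1
  · subst xl; rw [psi_last hk]; exact hwb
  · rw [psi_interior x0 xl]; omega

/-! ### The three gadget matchings -/

/-- cycle-part partner function of the gadget matchings:
`some true` = the perfect matching `(0,1),(2,3),…`; `some false` = the perfect
matching `(1,2),(3,4),…`; `none` = the near-perfect matching missing `3` and `9`. -/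
def cycF (o : Option Bool) (x : ℕ) : ℕ :=
  match o with
  | some true => if x % 2 = 0 then x+1 else x-1
  | some false => if x % 2 = 1 then (x+1)%12 else (x+11)%12
  | none => if x = 0 then 6 else if x = 6 then 0 else if x % 3 = 1 then x+1 else x-1

/-- gadget-level matching relation (on gadget-local labels) -/
def gadRel (k : ℕ) (o : Option Bool) (x y : ℕ) : Prop :=
  (x < 12 ∧ (o = none → x ≠ 3 ∧ x ≠ 9) ∧ y = cycF o x) ∨
  (∃ c, c < 4 ∧ ∃ n m, boxPair k n m ∧ x = ψ k c n ∧ y = ψ k c m)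

end CGAux
namespace CGAux

lemma gadForce {k j : ℕ} (hk : 1 ≤ k) (hj : j < 4) (A : ℕ → ℕ → Prop)
    (hsym : ∀ x y, A x y → A y x)
    (hirr : ∀ x, ¬ A x x)
    (huni : ∀ x y z, A x y → A x z → y = z)
    (h39 : ¬ A (φ k j 3) (φ k j 9))
    (hA : ∀ x, x ∈ gadgetVerts k → x ≠ 3 → x ≠ 9 → ∀ y, A (φ k j x) y →
      ∃ x', x' ∈ gadgetVerts k ∧ y = φ k j x' ∧ s(x,x') ∈ gadgetEdges k)
    (hex : ∀ x, x ∈ gadgetVerts k → x ≠ 3 → x ≠ 9 → ∃ y, A (φ k j x) y) :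
    ∃ o : Option Bool,
      (∀ x, x ∈ gadgetVerts k → x ≠ 3 → x ≠ 9 → ∀ y, A (φ k j x) y →
        ∃ x', x' ∈ gadgetVerts k ∧ y = φ k j x' ∧ gadRel k o x x') ∧
      (o = none → ∀ e, e = 3 ∨ e = 9 → ∀ y, A (φ k j e) y →
        ∀ x', x' ∈ gadgetVerts k → y ≠ φ k j x') ∧
      (∀ b, o = some b →
        A (φ k j 3) (φ k j (cycF (some b) 3)) ∧ A (φ k j 9) (φ k j (cycF (some b) 9))) := by
  have memc : ∀ x : ℕ, x < 12 → x ∈ gadgetVerts k := fun x hx => mem_gadgetVerts.2 (Or.inl hx)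
  have ginjc : ∀ x y : ℕ, x < 12 → y < 12 → φ k j x = φ k j y → x = y := by
    intro x y hx hy h
    simp only [φ, relabelGadget] at h
    split_ifs at h <;> omega
  have finj : ∀ c, c < 4 → ∀ x y : ℕ, x < 4*k → y < 4*k →
      φ k j (ψ k c x) = φ k j (ψ k c y) → x = y := by
    intro c hc x y hx hy h
    have h1 := psi_ne39 hk hc hx
    have h2 := psi_ne39 (k := k) hk hc hy
    have := phi_inj hk hj hj (psi_mem hk hc hx) (psi_mem hk hc hy) h1.1 h1.2 h
    exact psi_inj hk hc hx hy this.2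
  have fhA : ∀ c, c < 4 → ∀ x, 0 < x → x < 4*k → x ≠ 2*k-1 → ∀ y, A (φ k j (ψ k c x)) y →
      ∃ z, z < 4*k ∧ y = φ k j (ψ k c z) ∧ boxRel k x z := by
    intro c hc x h0 h4 hl y hy
    have hne := psi_ne39 (k := k) hk hc h4
    obtain ⟨x', hx'v, rfl, hedge⟩ := hA _ (psi_mem hk hc h4) hne.1 hne.2 y hy
    obtain ⟨z, hz, rfl, hbr⟩ := transfer_box hk hc h0 h4 hl hedge
    exact ⟨z, hz, rfl, hbr⟩
  have fhex : ∀ c, c < 4 → ∀ x, 0 < x → x < 4*k → x ≠ 2*k-1 → ∃ y, A (φ k j (ψ k c x)) y := by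
    intro c hc x h0 h4 hl
    have hne := psi_ne39 (k := k) hk hc h4
    exact hex _ (psi_mem hk hc h4) hne.1 hne.2
  -- finding the private-vertex partner of each chain
  have pvstep : ∀ w a b : ℕ, w < 12 → w ≠ 3 → w ≠ 9 →
      (∀ z, z < 12 → adj12 w z → z = a ∨ z = b) →
      (∀ c', c' < 4 → w ≠ chA c' ∧ w ≠ chB c') →
      A (φ k j w) (φ k j a) ∨ A (φ k j w) (φ k j b) := by
    intro w a b hw h3 h9 hadj hnc
    obtain ⟨y, hy⟩ := hex w (memc w hw) h3 h9
    obtain ⟨x', hx'v, rfl, hedge⟩ := hA w (memc w hw) h3 h9 y hy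
    rcases GN hk hw hedge with ⟨hz12, hadj'⟩ | ⟨c', hc', e, t, het, _, rfl, _⟩
    · rcases hadj x' hz12 hadj' with rfl | rfl
      exacts [Or.inl hy, Or.inr hy]
    · exfalso
      rcases het with ⟨_, h⟩ | ⟨_, h⟩
      · exact (hnc c' hc').1 h
      · exact (hnc c' hc').2 h
  have pv0 := pvstep 1 2 0 (by omega) (by omega) (by omega)
    (by intro z hz hadj; unfold adj12 at hadj; omega)
    (by intro c' hc'; interval_cases c' <;> exact ⟨by decide, by decide⟩)
  have pv1 := pvstep 11 0 10 (by omega) (by omega) (by omega)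
    (by intro z hz hadj; unfold adj12 at hadj; omega)
    (by intro c' hc'; interval_cases c' <;> exact ⟨by decide, by decide⟩)
  have pv2 := pvstep 5 4 6 (by omega) (by omega) (by omega)
    (by intro z hz hadj; unfold adj12 at hadj; omega)
    (by intro c' hc'; interval_cases c' <;> exact ⟨by decide, by decide⟩)
  have pv3 := pvstep 7 6 8 (by omega) (by omega) (by omega)
    (by intro z hz hadj; unfold adj12 at hadj; omega)
    (by intro c' hc'; interval_cases c' <;> exact ⟨by decide, by decide⟩)
  have mkq : ∀ c w e : ℕ, c < 4 → w < 12 → w ≠ 3 → w ≠ 9 → w ≠ chA c → w ≠ chB c →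
      (e = 0 ∨ e = 2*k-1) → A (φ k j w) (φ k j (ψ k c e)) →
      ∃ e' q, (e' = 0 ∨ e' = 2*k-1) ∧ A (φ k j (ψ k c e')) q ∧
        ∀ z, z < 4*k → q ≠ φ k j (ψ k c z) := by
    intro c w e hc hw h3 h9 ha hb he hA'
    refine ⟨e, φ k j w, he, hsym _ _ hA', ?_⟩
    intro z hz heq
    have h1 := phi_inj hk hj hj (memc w hw) (psi_mem hk hc hz) h3 h9 heq
    exact psi_ne_small hk hz hw ha hb h1.2
  have CF : ∀ c, c < 4 →
      (∀ x, 0 < x → x < 4*k → x ≠ 2*k-1 → ∀ y, A (φ k j (ψ k c x)) y →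
        ∃ m, boxPair k x m ∧ y = φ k j (ψ k c m)) ∧
      (∀ e', (e' = 0 ∨ e' = 2*k-1) → ∀ y, A (φ k j (ψ k c e')) y →
        ∀ z, z < 4*k → y ≠ φ k j (ψ k c z)) := by
    intro c hc
    have hq' : ∃ e q, (e = 0 ∨ e = 2*k-1) ∧ A (φ k j (ψ k c e)) q ∧
        ∀ z, z < 4*k → q ≠ φ k j (ψ k c z) := by
      interval_cases c
      · rcases pv0 with h | h
        · exact mkq 0 1 0 (by omega) (by omega) (by omega) (by omega) (by decide) (by decide)
            (Or.inl rfl) (by rw [psi_zero]; exact h)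
        · exact mkq 0 1 (2*k-1) (by omega) (by omega) (by omega) (by omega) (by decide)
            (by decide) (Or.inr rfl) (by rw [psi_last hk]; exact h)
      · rcases pv1 with h | h
        · exact mkq 1 11 0 (by omega) (by omega) (by omega) (by omega) (by decide) (by decide)
            (Or.inl rfl) (by rw [psi_zero]; exact h)
        · exact mkq 1 11 (2*k-1) (by omega) (by omega) (by omega) (by omega) (by decide) (by decide)
            (Or.inr rfl) (by rw [psi_last hk]; exact h)
      · rcases pv2 with h | h
        · exact mkq 2 5 0 (by omega) (by omega) (by omega) (by omega) (by decide) (by decide)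
            (Or.inl rfl) (by rw [psi_zero]; exact h)
        · exact mkq 2 5 (2*k-1) (by omega) (by omega) (by omega) (by omega) (by decide) (by decide)
            (Or.inr rfl) (by rw [psi_last hk]; exact h)
      · rcases pv3 with h | h
        · exact mkq 3 7 0 (by omega) (by omega) (by omega) (by omega) (by decide) (by decide)
            (Or.inl rfl) (by rw [psi_zero]; exact h)
        · exact mkq 3 7 (2*k-1) (by omega) (by omega) (by omega) (by omega) (by decide) (by decide)
            (Or.inr rfl) (by rw [psi_last hk]; exact h)
    obtain ⟨e, q, he, hq, hqout⟩ := hq'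
    exact chainForce A (fun n => φ k j (ψ k c n)) hk hsym hirr huni (finj c hc)
      (fhA c hc) (fhex c hc) e q he hq hqout
  -- cycle vertices have cycle partners
  have Nbr : ∀ x, x < 12 → x ≠ 3 → x ≠ 9 → ∀ y, A (φ k j x) y →
      ∃ z, z < 12 ∧ y = φ k j z ∧ adj12 x z := by
    intro x hx h3 h9 y hy
    obtain ⟨x', hx'v, rfl, hedge⟩ := hA x (memc x hx) h3 h9 y hy
    rcases GN hk hx hedge with ⟨hz12, hadj⟩ | ⟨c', hc', e, t, het, ht, rfl, hbr⟩
    · exact ⟨x', hz12, rfl, hadj⟩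
    · exfalso
      have hxe : φ k j x = φ k j (ψ k c' e) := by
        rcases het with ⟨rfl, rfl⟩ | ⟨rfl, rfl⟩
        · rw [psi_zero]
        · rw [psi_last hk]
      rw [hxe] at hy
      refine (CF c' hc').2 e ?_ _ hy t ht rfl
      rcases het with ⟨rfl, _⟩ | ⟨rfl, _⟩
      · exact Or.inl rfl
      · exact Or.inr rfl
  have pick : ∀ x : ℕ, x < 12 → x ≠ 3 → x ≠ 9 →
      ∃ z, z < 12 ∧ adj12 x z ∧ A (φ k j x) (φ k j z) := by
    intro x hx h3 h9
    obtain ⟨y, hy⟩ := hex x (memc x hx) h3 h9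
    obtain ⟨z, hz, rfl, hadj⟩ := Nbr x hx h3 h9 y hy
    exact ⟨z, hz, hadj, hy⟩
  have taken : ∀ x z w : ℕ, x < 12 → w < 12 → x ≠ w →
      A (φ k j z) (φ k j w) → A (φ k j x) (φ k j z) → False := by
    intro x z w hx hw hxw h1 h2
    exact hxw (ginjc _ _ hx hw (huni _ _ _ (hsym _ _ h2) h1))
  -- the final assembly helper
  have mkclause1 : ∀ o : Option Bool,
      (∀ x : ℕ, x < 12 → x ≠ 3 → x ≠ 9 → A (φ k j x) (φ k j (cycF o x)) ∧ cycF o x < 12) →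
      (∀ x, x ∈ gadgetVerts k → x ≠ 3 → x ≠ 9 → ∀ y, A (φ k j x) y →
        ∃ x', x' ∈ gadgetVerts k ∧ y = φ k j x' ∧ gadRel k o x x') := by
    intro o hcyc x hxv h3 h9 y hy
    rcases mem_gadgetVerts.1 hxv with hx12 | ⟨c, hc, n, hn0, hn4, hnl, rfl⟩
    · obtain ⟨hAx, hlt⟩ := hcyc x hx12 h3 h9
      have hyy := huni _ _ _ hy hAx
      exact ⟨cycF o x, memc _ hlt, hyy, Or.inl ⟨hx12, fun _ => ⟨h3, h9⟩, rfl⟩⟩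
    · have hxpsi : (12+4*k*c+n : ℕ) = ψ k c n := (psi_interior (by omega) hnl).symm
      rw [hxpsi] at hy ⊢
      obtain ⟨m, hbp, rfl⟩ := (CF c hc).1 n (by omega) hn4 hnl y hy
      have hm := boxPair_lt hk hbp
      exact ⟨ψ k c m, psi_mem hk hc hm.1, rfl, Or.inr ⟨c, hc, n, m, hbp, rfl, rfl⟩⟩
  -- case analysis on the partner of w₁ = 2
  obtain ⟨z, hz12, hadj, hA2⟩ := pick 2 (by omega) (by omega) (by omega)
  have hz' : z = 1 ∨ z = 3 := by unfold adj12 at hadj; omega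
  rcases hz' with rfl | rfl
  · -- A (g 2) (g 1)
    obtain ⟨z0, h012, hadj0, hA0⟩ := pick 0 (by omega) (by omega) (by omega)
    have : z0 = 1 ∨ z0 = 6 ∨ z0 = 11 := by unfold adj12 at hadj0; omega
    rcases this with rfl | rfl | rfl
    · exact absurd hA0 (fun h => taken 0 1 2 (by omega) (by omega) (by omega)
        (hsym _ _ hA2) h)
    · -- A (g 0) (g 6) : outcome none
      obtain ⟨z1, h112, hadj1, hA11⟩ := pick 11 (by omega) (by omega) (by omega)
      have : z1 = 0 ∨ z1 = 10 := by unfold adj12 at hadj1; omega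
      rcases this with rfl | rfl
      · exact absurd hA11 (fun h => taken 11 0 6 (by omega) (by omega) (by omega) hA0 h)
      obtain ⟨z5, h512, hadj5, hA5⟩ := pick 5 (by omega) (by omega) (by omega)
      have : z5 = 4 ∨ z5 = 6 := by unfold adj12 at hadj5; omega
      rcases this with rfl | rfl
      swap
      · exact absurd hA5 (fun h => taken 5 6 0 (by omega) (by omega) (by omega)
          (hsym _ _ hA0) h)
      obtain ⟨z7, h712, hadj7, hA7⟩ := pick 7 (by omega) (by omega) (by omega)
      have : z7 = 6 ∨ z7 = 8 := by unfold adj12 at hadj7; omega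
      rcases this with rfl | rfl
      · exact absurd hA7 (fun h => taken 7 6 0 (by omega) (by omega) (by omega)
          (hsym _ _ hA0) h)
      -- assemble outcome none
      refine ⟨none, mkclause1 none ?_, ?_, by simp⟩
      · intro x hx h3 h9
        interval_cases x
        · exact ⟨hA0, by decide⟩
        · exact ⟨hsym _ _ hA2, by decide⟩
        · exact ⟨hA2, by decide⟩
        · omega
        · exact ⟨hsym _ _ hA5, by decide⟩
        · exact ⟨hA5, by decide⟩
        · exact ⟨hsym _ _ hA0, by decide⟩
        · exact ⟨hA7, by decide⟩
        · exact ⟨hsym _ _ hA7, by decide⟩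
        · omega
        · exact ⟨hsym _ _ hA11, by decide⟩
        · exact ⟨hA11, by decide⟩
      · rintro _ e he y hy x' hx'v rfl
        have gsmall : ∀ e' : ℕ, e' = 3 ∨ e' = 9 → φ k j e' < 12 := by
          intro e' he'
          rcases he' with rfl | rfl
          · rw [phi_uv.1]; omega
          · rw [phi_uv.2]; omega
        rcases mem_gadgetVerts.1 hx'v with hx12 | ⟨c, hc, n, hn0, hn4, hnl, rfl⟩
        · by_cases h3' : x' = 3
          · subst h3'
            rcases he with rfl | rfl
            · exact hirr _ hy
            · exact h39 (hsym _ _ hy)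
          by_cases h9' : x' = 9
          · subst h9'
            rcases he with rfl | rfl
            · exact h39 hy
            · exact hirr _ hy
          · obtain ⟨z', hz'12, heq, hadj'⟩ := Nbr x' hx12 h3' h9' _ (hsym _ _ hy)
            have : z' = e := ginjc _ _ hz'12 (by omega) heq.symm
            subst this
            have hx'' : x' = 2 ∨ x' = 4 ∨ x' = 8 ∨ x' = 10 := by
              rcases he with rfl | rfl <;> (unfold adj12 at hadj'; omega)
            have contra : ∀ w : ℕ, w < 12 → z' ≠ w → A (φ k j x') (φ k j w) → False := by
              intro w hw hew hAw
              exact hew (ginjc _ _ (by omega) hw (huni _ _ _ (hsym _ _ hy) hAw))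
            rcases hx'' with rfl | rfl | rfl | rfl
            · exact contra 1 (by omega) (by rcases he with rfl | rfl <;> omega) hA2
            · exact contra 5 (by omega) (by rcases he with rfl | rfl <;> omega) (hsym _ _ hA5)
            · exact contra 7 (by omega) (by rcases he with rfl | rfl <;> omega) (hsym _ _ hA7)
            · exact contra 11 (by omega) (by rcases he with rfl | rfl <;> omega) (hsym _ _ hA11)
        · have hxpsi : (12+4*k*c+n : ℕ) = ψ k c n := (psi_interior (by omega) hnl).symm
          rw [hxpsi] at hy
          obtain ⟨m, hbp, hem⟩ := (CF c hc).1 n (by omega) hn4 hnl _ (hsym _ _ hy)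
          have hm := boxPair_lt hk hbp
          have h1 := psi_ne39 (k := k) hk hc hm.1
          have : 12 ≤ φ k j (ψ k c m) := by rw [phi_other h1.1 h1.2]; omega
          have := gsmall e he
          omega
    · -- A (g 0) (g 11) : outcome some false
      obtain ⟨z1, h112, hadj1, hA10⟩ := pick 10 (by omega) (by omega) (by omega)
      have : z1 = 9 ∨ z1 = 11 := by unfold adj12 at hadj1; omega
      rcases this with rfl | rfl
      swap
      · exact absurd hA10 (fun h => taken 10 11 0 (by omega) (by omega) (by omega)
          (hsym _ _ hA0) h)
      obtain ⟨z8, h812, hadj8, hA8⟩ := pick 8 (by omega) (by omega) (by omega)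
      have : z8 = 7 ∨ z8 = 9 := by unfold adj12 at hadj8; omega
      rcases this with rfl | rfl
      swap
      · exact absurd hA8 (fun h => taken 8 9 10 (by omega) (by omega) (by omega)
          (hsym _ _ hA10) h)
      obtain ⟨z6, h612, hadj6, hA6⟩ := pick 6 (by omega) (by omega) (by omega)
      have : z6 = 5 ∨ z6 = 7 ∨ z6 = 0 := by unfold adj12 at hadj6; omega
      rcases this with rfl | rfl | rfl
      rotate_left
      · exact absurd hA6 (fun h => taken 6 7 8 (by omega) (by omega) (by omega)
          (hsym _ _ hA8) h)
      · exact absurd hA6 (fun h => taken 6 0 11 (by omega) (by omega) (by omega) hA0 h)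
      obtain ⟨z4, h412, hadj4, hA4⟩ := pick 4 (by omega) (by omega) (by omega)
      have : z4 = 3 ∨ z4 = 5 := by unfold adj12 at hadj4; omega
      rcases this with rfl | rfl
      swap
      · exact absurd hA4 (fun h => taken 4 5 6 (by omega) (by omega) (by omega)
          (hsym _ _ hA6) h)
      refine ⟨some false, mkclause1 (some false) ?_, by simp, ?_⟩
      · intro x hx h3 h9
        interval_cases x
        · exact ⟨hA0, by decide⟩
        · exact ⟨hsym _ _ hA2, by decide⟩
        · exact ⟨hA2, by decide⟩
        · omega
        · exact ⟨hA4, by decide⟩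
        · exact ⟨hsym _ _ hA6, by decide⟩
        · exact ⟨hA6, by decide⟩
        · exact ⟨hsym _ _ hA8, by decide⟩
        · exact ⟨hA8, by decide⟩
        · omega
        · exact ⟨hA10, by decide⟩
        · exact ⟨hsym _ _ hA0, by decide⟩
      · intro b hb
        injection hb with hb'
        subst hb'
        exact ⟨hsym _ _ hA4, hsym _ _ hA10⟩
  · -- A (g 2) (g 3) : outcome some true (or contradiction)
    obtain ⟨z1, h112, hadj1, hA1⟩ := pick 1 (by omega) (by omega) (by omega)
    have : z1 = 0 ∨ z1 = 2 := by unfold adj12 at hadj1; omega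
    rcases this with rfl | rfl
    swap
    · exact absurd hA1 (fun h => taken 1 2 3 (by omega) (by omega) (by omega) hA2 h)
    obtain ⟨z11, h1112, hadj11, hA11⟩ := pick 11 (by omega) (by omega) (by omega)
    have : z11 = 0 ∨ z11 = 10 := by unfold adj12 at hadj11; omega
    rcases this with rfl | rfl
    · exact absurd hA11 (fun h => taken 11 0 1 (by omega) (by omega) (by omega)
        (hsym _ _ hA1) h)
    obtain ⟨z8, h812, hadj8, hA8⟩ := pick 8 (by omega) (by omega) (by omega)
    have : z8 = 7 ∨ z8 = 9 := by unfold adj12 at hadj8; omega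
    rcases this with rfl | rfl
    · -- A (g 8) (g 7) : contradiction
      obtain ⟨z6, h612, hadj6, hA6⟩ := pick 6 (by omega) (by omega) (by omega)
      have : z6 = 5 ∨ z6 = 7 ∨ z6 = 0 := by unfold adj12 at hadj6; omega
      rcases this with rfl | rfl | rfl
      rotate_left
      · exact absurd hA6 (fun h => taken 6 7 8 (by omega) (by omega) (by omega)
          (hsym _ _ hA8) h)
      · exact absurd hA6 (fun h => taken 6 0 1 (by omega) (by omega) (by omega)
          (hsym _ _ hA1) h)
      obtain ⟨z4, h412, hadj4, hA4⟩ := pick 4 (by omega) (by omega) (by omega)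
      have : z4 = 3 ∨ z4 = 5 := by unfold adj12 at hadj4; omega
      rcases this with rfl | rfl
      · exact absurd hA4 (fun h => taken 4 3 2 (by omega) (by omega) (by omega)
          (hsym _ _ hA2) h)
      · exact absurd hA4 (fun h => taken 4 5 6 (by omega) (by omega) (by omega)
          (hsym _ _ hA6) h)
    · -- A (g 8) (g 9) : outcome some true
      obtain ⟨z7, h712, hadj7, hA7⟩ := pick 7 (by omega) (by omega) (by omega)
      have : z7 = 6 ∨ z7 = 8 := by unfold adj12 at hadj7; omega
      rcases this with rfl | rfl
      swap
      · exact absurd hA7 (fun h => taken 7 8 9 (by omega) (by omega) (by omega) hA8 h)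
      obtain ⟨z5, h512, hadj5, hA5⟩ := pick 5 (by omega) (by omega) (by omega)
      have : z5 = 4 ∨ z5 = 6 := by unfold adj12 at hadj5; omega
      rcases this with rfl | rfl
      swap
      · exact absurd hA5 (fun h => taken 5 6 7 (by omega) (by omega) (by omega)
          (hsym _ _ hA7) h)
      refine ⟨some true, mkclause1 (some true) ?_, by simp, ?_⟩
      · intro x hx h3 h9
        interval_cases x
        · exact ⟨hsym _ _ hA1, by decide⟩
        · exact ⟨hA1, by decide⟩
        · exact ⟨hA2, by decide⟩
        · omega
        · exact ⟨hsym _ _ hA5, by decide⟩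
        · exact ⟨hA5, by decide⟩
        · exact ⟨hsym _ _ hA7, by decide⟩
        · exact ⟨hA7, by decide⟩
        · exact ⟨hA8, by decide⟩
        · omega
        · exact ⟨hsym _ _ hA11, by decide⟩
        · exact ⟨hA11, by decide⟩
      · intro b hb
        injection hb with hb'
        subst hb'
        exact ⟨hsym _ _ hA2, hsym _ _ hA8⟩

end CGAux
namespace CGAux

/-! ### The eight counter-level matchings -/

/-- gadget outcome per copy, given the pattern bits -/
def oOf (p b0 b1 : Bool) (j : ℕ) : Option Bool :=
  if j % 2 = (if p then 0 else 1) then none else some (if j < 2 then b0 else b1)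

lemma oOf_none {p b0 b1 : Bool} {j : ℕ} :
    oOf p b0 b1 j = none ↔ j % 2 = (if p then 0 else 1) := by
  unfold oOf; split <;> simp_all

def MRel (k : ℕ) (p b0 b1 : Bool) (m n : ℕ) : Prop :=
  (∃ j, j < 4 ∧ oOf p b0 b1 j = none ∧
      ((m = 3*j ∧ n = 3*j+1) ∨ (m = 3*j+1 ∧ n = 3*j) ∨
       (m = (3*j+3)%12 ∧ n = 3*j+2) ∨ (m = 3*j+2 ∧ n = (3*j+3)%12))) ∨
  (∃ j, j < 4 ∧ ∃ x y, x ∈ gadgetVerts k ∧ y ∈ gadgetVerts k ∧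
    gadRel k (oOf p b0 b1 j) x y ∧ m = φ k j x ∧ n = φ k j y)

/-- full injectivity of a single gadget embedding -/
lemma phi_inj_full {k j x y : ℕ} (hk : 1 ≤ k) (hx : x ∈ gadgetVerts k)
    (hy : y ∈ gadgetVerts k) (h : φ k j x = φ k j y) : x = y := by
  have hb : 3*j ≤ (16*k+12)*j := Nat.mul_le_mul_right j (by omega)
  by_cases h3 : x = 3
  · subst h3
    by_cases g3 : y = 3
    · omega
    by_cases g9 : y = 9
    · subst g9; rw [phi_uv.1, phi_uv.2] at h; omega
    · rw [phi_uv.1, phi_other g3 g9] at h; omega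
  by_cases h9 : x = 9
  · subst h9
    by_cases g3 : y = 3
    · subst g3; rw [phi_uv.2, phi_uv.1] at h; omega
    by_cases g9 : y = 9
    · omega
    · rw [phi_uv.2, phi_other g3 g9] at h; omega
  by_cases g3 : y = 3
  · subst g3; rw [phi_other h3 h9, phi_uv.1] at h; omega
  by_cases g9 : y = 9
  · subst g9; rw [phi_other h3 h9, phi_uv.2] at h; omega
  · rw [phi_other h3 h9, phi_other g3 g9] at h; omega

lemma cycF_involutive {o : Option Bool} {x : ℕ} (hx : x < 12)
    (h39 : o = none → x ≠ 3 ∧ x ≠ 9) : cycF o (cycF o x) = x := by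
  rcases o with _ | b
  · obtain ⟨h3, h9⟩ := h39 rfl
    interval_cases x <;> first | omega | decide
  · rcases b with _ | _ <;> interval_cases x <;> decide

lemma cycF_lt {o : Option Bool} {x : ℕ} (hx : x < 12)
    (h39 : o = none → x ≠ 3 ∧ x ≠ 9) : cycF o x < 12 := by
  rcases o with _ | b
  · obtain ⟨h3, h9⟩ := h39 rfl
    interval_cases x <;> first | omega | decide
  · rcases b with _ | _ <;> interval_cases x <;> decide

lemma cycF_ne39 {x : ℕ} (hx : x < 12) (h3 : x ≠ 3) (h9 : x ≠ 9) :
    cycF none x ≠ 3 ∧ cycF none x ≠ 9 := by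
  interval_cases x <;> first | omega | decide

lemma gadRel_symm {k : ℕ} {o : Option Bool} {x y : ℕ} (hk : 1 ≤ k)
    (h : gadRel k o x y) : gadRel k o y x := by
  rcases h with ⟨hx, h39, rfl⟩ | ⟨c, hc, n, m, hbp, rfl, rfl⟩
  · refine Or.inl ⟨cycF_lt hx h39, ?_, (cycF_involutive hx h39).symm⟩
    intro ho; subst ho; exact cycF_ne39 hx (h39 rfl).1 (h39 rfl).2
  · exact Or.inr ⟨c, hc, m, n, boxPair_symm hk hbp, rfl, rfl⟩

end CGAux
namespace CGAux

lemma boxPair_exists {k n : ℕ} (hk : 1 ≤ k) (h0 : 0 < n) (h4 : n < 4*k) (hl : n ≠ 2*k-1) :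
    ∃ m, boxPair k n m := by
  by_cases h1 : n < 2*k
  · by_cases h2 : n % 2 = 1
    · exact ⟨n+1, Or.inl ⟨h2, by omega, rfl⟩⟩
    · exact ⟨n-1, Or.inr (Or.inl ⟨by omega, by omega, by omega, rfl⟩)⟩
  · by_cases h2 : n % 2 = 0
    · exact ⟨n+1, Or.inr (Or.inr (Or.inl ⟨by omega, by omega, h2, rfl⟩))⟩
    · exact ⟨n-1, Or.inr (Or.inr (Or.inr ⟨by omega, by omega, by omega, rfl⟩))⟩

lemma cyc_edge {k x y : ℕ} (hx : x < 12) (hy : y < 12)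
    (h : y = (x+1)%12 ∨ x = (y+1)%12 ∨ (x = 0 ∧ y = 6) ∨ (x = 6 ∧ y = 0)) :
    s(x,y) ∈ gadgetEdges k := by
  rcases h with rfl | h | ⟨rfl, rfl⟩ | ⟨rfl, rfl⟩
  · exact mem_gadgetEdges.2 (Or.inl ⟨x, hx, Or.inl ⟨rfl, rfl⟩⟩)
  · exact mem_gadgetEdges.2 (Or.inl ⟨y, hy, Or.inr ⟨h, rfl⟩⟩)
  · exact mem_gadgetEdges.2 (Or.inr (Or.inl (Or.inl ⟨rfl, rfl⟩)))
  · exact mem_gadgetEdges.2 (Or.inr (Or.inl (Or.inr ⟨rfl, rfl⟩)))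

lemma cycF_adjrel {o : Option Bool} {x : ℕ} (hx : x < 12) (h39 : o = none → x ≠ 3 ∧ x ≠ 9) :
    cycF o x = (x+1)%12 ∨ x = (cycF o x+1)%12 ∨ (x = 0 ∧ cycF o x = 6) ∨
      (x = 6 ∧ cycF o x = 0) := by
  rcases o with _ | b
  · obtain ⟨h3, h9⟩ := h39 rfl
    interval_cases x <;> first | omega | decide
  · rcases b with _ | _ <;> interval_cases x <;> decide

lemma cycF_ne {o : Option Bool} {x : ℕ} (hx : x < 12) (h39 : o = none → x ≠ 3 ∧ x ≠ 9) :
    cycF o x ≠ x := by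
  rcases o with _ | b
  · obtain ⟨h3, h9⟩ := h39 rfl
    interval_cases x <;> first | omega | decide
  · rcases b with _ | _ <;> interval_cases x <;> decide

lemma gadRel_edge {k : ℕ} {o : Option Bool} {x y : ℕ} (hk : 1 ≤ k)
    (h : gadRel k o x y) : s(x,y) ∈ gadgetEdges k := by
  rcases h with ⟨hx, h39, rfl⟩ | ⟨c, hc, n, m, hbp, rfl, rfl⟩
  · exact cyc_edge hx (cycF_lt hx h39) (cycF_adjrel hx h39)
  · exact mem_gadgetEdges.2 (Or.inr (Or.inr ⟨c, hc, n, m, boxPair_boxRel hk hbp,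
      Or.inl ⟨rfl, rfl⟩⟩))

lemma gadRel_ne {k : ℕ} {o : Option Bool} {x y : ℕ} (hk : 1 ≤ k) (hc4 : True)
    (h : gadRel k o x y) : x ≠ y := by
  rcases h with ⟨hx, h39, rfl⟩ | ⟨c, hc, n, m, hbp, rfl, rfl⟩
  · exact fun he => cycF_ne hx h39 he.symm
  · intro he
    have hb := boxPair_lt hk hbp
    have := psi_inj hk hc hb.2.2.2.2.1 hb.1 he
    unfold boxPair at hbp; omega

lemma gadRel_verts {k : ℕ} {o : Option Bool} {x y : ℕ} (hk : 1 ≤ k)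
    (h : gadRel k o x y) : y ∈ gadgetVerts k := by
  rcases h with ⟨hx, h39, rfl⟩ | ⟨c, hc, n, m, hbp, rfl, rfl⟩
  · exact mem_gadgetVerts.2 (Or.inl (cycF_lt hx h39))
  · exact psi_mem hk hc (boxPair_lt hk hbp).1

lemma gadRel_fun {k : ℕ} {o : Option Bool} {x y y' : ℕ} (hk : 1 ≤ k)
    (h1 : gadRel k o x y) (h2 : gadRel k o x y') : y = y' := by
  rcases h1 with ⟨hx, h39, rfl⟩ | ⟨c, hc, n, m, hbp, hxe, rfl⟩ <;>
    rcases h2 with ⟨hx', h39', rfl⟩ | ⟨c', hc', n', m', hbp', hxe', rfl⟩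
  · rfl
  · exfalso
    have hb := boxPair_lt hk hbp'
    rw [hxe', psi_interior (by omega) hb.2.2.2.2.2] at hx
    omega
  · exfalso
    have hb := boxPair_lt hk hbp
    rw [hxe, psi_interior (by omega) hb.2.2.2.2.2] at hx'
    omega
  · have hb := boxPair_lt hk hbp
    have hb' := boxPair_lt hk hbp'
    rw [psi_interior (by omega) hb.2.2.2.2.2] at hxe
    rw [psi_interior (by omega) hb'.2.2.2.2.2] at hxe'
    have hcc : c = c' ∧ n = n' := by
      rw [hxe] at hxe'
      interval_cases c <;> interval_cases c' <;> omega
    obtain ⟨rfl, rfl⟩ := hcc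
    have : m = m' := by unfold boxPair at hbp hbp'; omega
    rw [this]

lemma gadRel_exists {k : ℕ} (o : Option Bool) {x : ℕ} (hk : 1 ≤ k)
    (hx : x ∈ gadgetVerts k) (h3 : x ≠ 3) (h9 : x ≠ 9) :
    ∃ y, y ∈ gadgetVerts k ∧ gadRel k o x y := by
  rcases mem_gadgetVerts.1 hx with h12 | ⟨c, hc, n, h0, h4, hl, rfl⟩
  · exact ⟨cycF o x, mem_gadgetVerts.2 (Or.inl (cycF_lt h12 (fun _ => ⟨h3, h9⟩))),
      Or.inl ⟨h12, fun _ => ⟨h3, h9⟩, rfl⟩⟩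
  · obtain ⟨m, hm⟩ := boxPair_exists hk h0 h4 hl
    have hml := boxPair_lt hk hm
    exact ⟨ψ k c m, psi_mem hk hc hml.1,
      Or.inr ⟨c, hc, n, m, hm, (psi_interior (by omega) hl).symm, rfl⟩⟩

end CGAux
namespace CGAux

lemma outer_edge {k a b : ℕ} (ha : a < 12) (hm : a % 3 ≠ 1) (hb : b = (a+1)%12) :
    s(a,b) ∈ counterEdges k ∧ s(b,a) ∈ counterEdges k := by
  subst hb
  exact ⟨mem_counterEdges.2 (Or.inl ⟨a, ha, hm, Or.inl ⟨rfl, rfl⟩⟩),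
    mem_counterEdges.2 (Or.inl ⟨a, ha, hm, Or.inr ⟨rfl, rfl⟩⟩)⟩

lemma phi_big {k j x : ℕ} (h3 : x ≠ 3) (h9 : x ≠ 9) : 12 ≤ φ k j x := by
  rw [phi_other h3 h9]; omega

lemma no_39 {k : ℕ} (hk : 1 ≤ k) : s(3,9) ∉ gadgetEdges k := by
  intro h
  rcases mem_gadgetEdges.1 h with ⟨i, hi, hc⟩ | hc | ⟨c, hc, x, y, hxy, he⟩
  · omega
  · omega
  · have hl := boxRel_lt hk hxy
    rcases he with ⟨h1, _⟩ | ⟨h1, _⟩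
    · exact (psi_ne39 hk hc hl.1).1 h1.symm
    · exact (psi_ne39 hk hc hl.2).1 h1.symm

lemma phi_eq_u {k j' x j : ℕ} (hx : x ∈ gadgetVerts k) (hj : j < 4) (hj' : j' < 4)
    (h : φ k j' x = 3*j+1) : x = 3 ∧ j' = j := by
  by_cases h3 : x = 3
  · subst h3; rw [phi_uv.1] at h; exact ⟨rfl, by omega⟩
  by_cases h9 : x = 9
  · subst h9; rw [phi_uv.2] at h; omega
  · have := phi_big (k := k) (j := j') h3 h9; omega

lemma phi_eq_v {k j' x j : ℕ} (hx : x ∈ gadgetVerts k) (hj : j < 4) (hj' : j' < 4)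
    (h : φ k j' x = 3*j+2) : x = 9 ∧ j' = j := by
  by_cases h3 : x = 3
  · subst h3; rw [phi_uv.1] at h; omega
  by_cases h9 : x = 9
  · subst h9; rw [phi_uv.2] at h; exact ⟨rfl, by omega⟩
  · have := phi_big (k := k) (j := j') h3 h9; omega

lemma no_uv_edge {k j : ℕ} (hk : 1 ≤ k) (hj : j < 4) :
    s(3*j+1, 3*j+2) ∉ counterEdges k := by
  intro h
  rcases mem_counterEdges.1 h with ⟨i, hi, him, hc⟩ | ⟨j', hj', x, y, hxy, hc⟩
  · omega
  · have hv := gadgetEdges_verts hk hxy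
    rcases hc with ⟨h1, h2⟩ | ⟨h1, h2⟩
    · obtain ⟨rfl, rfl⟩ := phi_eq_u hv.1 hj hj' h1.symm
      obtain ⟨rfl, -⟩ := phi_eq_v hv.2 hj hj' h2.symm
      exact no_39 hk hxy
    · obtain ⟨rfl, rfl⟩ := phi_eq_u hv.2 hj hj' h1.symm
      obtain ⟨rfl, -⟩ := phi_eq_v hv.1 hj hj' h2.symm
      exact no_39 hk (by rwa [Sym2.eq_swap] at hxy)

lemma MRel_symm {k : ℕ} {p b0 b1 : Bool} {m n : ℕ} (hk : 1 ≤ k)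
    (h : MRel k p b0 b1 m n) : MRel k p b0 b1 n m := by
  rcases h with ⟨j, hj, ho, hc⟩ | ⟨j, hj, x, y, hxv, hyv, hg, rfl, rfl⟩
  · exact Or.inl ⟨j, hj, ho, by tauto⟩
  · exact Or.inr ⟨j, hj, y, x, hyv, hxv, gadRel_symm hk hg, rfl, rfl⟩

lemma MRel_edge {k : ℕ} {p b0 b1 : Bool} {m n : ℕ} (hk : 1 ≤ k)
    (h : MRel k p b0 b1 m n) :
    s(m,n) ∈ counterEdges k ∧ m ≠ n ∧ m ∈ counterVerts k ∧ n ∈ counterVerts k := by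
  rcases h with ⟨j, hj, ho, hc⟩ | ⟨j, hj, x, y, hxv, hyv, hg, rfl, rfl⟩
  · have hv : ∀ w : ℕ, w < 12 → w ∈ counterVerts k := fun w hw => mem_counterVerts.2 (Or.inl hw)
    rcases hc with ⟨rfl, rfl⟩ | ⟨rfl, rfl⟩ | ⟨rfl, rfl⟩ | ⟨rfl, rfl⟩
    · exact ⟨(outer_edge (by omega) (by omega) (by omega)).1, by omega,
        hv _ (by omega), hv _ (by omega)⟩
    · exact ⟨(outer_edge (a := 3*j) (by omega) (by omega) (by omega)).2, by omega,
        hv _ (by omega), hv _ (by omega)⟩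
    · exact ⟨(outer_edge (a := 3*j+2) (by omega) (by omega) (by omega)).2, by omega,
        hv _ (by omega), hv _ (by omega)⟩
    · exact ⟨(outer_edge (a := 3*j+2) (by omega) (by omega) (by omega)).1, by omega,
        hv _ (by omega), hv _ (by omega)⟩
  · exact ⟨mem_counterEdges.2 (Or.inr ⟨j, hj, x, y, gadRel_edge hk hg, Or.inl ⟨rfl, rfl⟩⟩),
      fun he => gadRel_ne hk trivial hg (phi_inj_full hk hxv hyv he),
      phi_mem hj hxv, phi_mem hj hyv⟩

lemma MRel_fun {k : ℕ} {p b0 b1 : Bool} {m n n' : ℕ} (hk : 1 ≤ k)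
    (h1 : MRel k p b0 b1 m n) (h2 : MRel k p b0 b1 m n') : n = n' := by
  have clash : ∀ j j' x (y : ℕ), j < 4 → j' < 4 → oOf p b0 b1 j = none →
      (m = 3*j ∨ m = 3*j+1 ∨ m = (3*j+3)%12 ∨ m = 3*j+2) → x ∈ gadgetVerts k →
      gadRel k (oOf p b0 b1 j') x y → m = φ k j' x → False := by
    intro j j' x y hj hj' ho hmf hxv hg hmphi
    by_cases h3 : x = 3
    · subst h3; rw [phi_uv.1] at hmphi
      have : j = j' := by omega
      subst this
      rw [ho] at hg
      rcases hg with ⟨_, h39, _⟩ | ⟨c, hc, nn, mm, hbp, hxe, _⟩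
      · exact (h39 rfl).1 rfl
      · have hb := boxPair_lt hk hbp
        rw [psi_interior (by omega) hb.2.2.2.2.2] at hxe; omega
    by_cases h9 : x = 9
    · subst h9; rw [phi_uv.2] at hmphi
      have : j = j' := by omega
      subst this
      rw [ho] at hg
      rcases hg with ⟨_, h39, _⟩ | ⟨c, hc, nn, mm, hbp, hxe, _⟩
      · exact (h39 rfl).2 rfl
      · have hb := boxPair_lt hk hbp
        rw [psi_interior (by omega) hb.2.2.2.2.2] at hxe; omega
    · have := phi_big (k := k) (j := j') h3 h9; omega
  rcases h1 with ⟨j, hj, ho, hc⟩ | ⟨j, hj, x, y, hxv, hyv, hg, hmx, rfl⟩ <;>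
    rcases h2 with ⟨j', hj', ho', hc'⟩ | ⟨j'', hj'', x', y', hxv', hyv', hg', hmx', rfl⟩
  · rw [oOf_none] at ho ho'
    rcases p with _ | _ <;> simp at ho ho' <;> omega
  · exact (clash j j'' x' y' hj hj'' ho (by tauto) hxv' hg' hmx').elim
  · exact (clash j' j x y hj' hj ho' (by tauto) hxv hg hmx).elim
  · subst hmx
    have hxx : j = j'' ∧ x = x' := by
      by_cases h3 : x = 3
      · subst h3
        by_cases g3 : x' = 3
        · subst g3; rw [phi_uv.1, phi_uv.1] at hmx'; exact ⟨by omega, rfl⟩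
        by_cases g9 : x' = 9
        · subst g9; rw [phi_uv.1, phi_uv.2] at hmx'; omega
        · have := phi_big (k := k) (j := j'') g3 g9; rw [phi_uv.1] at hmx'; omega
      by_cases h9 : x = 9
      · subst h9
        by_cases g3 : x' = 3
        · subst g3; rw [phi_uv.2, phi_uv.1] at hmx'; omega
        by_cases g9 : x' = 9
        · subst g9; rw [phi_uv.2, phi_uv.2] at hmx'; exact ⟨by omega, rfl⟩
        · have := phi_big (k := k) (j := j'') g3 g9; rw [phi_uv.2] at hmx'; omega
      · by_cases g3 : x' = 3
        · have := phi_big (k := k) (j := j) h3 h9; subst g3; rw [phi_uv.1] at hmx'; omega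
        by_cases g9 : x' = 9
        · have := phi_big (k := k) (j := j) h3 h9; subst g9; rw [phi_uv.2] at hmx'; omega
        · exact phi_inj hk hj hj'' hxv hxv' h3 h9 hmx'
    obtain ⟨rfl, rfl⟩ := hxx
    rw [gadRel_fun hk hg hg']

lemma MRel_exists {k : ℕ} (p b0 b1 : Bool) (hk : 1 ≤ k) {m : ℕ}
    (hm : m ∈ counterVerts k) : ∃ n, MRel k p b0 b1 m n := by
  have alt : ∀ j, j < 4 → oOf p b0 b1 j ≠ none → oOf p b0 b1 ((j+3)%4) = none := by
    intro j hj h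
    rw [oOf_none]
    rw [Ne, oOf_none] at h
    rcases p with _ | _ <;> simp at h ⊢ <;> omega
  rcases mem_counterVerts.1 hm with h12 | ⟨j, hj, x, hxv, h3, h9, rfl⟩
  · obtain ⟨j, hj, hm3⟩ : ∃ j, j < 4 ∧ (m = 3*j ∨ m = 3*j+1 ∨ m = 3*j+2) :=
      ⟨m/3, by omega, by omega⟩
    rcases hm3 with rfl | rfl | rfl
    · cases ho : oOf p b0 b1 j with
      | none => exact ⟨3*j+1, Or.inl ⟨j, hj, ho, Or.inl ⟨rfl, rfl⟩⟩⟩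
      | some b =>
        refine ⟨3*((j+3)%4)+2, Or.inl ⟨(j+3)%4, by omega, alt j hj (by simp [ho]),
          Or.inr (Or.inr (Or.inl ⟨by omega, rfl⟩))⟩⟩
    · cases ho : oOf p b0 b1 j with
      | none => exact ⟨3*j, Or.inl ⟨j, hj, ho, Or.inr (Or.inl ⟨rfl, rfl⟩)⟩⟩
      | some b =>
        refine ⟨φ k j (cycF (some b) 3), Or.inr ⟨j, hj, 3, cycF (some b) 3,
          mem_gadgetVerts.2 (Or.inl (by omega)),
          mem_gadgetVerts.2 (Or.inl (cycF_lt (by omega) (by simp))),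
          ?_, (phi_uv.1).symm, rfl⟩⟩
        rw [ho]; exact Or.inl ⟨by omega, by simp, rfl⟩
    · cases ho : oOf p b0 b1 j with
      | none => exact ⟨(3*j+3)%12, Or.inl ⟨j, hj, ho, Or.inr (Or.inr (Or.inr ⟨rfl, rfl⟩))⟩⟩
      | some b =>
        refine ⟨φ k j (cycF (some b) 9), Or.inr ⟨j, hj, 9, cycF (some b) 9,
          mem_gadgetVerts.2 (Or.inl (by omega)),
          mem_gadgetVerts.2 (Or.inl (cycF_lt (by omega) (by simp))),
          ?_, (phi_uv.2).symm, rfl⟩⟩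
        rw [ho]; exact Or.inl ⟨by omega, by simp, rfl⟩
  · obtain ⟨y, hyv, hg⟩ := gadRel_exists (oOf p b0 b1 j) hk hxv h3 h9
    exact ⟨φ k j y, Or.inr ⟨j, hj, x, y, hxv, hyv, hg, (phi_other h3 h9).symm, rfl⟩⟩

end CGAux
namespace CGAux
open SimpleGraph

lemma counterGraph_adj {k : ℕ} {a b : counterVerts k} :
    (counterGraph k).Adj a b ↔ s((a:ℕ), (b:ℕ)) ∈ counterEdges k ∧ (a:ℕ) ≠ (b:ℕ) := by
  simp [counterGraph, SimpleGraph.induce, SimpleGraph.fromEdgeSet_adj, Subtype.coe_ne_coe]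

/-- the eight candidate perfect matchings, as subgraphs -/
def Msub (k : ℕ) (hk : 1 ≤ k) (p b0 b1 : Bool) : (counterGraph k).Subgraph where
  verts := Set.univ
  Adj a b := MRel k p b0 b1 a.1 b.1
  adj_sub := by
    intro a b h
    rw [counterGraph_adj]
    have := MRel_edge hk h
    exact ⟨this.1, this.2.1⟩
  edge_vert := by intro a b _; trivial
  symm := by constructor; intro a b h; exact MRel_symm hk h

lemma Msub_isPM {k : ℕ} (hk : 1 ≤ k) (p b0 b1 : Bool) :
    (Msub k hk p b0 b1).IsPerfectMatching := by
  constructor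
  · intro v _
    obtain ⟨n, hn⟩ := MRel_exists p b0 b1 hk v.2
    have hnv : n ∈ counterVerts k := (MRel_edge hk hn).2.2.2
    refine ⟨⟨n, hnv⟩, hn, ?_⟩
    intro w hw
    exact Subtype.ext (MRel_fun hk hw hn)
  · intro v; trivial

lemma MRel_01 {k : ℕ} {p b0 b1 : Bool} (hk : 1 ≤ k) :
    MRel k p b0 b1 0 1 ↔ p = true := by
  constructor
  · rintro (⟨j, hj, ho, hc⟩ | ⟨j, hj, x, y, hxv, hyv, hg, hmx, hny⟩)
    · have hj0 : j = 0 := by omega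
      subst hj0
      rw [oOf_none] at ho
      rcases p with _ | _
      · simp at ho
      · rfl
    · exfalso
      by_cases h3 : x = 3
      · subst h3; rw [phi_uv.1] at hmx; omega
      by_cases h9 : x = 9
      · subst h9; rw [phi_uv.2] at hmx; omega
      · have := phi_big (k := k) (j := j) h3 h9; omega
  · rintro rfl
    exact Or.inl ⟨0, by norm_num, by rw [oOf_none]; simp, Or.inl ⟨rfl, rfl⟩⟩

lemma MRel_uw {k : ℕ} {p b0 b1 : Bool} {j : ℕ} (hk : 1 ≤ k) (hj : j < 4) :
    MRel k p b0 b1 (3*j+1) (φ k j 2) ↔ oOf p b0 b1 j = some true := by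
  have h2big : 12 ≤ φ k j 2 := phi_big (by omega) (by omega)
  constructor
  · rintro (⟨j', hj', ho, hc⟩ | ⟨j', hj', x, y, hxv, hyv, hg, hmx, hny⟩)
    · exfalso; omega
    · obtain ⟨rfl, rfl⟩ := phi_eq_u hxv hj hj' hmx.symm
      have hy2 : y = 2 := phi_inj_full hk hyv (mem_gadgetVerts.2 (Or.inl (by omega))) hny.symm
      subst hy2
      rcases hg with ⟨_, h39, hcy⟩ | ⟨c, hc, nn, mm, hbp, hxe, _⟩
      · cases ho : oOf p b0 b1 j' with
        | none => exact absurd ((h39 ho).1 rfl) (fun h => h)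
        | some b =>
          rcases b with _ | _
          · rw [ho] at hcy; simp [cycF] at hcy
          · rfl
      · have hb := boxPair_lt hk hbp
        rw [psi_interior (by omega) hb.2.2.2.2.2] at hxe; omega
  · intro ho
    exact Or.inr ⟨j, hj, 3, 2, mem_gadgetVerts.2 (Or.inl (by omega)),
      mem_gadgetVerts.2 (Or.inl (by omega)),
      by rw [ho]; exact Or.inl ⟨by omega, by simp, by decide⟩, (phi_uv.1).symm, rfl⟩

end CGAux
namespace CGAux

lemma TN {k m y : ℕ} (hk : 1 ≤ k) (hm : m < 12) (h : s(m,y) ∈ counterEdges k) :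
    (m % 3 ≠ 1 ∧ y = (m+1)%12) ∨ (y < 12 ∧ y % 3 ≠ 1 ∧ m = (y+1)%12) ∨
    (∃ j, j < 4 ∧ ∃ e x', (e = 3 ∧ m = 3*j+1 ∨ e = 9 ∧ m = 3*j+2) ∧
      x' ∈ gadgetVerts k ∧ s(e,x') ∈ gadgetEdges k ∧ y = φ k j x') := by
  rcases mem_counterEdges.1 h with ⟨i, hi, him, hc⟩ | ⟨j, hj, x, y', hxy, hc⟩
  · rcases hc with ⟨rfl, rfl⟩ | ⟨rfl, rfl⟩
    · exact Or.inl ⟨him, rfl⟩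
    · exact Or.inr (Or.inl ⟨hi, him, rfl⟩)
  · have hv := gadgetEdges_verts hk hxy
    have key : ∀ a b : ℕ, a ∈ gadgetVerts k → b ∈ gadgetVerts k →
        s(a,b) ∈ gadgetEdges k → m = φ k j a → y = φ k j b →
        ((m % 3 ≠ 1 ∧ y = (m+1)%12) ∨ (y < 12 ∧ y % 3 ≠ 1 ∧ m = (y+1)%12) ∨
        (∃ j, j < 4 ∧ ∃ e x', (e = 3 ∧ m = 3*j+1 ∨ e = 9 ∧ m = 3*j+2) ∧
          x' ∈ gadgetVerts k ∧ s(e,x') ∈ gadgetEdges k ∧ y = φ k j x')) := by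
      intro a b hav hbv hab hma hyb
      by_cases h3 : a = 3
      · subst h3
        exact Or.inr (Or.inr ⟨j, hj, 3, b,
          Or.inl ⟨rfl, by rw [phi_uv.1] at hma; exact hma⟩, hbv, hab, hyb⟩)
      by_cases h9 : a = 9
      · subst h9
        exact Or.inr (Or.inr ⟨j, hj, 9, b,
          Or.inr ⟨rfl, by rw [phi_uv.2] at hma; exact hma⟩, hbv, hab, hyb⟩)
      · exact absurd hma (by have := phi_big (k := k) (j := j) h3 h9; omega)
    rcases hc with ⟨h1, h2⟩ | ⟨h1, h2⟩
    · exact key x y' hv.1 hv.2 hxy h1 h2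
    · exact key y' x hv.2 hv.1 (by rwa [Sym2.eq_swap] at hxy) h1 h2

lemma counterForce {k : ℕ} (hk : 1 ≤ k) (A : ℕ → ℕ → Prop)
    (hsym : ∀ x y, A x y → A y x)
    (hirr : ∀ x, ¬ A x x)
    (huni : ∀ x y z, A x y → A x z → y = z)
    (hedge : ∀ x y, A x y → s(x,y) ∈ counterEdges k)
    (hvert : ∀ x y, A x y → x ∈ counterVerts k)
    (hex : ∀ x, x ∈ counterVerts k → ∃ y, A x y) :
    ∃ p b0 b1, ∀ m n, A m n ↔ MRel k p b0 b1 m n := by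
  have memc : ∀ w : ℕ, w < 12 → w ∈ counterVerts k :=
    fun w hw => mem_counterVerts.2 (Or.inl hw)
  have GF : ∀ j (hj : j < 4), ∃ o : Option Bool,
      (∀ x, x ∈ gadgetVerts k → x ≠ 3 → x ≠ 9 → ∀ y, A (φ k j x) y →
        ∃ x', x' ∈ gadgetVerts k ∧ y = φ k j x' ∧ gadRel k o x x') ∧
      (o = none → ∀ e, e = 3 ∨ e = 9 → ∀ y, A (φ k j e) y →
        ∀ x', x' ∈ gadgetVerts k → y ≠ φ k j x') ∧
      (∀ b, o = some b →
        A (φ k j 3) (φ k j (cycF (some b) 3)) ∧ A (φ k j 9) (φ k j (cycF (some b) 9))) := by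
    intro j hj
    refine gadForce hk hj A hsym hirr huni ?_ ?_ ?_
    · intro h
      rw [phi_uv.1, phi_uv.2] at h
      exact no_uv_edge hk hj (hedge _ _ h)
    · intro x hxv h3 h9 y hy
      exact transfer_gadget hk hj hxv h3 h9 (hedge _ _ hy)
    · intro x hxv h3 h9
      exact hex _ (phi_mem hj hxv)
  choose oo hC1 hC2 hC3 using GF
  -- dichotomies for the outer vertices
  have du : ∀ j (hj : j < 4), A (3*j+1) (3*j) ∨
      (∃ x', x' ∈ gadgetVerts k ∧ A (3*j+1) (φ k j x')) := by
    intro j hj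
    obtain ⟨y, hy⟩ := hex (3*j+1) (memc _ (by omega))
    rcases TN hk (by omega) (hedge _ _ hy) with ⟨hm1, rfl⟩ | ⟨hy12, hy3, hme⟩ |
      ⟨j', hj', e, x', he, hx'v, _, rfl⟩
    · omega
    · have : y = 3*j := by omega
      subst this; exact Or.inl hy
    · rcases he with ⟨rfl, hm⟩ | ⟨rfl, hm⟩
      · have : j' = j := by omega
        subst this; exact Or.inr ⟨x', hx'v, hy⟩
      · omega
  have dv : ∀ j (hj : j < 4), A (3*j+2) ((3*j+3)%12) ∨
      (∃ x', x' ∈ gadgetVerts k ∧ A (3*j+2) (φ k j x')) := by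
    intro j hj
    obtain ⟨y, hy⟩ := hex (3*j+2) (memc _ (by omega))
    rcases TN hk (by omega) (hedge _ _ hy) with ⟨hm1, rfl⟩ | ⟨hy12, hy3, hme⟩ |
      ⟨j', hj', e, x', he, hx'v, _, rfl⟩
    · left; have : (3*j+2+1)%12 = (3*j+3)%12 := by omega
      rwa [this] at hy
    · omega
    · rcases he with ⟨rfl, hm⟩ | ⟨rfl, hm⟩
      · omega
      · have : j' = j := by omega
        subst this; exact Or.inr ⟨x', hx'v, hy⟩
  have dt : ∀ j (hj : j < 4), A (3*j) (3*j+1) ∨ A (3*j) (3*((j+3)%4)+2) := by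
    intro j hj
    obtain ⟨y, hy⟩ := hex (3*j) (memc _ (by omega))
    rcases TN hk (by omega) (hedge _ _ hy) with ⟨hm1, rfl⟩ | ⟨hy12, hy3, hme⟩ |
      ⟨j', hj', e, x', he, hx'v, _, rfl⟩
    · left; have : (3*j+1)%12 = 3*j+1 := by omega
      rwa [this] at hy
    · right; have : y = 3*((j+3)%4)+2 := by omega
      rwa [this] at hy
    · rcases he with ⟨rfl, hm⟩ | ⟨rfl, hm⟩ <;> omega
  -- the out-characterisations
  have Cout : ∀ j (hj : j < 4), (oo j hj = none ↔ A (3*j+1) (3*j)) := by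
    intro j hj
    constructor
    · intro ho
      rcases du j hj with h | ⟨x', hx'v, h⟩
      · exact h
      · exfalso
        have h' : A (φ k j 3) (φ k j x') := by rwa [phi_uv.1]
        exact hC2 j hj ho 3 (Or.inl rfl) _ h' x' hx'v rfl
    · intro hA'
      cases ho : oo j hj with
      | none => rfl
      | some b =>
        exfalso
        have h3 := (hC3 j hj b ho).1
        rw [phi_uv.1] at h3
        have := huni _ _ _ hA' h3
        have hlt : 12 ≤ φ k j (cycF (some b) 3) :=
          phi_big (by rcases b with _|_ <;> decide) (by rcases b with _|_ <;> decide)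
        omega
  have Coutv : ∀ j (hj : j < 4), (oo j hj = none ↔ A (3*j+2) ((3*j+3)%12)) := by
    intro j hj
    constructor
    · intro ho
      rcases dv j hj with h | ⟨x', hx'v, h⟩
      · exact h
      · exfalso
        have h' : A (φ k j 9) (φ k j x') := by rwa [phi_uv.2]
        exact hC2 j hj ho 9 (Or.inr rfl) _ h' x' hx'v rfl
    · intro hA'
      cases ho : oo j hj with
      | none => rfl
      | some b =>
        exfalso
        have h9 := (hC3 j hj b ho).2
        rw [phi_uv.2] at h9
        have := huni _ _ _ hA' h9
        have hlt : 12 ≤ φ k j (cycF (some b) 9) :=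
          phi_big (by rcases b with _|_ <;> decide) (by rcases b with _|_ <;> decide)
        omega
  -- alternation around the outer cycle
  have altXOR : ∀ j (hj : j < 4), ¬(oo j hj = none ∧ oo ((j+3)%4) (by omega) = none) := by
    intro j hj ⟨h1, h2⟩
    have ha := (Cout j hj).1 h1
    have hb := (Coutv ((j+3)%4) (by omega)).1 h2
    have he : (3*((j+3)%4)+3)%12 = 3*j := by omega
    rw [he] at hb
    have := huni _ _ _ (hsym _ _ ha) (hsym _ _ hb)
    omega
  have altOR : ∀ j (hj : j < 4), oo j hj = none ∨ oo ((j+3)%4) (by omega) = none := by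
    intro j hj
    rcases dt j hj with h | h
    · exact Or.inl ((Cout j hj).2 (hsym _ _ h))
    · right
      apply (Coutv ((j+3)%4) (by omega)).2
      have he : (3*((j+3)%4)+3)%12 = 3*j := by omega
      rw [he]
      exact hsym _ _ h
  -- main classification, given that `oOf` matches the gadget outcomes
  have main : ∀ p b0 b1 : Bool, (∀ j (hj : j < 4), oOf p b0 b1 j = oo j hj) →
      ∀ m n, A m n → MRel k p b0 b1 m n := by
    intro p b0 b1 hoo m n hA'
    have hmv : m ∈ counterVerts k := hvert _ _ hA'
    rcases mem_counterVerts.1 hmv with h12 | ⟨j, hj, x, hxv, h3, h9, rfl⟩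
    · obtain ⟨j, hj, hm3⟩ : ∃ j, j < 4 ∧ (m = 3*j ∨ m = 3*j+1 ∨ m = 3*j+2) :=
        ⟨m/3, by omega, by omega⟩
      rcases hm3 with rfl | rfl | rfl
      · cases ho : oo j hj with
        | none =>
          have h1 := hsym _ _ ((Cout j hj).1 ho)
          have hn := huni _ _ _ hA' h1
          subst hn
          exact Or.inl ⟨j, hj, (hoo j hj).trans ho, Or.inl ⟨rfl, rfl⟩⟩
        | some b =>
          set j' := (j+3)%4 with hj'def
          have hj' : j' < 4 := by omega
          have ho' : oo j' hj' = none := by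
            rcases altOR j hj with h | h
            · rw [ho] at h; cases h
            · exact h
          have h1 := (Coutv j' hj').1 ho'
          have he : (3*j'+3)%12 = 3*j := by omega
          rw [he] at h1
          have hn := huni _ _ _ hA' (hsym _ _ h1)
          subst hn
          exact Or.inl ⟨j', hj', (hoo j' hj').trans ho',
            Or.inr (Or.inr (Or.inl ⟨by omega, rfl⟩))⟩
      · cases ho : oo j hj with
        | none =>
          have h1 := (Cout j hj).1 ho
          have hn := huni _ _ _ hA' h1
          subst hn
          exact Or.inl ⟨j, hj, (hoo j hj).trans ho, Or.inr (Or.inl ⟨rfl, rfl⟩)⟩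
        | some b =>
          have h1 := (hC3 j hj b ho).1
          rw [phi_uv.1] at h1
          have hn := huni _ _ _ hA' h1
          subst hn
          refine Or.inr ⟨j, hj, 3, cycF (some b) 3, mem_gadgetVerts.2 (Or.inl (by omega)),
            mem_gadgetVerts.2 (Or.inl (cycF_lt (by omega) (by simp))), ?_,
            (phi_uv.1).symm, rfl⟩
          rw [(hoo j hj).trans ho]
          exact Or.inl ⟨by omega, by simp, rfl⟩
      · cases ho : oo j hj with
        | none =>
          have h1 := (Coutv j hj).1 ho
          have hn := huni _ _ _ hA' h1
          subst hn
          exact Or.inl ⟨j, hj, (hoo j hj).trans ho, Or.inr (Or.inr (Or.inr ⟨rfl, rfl⟩))⟩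
        | some b =>
          have h1 := (hC3 j hj b ho).2
          rw [phi_uv.2] at h1
          have hn := huni _ _ _ hA' h1
          subst hn
          refine Or.inr ⟨j, hj, 9, cycF (some b) 9, mem_gadgetVerts.2 (Or.inl (by omega)),
            mem_gadgetVerts.2 (Or.inl (cycF_lt (by omega) (by simp))), ?_,
            (phi_uv.2).symm, rfl⟩
          rw [(hoo j hj).trans ho]
          exact Or.inl ⟨by omega, by simp, rfl⟩
    · have hmphi : (12+(16*k+12)*j+x : ℕ) = φ k j x := (phi_other h3 h9).symm
      rw [hmphi] at hA' ⊢
      obtain ⟨x', hx'v, rfl, hg⟩ := hC1 j hj x hxv h3 h9 n hA'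
      exact Or.inr ⟨j, hj, x, x', hxv, hx'v, by rwa [hoo j hj], rfl, rfl⟩
  have finish : ∀ p b0 b1 : Bool, (∀ j (hj : j < 4), oOf p b0 b1 j = oo j hj) →
      ∀ m n, A m n ↔ MRel k p b0 b1 m n := by
    intro p b0 b1 hoo m n
    refine ⟨main p b0 b1 hoo m n, fun h => ?_⟩
    have hmv : m ∈ counterVerts k := (MRel_edge hk h).2.2.1
    obtain ⟨n', hn'⟩ := hex m hmv
    have h2 := main p b0 b1 hoo m n' hn'
    exact (MRel_fun hk h2 h) ▸ hn'
  have h04 : (0:ℕ) < 4 := by norm_num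
  have h14 : (1:ℕ) < 4 := by norm_num
  have h24 : (2:ℕ) < 4 := by norm_num
  have h34 : (3:ℕ) < 4 := by norm_num
  cases ho0 : oo 0 h04 with
  | none =>
    obtain ⟨v1, ho1⟩ : ∃ b, oo 1 h14 = some b := by
      cases ho1 : oo 1 h14 with
      | none => exact absurd ⟨ho1, ho0⟩ (altXOR 1 h14)
      | some b => exact ⟨b, rfl⟩
    have ho2 : oo 2 h24 = none := by
      rcases altOR 2 h24 with h | h
      · exact h
      · rw [ho1] at h; cases h
    obtain ⟨v3, ho3⟩ : ∃ b, oo 3 h34 = some b := by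
      cases ho3 : oo 3 h34 with
      | none => exact absurd ⟨ho3, ho2⟩ (altXOR 3 h34)
      | some b => exact ⟨b, rfl⟩
    refine ⟨true, v1, v3, finish true v1 v3 ?_⟩
    intro j hj
    interval_cases j
    · exact ho0.symm ▸ rfl
    · exact ho1.symm ▸ rfl
    · exact ho2.symm ▸ rfl
    · exact ho3.symm ▸ rfl
  | some b =>
    have ho3 : oo 3 h34 = none := by
      rcases altOR 0 h04 with h | h
      · rw [ho0] at h; cases h
      · exact h
    have ho1 : oo 1 h14 = none := by
      rcases altOR 1 h14 with h | h
      · exact h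
      · rw [ho0] at h; cases h
    obtain ⟨v2, ho2⟩ : ∃ b, oo 2 h24 = some b := by
      cases ho2 : oo 2 h24 with
      | none => exact absurd ⟨ho2, ho1⟩ (altXOR 2 h24)
      | some b => exact ⟨b, rfl⟩
    refine ⟨false, b, v2, finish false b v2 ?_⟩
    intro j hj
    interval_cases j
    · exact ho0.symm ▸ rfl
    · exact ho1.symm ▸ rfl
    · exact ho2.symm ▸ rfl
    · exact ho3.symm ▸ rfl

end CGAux
namespace CGAux
open SimpleGraph

lemma Msub_inj {k : ℕ} (hk : 1 ≤ k) {p b0 b1 p' b0' b1' : Bool}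
    (he : Msub k hk p b0 b1 = Msub k hk p' b0' b1') : (p, b0, b1) = (p', b0', b1') := by
  have hA : ∀ (a b : counterVerts k),
      (MRel k p b0 b1 a.1 b.1 ↔ MRel k p' b0' b1' a.1 b.1) := by
    intro a b
    have h2 := congrArg SimpleGraph.Subgraph.Adj he
    exact iff_of_eq (congrFun (congrFun h2 a) b)
  have memc : ∀ w : ℕ, w < 12 → w ∈ counterVerts k :=
    fun w hw => mem_counterVerts.2 (Or.inl hw)
  have hp : p = p' := by
    have := hA ⟨0, memc 0 (by omega)⟩ ⟨1, memc 1 (by omega)⟩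
    rw [MRel_01 hk, MRel_01 hk] at this
    cases p <;> cases p' <;> simp_all
  subst hp
  have hb : ∀ (j : ℕ) (hj : j < 4),
      (oOf p b0 b1 j = some true ↔ oOf p b0' b1' j = some true) := by
    intro j hj
    have hm2 : (2:ℕ) ∈ gadgetVerts k := mem_gadgetVerts.2 (Or.inl (by omega))
    have := hA ⟨3*j+1, memc _ (by omega)⟩ ⟨φ k j 2, phi_mem hj hm2⟩
    rwa [MRel_uw hk hj, MRel_uw hk hj] at this
  have hb0 : b0 = b0' := by
    cases p
    · have := hb 0 (by norm_num)
      simp [oOf] at this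
      cases b0 <;> cases b0' <;> simp_all
    · have := hb 1 (by norm_num)
      simp [oOf] at this
      cases b0 <;> cases b0' <;> simp_all
  have hb1 : b1 = b1' := by
    cases p
    · have := hb 2 (by norm_num)
      simp [oOf] at this
      cases b1 <;> cases b1' <;> simp_all
    · have := hb 3 (by norm_num)
      simp [oOf] at this
      cases b1 <;> cases b1' <;> simp_all
  rw [hb0, hb1]

lemma Msub_surj {k : ℕ} (hk : 1 ≤ k) (M : (counterGraph k).Subgraph)
    (hM : M.IsPerfectMatching) : ∃ p b0 b1, Msub k hk p b0 b1 = M := by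
  set A : ℕ → ℕ → Prop := fun m n =>
    ∃ (hm : m ∈ counterVerts k) (hn : n ∈ counterVerts k), M.Adj ⟨m, hm⟩ ⟨n, hn⟩ with hAdef
  have hsym : ∀ x y, A x y → A y x := by
    rintro x y ⟨hx, hy, h⟩; exact ⟨hy, hx, h.symm⟩
  have hirr : ∀ x, ¬ A x x := by
    rintro x ⟨hx, _, h⟩
    exact (counterGraph k).loopless.irrefl _ (M.adj_sub h)
  have huni : ∀ x y z, A x y → A x z → y = z := by
    rintro x y z ⟨hx, hy, h1⟩ ⟨hx', hz, h2⟩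
    obtain ⟨w, hw, huw⟩ := hM.1 (hM.2 ⟨x, hx⟩)
    have e1 := huw _ h1
    have e2 := huw _ h2
    have := e1.trans e2.symm
    exact congrArg Subtype.val this
  have hedge : ∀ x y, A x y → s(x,y) ∈ counterEdges k := by
    rintro x y ⟨hx, hy, h⟩
    exact (counterGraph_adj.1 (M.adj_sub h)).1
  have hvert : ∀ x y, A x y → x ∈ counterVerts k := by
    rintro x y ⟨hx, _, _⟩; exact hx
  have hex : ∀ x, x ∈ counterVerts k → ∃ y, A x y := by
    intro x hx
    obtain ⟨w, hw, _⟩ := hM.1 (hM.2 ⟨x, hx⟩)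
    exact ⟨w.1, hx, w.2, hw⟩
  obtain ⟨p, b0, b1, hiff⟩ := counterForce hk A hsym hirr huni hedge hvert hex
  refine ⟨p, b0, b1, ?_⟩
  apply SimpleGraph.Subgraph.ext
  · exact (Set.eq_univ_iff_forall.2 hM.2).symm
  · funext a b
    apply propext
    constructor
    · intro h
      obtain ⟨hm, hn, h'⟩ := (hiff a.1 b.1).2 h
      exact h'
    · intro h
      exact (hiff a.1 b.1).1 ⟨a.2, b.2, h⟩

end CGAux

/-- For every `k ≥ 1`, the counterexample graph `G_k` has exactly `8` perfect
matchings. -/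
theorem counterGraph_pmCount (k : ℕ) (hk : 1 ≤ k) :
    pmCount (counterGraph k) = 8 := by
  have key : Function.Bijective (fun t : Bool × Bool × Bool =>
      (⟨CGAux.Msub k hk t.1 t.2.1 t.2.2, CGAux.Msub_isPM hk t.1 t.2.1 t.2.2⟩ :
        {M : (counterGraph k).Subgraph // M.IsPerfectMatching})) := by
    constructor
    · rintro ⟨p, b0, b1⟩ ⟨p', b0', b1'⟩ he
      have := CGAux.Msub_inj hk (congrArg Subtype.val he)
      simpa using this
    · rintro ⟨M, hM⟩
      obtain ⟨p, b0, b1, hM'⟩ := CGAux.Msub_surj hk M hM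
      exact ⟨(p, b0, b1), Subtype.ext hM'⟩
  have hcard : Nat.card {M : (counterGraph k).Subgraph // M.IsPerfectMatching}
      = Nat.card (Bool × Bool × Bool) :=
    (Nat.card_congr (Equiv.ofBijective _ key)).symm
  rw [pmCount, hcard]
  simp [Nat.card_eq_fintype_card]
end

section
/- A finite graph G is factor-critical if and only if G admits an odd ear decomposition, i.e., a sequence of subgraphs G_0 ⊆ G_1 ⊆ … ⊆ G_r = G such that G_0 consists of a single vertex and, for each 0 < i ≤ r, G_i is obtained from G_{i−1} by adding an ear: a path with an odd number of edges whose two endpoints (which may coincide) lie in G_{i−1} and whose internal vertices are new. Moreover, if G is factor-critical, then for every vertex v of G there exists such a decomposition with G_0 = {v}. -/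
/-- A graph is factor-critical if deleting any vertex leaves a graph with a
perfect matching. -/
def IsFactorCritical {V : Type*} (G : SimpleGraph V) : Prop :=
  ∀ v : V, ∃ M : (G.induce {w | w ≠ v}).Subgraph, M.IsPerfectMatching

/-- `H'` is obtained from the subgraph `H` by adding an ear: a path
`p 0, p 1, …, p m` in `G` with an odd number `m` of edges, whose endpoints
`p 0` and `p m` lie in `H` (and may coincide), whose internal vertices are new
and pairwise distinct, and which contributes exactly its edges to `H'`. -/
def IsEarExtension {V : Type*} {G : SimpleGraph V} (H H' : G.Subgraph) : Prop :=
  ∃ (m : ℕ) (p : ℕ → V),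
    Odd m ∧
    (∀ i < m, G.Adj (p i) (p (i + 1))) ∧
    p 0 ∈ H.verts ∧ p m ∈ H.verts ∧
    (∀ i, 0 < i → i < m → p i ∉ H.verts) ∧
    (∀ i j, 0 < i → i < j → j < m → p i ≠ p j) ∧
    ¬ H.Adj (p 0) (p 1) ∧
    H'.verts = H.verts ∪ {w | ∃ i, 0 < i ∧ i < m ∧ w = p i} ∧
    (∀ x y, H'.Adj x y ↔
      H.Adj x y ∨ ∃ i < m, (x = p i ∧ y = p (i + 1)) ∨ (y = p i ∧ x = p (i + 1)))

/-- `G` has an odd ear decomposition with `r` ears starting from the vertex `v`: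
a chain of subgraphs beginning with the single vertex `v`, each obtained from
the previous one by adding an odd ear, and ending with `G` itself. -/
def HasOddEarDecomposition {V : Type*} (G : SimpleGraph V) (r : ℕ) (v : V) : Prop :=
  ∃ H : ℕ → G.Subgraph,
    (H 0).verts = {v} ∧ (∀ x y, ¬ (H 0).Adj x y) ∧
    (∀ i < r, IsEarExtension (H i) (H (i + 1))) ∧
    H r = ⊤

namespace EarDecompProof

open SimpleGraph

variable {V : Type*} {G : SimpleGraph V}



/-- Extract a matching "partner function" from factor-criticality. -/
lemma exists_matchFun (hfc : IsFactorCritical G) (u : V) :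
    ∃ f : V → V, f u = u ∧ (∀ x, f (f x) = x) ∧ ∀ x, x ≠ u → G.Adj x (f x) := by
  obtain ⟨M, hM⟩ := hfc u
  rw [SimpleGraph.Subgraph.isPerfectMatching_iff] at hM
  classical
  have hpf : ∀ a : {w | w ≠ u}, {b : {w | w ≠ u} // M.Adj a b} := fun a =>
    ⟨(hM a).exists.choose, (hM a).exists.choose_spec⟩
  set f : V → V := fun x => if h : x = u then u else (hpf ⟨x, h⟩).1 with hfdef
  have hf : ∀ (x : V) (h : x ≠ u), f x = (hpf ⟨x, h⟩).1 := by
    intro x h; simp [hfdef, dif_neg h]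
  refine ⟨f, by simp [hfdef], ?_, ?_⟩
  · intro x
    by_cases hx : x = u
    · simp [hfdef, hx]
    · have h1 : M.Adj ⟨x, hx⟩ (hpf ⟨x, hx⟩).1 := (hpf ⟨x, hx⟩).2
      have hyu : ((hpf ⟨x, hx⟩).1 : V) ≠ u := (hpf ⟨x, hx⟩).1.2
      rw [hf x hx, hf _ hyu]
      have h2 : M.Adj ⟨_, hyu⟩ (hpf ⟨_, hyu⟩).1 := (hpf ⟨_, hyu⟩).2
      have h3 : M.Adj ⟨_, hyu⟩ ⟨x, hx⟩ := by
        convert M.adj_symm h1 <;> simp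
      have h4 := (hM ⟨_, hyu⟩).unique h2 h3
      rw [h4]
  · intro x hx
    rw [hf x hx]
    have h1 : M.Adj ⟨x, hx⟩ (hpf ⟨x, hx⟩).1 := (hpf ⟨x, hx⟩).2
    have := M.adj_sub h1
    simpa using this


variable (G)

/-- Subgraph consisting of the edges `p i – p (i+1)` for `i` in the index set `I`. -/
def chainSub (p : ℕ → V) (I : ℕ → Prop) (m : ℕ)
    (hadj : ∀ i < m, G.Adj (p i) (p (i + 1))) (hIm : ∀ i, I i → i < m) : G.Subgraph where
  verts := {w | ∃ i, I i ∧ (w = p i ∨ w = p (i + 1))}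
  Adj a b := ∃ i, I i ∧ ((a = p i ∧ b = p (i + 1)) ∨ (b = p i ∧ a = p (i + 1)))
  adj_sub := by
    rintro a b ⟨i, hi, ⟨rfl, rfl⟩ | ⟨rfl, rfl⟩⟩
    · exact hadj i (hIm i hi)
    · exact (hadj i (hIm i hi)).symm
  edge_vert := by
    rintro a b ⟨i, hi, ⟨rfl, rfl⟩ | ⟨rfl, rfl⟩⟩
    · exact ⟨i, hi, Or.inl rfl⟩
    · exact ⟨i, hi, Or.inr rfl⟩
  symm := by
    constructor
    rintro a b ⟨i, hi, h⟩
    exact ⟨i, hi, h.symm⟩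

lemma chainSub_verts (p : ℕ → V) (I : ℕ → Prop) (m : ℕ)
    (hadj : ∀ i < m, G.Adj (p i) (p (i + 1))) (hIm : ∀ i, I i → i < m) :
    (chainSub G p I m hadj hIm).verts = {w | ∃ i, I i ∧ (w = p i ∨ w = p (i + 1))} := rfl

lemma chainSub_adj (p : ℕ → V) (I : ℕ → Prop) (m : ℕ)
    (hadj : ∀ i < m, G.Adj (p i) (p (i + 1))) (hIm : ∀ i, I i → i < m) (a b : V) :
    (chainSub G p I m hadj hIm).Adj a b ↔
      ∃ i, I i ∧ ((a = p i ∧ b = p (i + 1)) ∨ (b = p i ∧ a = p (i + 1))) := Iff.rfl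

variable {G}

lemma ear_p_inj {p : ℕ → V} {m : ℕ} {S : Set V}
    (h0 : p 0 ∈ S) (hm : p m ∈ S)
    (hint : ∀ i, 0 < i → i < m → p i ∉ S)
    (hdist : ∀ i j, 0 < i → i < j → j < m → p i ≠ p j) :
    ∀ k l, k ≤ m → l ≤ m → ¬(k = 0 ∧ l = m) → ¬(l = 0 ∧ k = m) → p k = p l → k = l := by
  have main : ∀ k l, k < l → l ≤ m → ¬(k = 0 ∧ l = m) → p k = p l → False := by
    intro k l hkl hl hex heq
    rcases Nat.eq_zero_or_pos k with rfl | hk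
    · rcases eq_or_lt_of_le hl with rfl | hlm
      · exact hex ⟨rfl, rfl⟩
      · exact hint l hkl hlm (heq ▸ h0)
    · rcases eq_or_lt_of_le hl with rfl | hlm
      · exact hint k hk hkl (heq.symm ▸ hm)
      · exact hdist k l hk hkl hlm heq
  intro k l hk hl h1 h2 heq
  rcases Nat.lt_trichotomy k l with h | h | h
  · exact absurd heq (fun he => main k l h hl (fun ⟨a, b⟩ => h1 ⟨a, b⟩) he)
  · exact h
  · exact absurd heq.symm (fun he => main l k h hk (fun ⟨a, b⟩ => h2 ⟨a, b⟩) he)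

lemma chainSub_isMatching {p : ℕ → V} {m : ℕ} {S : Set V} {I : ℕ → Prop}
    (h0 : p 0 ∈ S) (hm : p m ∈ S)
    (hint : ∀ i, 0 < i → i < m → p i ∉ S)
    (hdist : ∀ i j, 0 < i → i < j → j < m → p i ≠ p j)
    (hadj : ∀ i < m, G.Adj (p i) (p (i + 1))) (hIm : ∀ i, I i → i < m)
    (hcons : ∀ i, I i → ¬ I (i + 1)) (h0m : ¬(I 0 ∧ I (m - 1))) :
    (chainSub G p I m hadj hIm).IsMatching := by
  have key : ∀ i j d e, I i → I j → d ≤ 1 → e ≤ 1 → p (i + d) = p (j + e) → i + d = j + e := by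
    intro i j d e hi hj hd he heq
    have him := hIm i hi
    have hjm := hIm j hj
    refine ear_p_inj h0 hm hint hdist _ _ (by omega) (by omega) ?_ ?_ heq
    · rintro ⟨hk, hl⟩
      have : i = 0 ∧ d = 0 := by omega
      have : j = m - 1 := by omega
      exact h0m ⟨by simpa [‹i = 0 ∧ d = 0›.1] using hi, this ▸ hj⟩
    · rintro ⟨hk, hl⟩
      have : j = 0 ∧ e = 0 := by omega
      have : i = m - 1 := by omega
      exact h0m ⟨by simpa [‹j = 0 ∧ e = 0›.1] using hj, this ▸ hi⟩
  rintro a ⟨i, hi, hai | hai⟩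
  · refine ⟨p (i + 1), ⟨i, hi, Or.inl ⟨hai, rfl⟩⟩, ?_⟩
    rintro b ⟨j, hj, ⟨hb1, hb2⟩ | ⟨hb1, hb2⟩⟩
    · have hij : i + 0 = j + 0 := key i j 0 0 hi hj (by omega) (by omega)
        (by simpa using hai.symm.trans hb1)
      have : i = j := by omega
      rw [hb2, this]
    · have hij : j + 1 = i + 0 := key j i 1 0 hj hi (by omega) (by omega)
        (by simpa using hb2.symm.trans hai)
      exact absurd (by rwa [show i = j + 1 by omega] at hi) (hcons j hj)
  · refine ⟨p i, ⟨i, hi, Or.inr ⟨rfl, hai⟩⟩, ?_⟩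
    rintro b ⟨j, hj, ⟨hb1, hb2⟩ | ⟨hb1, hb2⟩⟩
    · have hij : i + 1 = j + 0 := key i j 1 0 hi hj (by omega) (by omega)
        (by simpa using hai.symm.trans hb1)
      exact absurd (by rwa [show j = i + 1 by omega] at hj) (hcons i hi)
    · have hij : i + 1 = j + 1 := key i j 1 1 hi hj (by omega) (by omega)
        (hai.symm.trans hb2)
      have : i = j := by omega
      rw [hb1, this]


/-- The invariant for the easy direction: every vertex of `H` can be missed by a
matching inside `H` covering everything else. -/
def FCSub (H : G.Subgraph) : Prop :=
  ∀ u ∈ H.verts, ∃ M : G.Subgraph, M ≤ H ∧ M.IsMatching ∧ M.verts = H.verts \ {u}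

lemma fc_step {H H' : G.Subgraph} (hext : IsEarExtension H H') (hfc : FCSub H) : FCSub H' := by
  obtain ⟨m, p, hodd, hadj, h0, hm, hint, hdist, hfirst, hverts, hAdj⟩ := hext
  have hm2 : m % 2 = 1 := Nat.odd_iff.mp hodd
  have hHle : H ≤ H' := by
    constructor
    · rw [hverts]; exact Set.subset_union_left
    · intro a b hab; exact (hAdj a b).2 (Or.inl hab)
  intro u hu
  have hu' : u ∈ H.verts ∪ {w | ∃ i, 0 < i ∧ i < m ∧ w = p i} := hverts ▸ hu
  have pinj := ear_p_inj h0 hm hint hdist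
  rcases hu' with hu' | ⟨t, ht0, htm, rfl⟩
  · -- u is an old vertex
    obtain ⟨M, hMle, hMmatch, hMverts⟩ := hfc u hu'
    set I : ℕ → Prop := fun i => i % 2 = 1 ∧ i + 1 < m with hI
    have hIm : ∀ i, I i → i < m := fun i hi => by omega
    set P := chainSub G p I m hadj hIm with hP
    have hPmatch : P.IsMatching :=
      chainSub_isMatching h0 hm hint hdist hadj hIm (fun i hi => by omega) (by omega)
    have hPverts_sub : ∀ w ∈ P.verts, ∃ k, 0 < k ∧ k < m ∧ w = p k := by
      rw [chainSub_verts]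
      rintro w ⟨i, hi, rfl | rfl⟩
      · exact ⟨i, by omega, by omega, rfl⟩
      · exact ⟨i + 1, by omega, by omega, rfl⟩
    have hPnotH : ∀ w ∈ P.verts, w ∉ H.verts := by
      intro w hw
      obtain ⟨k, hk0, hkm, rfl⟩ := hPverts_sub w hw
      exact hint k hk0 hkm
    have hdisj : Disjoint M.support P.support := by
      rw [hMmatch.support_eq_verts, hPmatch.support_eq_verts, Set.disjoint_left]
      intro w hw hw'
      exact hPnotH w hw' (hMverts ▸ hw).1
    have hPle : P ≤ H' := by
      constructor
      · intro w hw
        obtain ⟨k, hk0, hkm, rfl⟩ := hPverts_sub w hw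
        rw [hverts]; exact Or.inr ⟨k, hk0, hkm, rfl⟩
      · intro a b hab
        rw [chainSub_adj] at hab
        obtain ⟨i, hi, hab⟩ := hab
        exact (hAdj a b).2 (Or.inr ⟨i, hIm i hi, hab⟩)
    refine ⟨M ⊔ P, sup_le (hMle.trans hHle) hPle, hMmatch.sup hPmatch hdisj, ?_⟩
    rw [Subgraph.verts_sup, hMverts, hverts]
    ext z
    simp only [Set.mem_union, Set.mem_diff, Set.mem_singleton_iff, Set.mem_setOf_eq]
    constructor
    · rintro (⟨hz, hzu⟩ | hz)
      · exact ⟨Or.inl hz, hzu⟩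
      · obtain ⟨k, hk0, hkm, rfl⟩ := hPverts_sub z hz
        exact ⟨Or.inr ⟨k, hk0, hkm, rfl⟩, fun h => hint k hk0 hkm (h ▸ hu')⟩
    · rintro ⟨hz | ⟨s, hs0, hsm, rfl⟩, hzu⟩
      · exact Or.inl ⟨hz, hzu⟩
      · right
        rw [chainSub_verts]
        by_cases hpar : s % 2 = 1
        · exact ⟨s, ⟨hpar, by omega⟩, Or.inl rfl⟩
        · refine ⟨s - 1, ⟨by omega, by omega⟩, Or.inr (by rw [show s - 1 + 1 = s by omega])⟩
  · -- u = p t is a new internal vertex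
    set e : ℕ := if t % 2 = 0 then 0 else m with he
    have hpe : p e ∈ H.verts := by
      rw [he]; split <;> assumption
    obtain ⟨M, hMle, hMmatch, hMverts⟩ := hfc (p e) hpe
    set I : ℕ → Prop :=
      fun i => i < m ∧ ((i < t ∧ i % 2 = t % 2) ∨ (t < i ∧ i % 2 ≠ t % 2)) with hI
    have hIm : ∀ i, I i → i < m := fun i hi => hi.1
    set P := chainSub G p I m hadj hIm with hP
    have hPmatch : P.IsMatching :=
      chainSub_isMatching h0 hm hint hdist hadj hIm (fun i hi => by omega) (by omega)
    -- endpoint indices of P lie in [0,m] \ {t}, avoid 0 if t odd, avoid m if t even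
    have hPverts_sub : ∀ w ∈ P.verts, ∃ k, k ≤ m ∧ k ≠ t ∧
        (t % 2 = 0 → k < m) ∧ (t % 2 = 1 → 0 < k) ∧ w = p k := by
      rw [chainSub_verts]
      rintro w ⟨i, hi, rfl | rfl⟩
      · exact ⟨i, by omega, by omega, by omega, by omega, rfl⟩
      · exact ⟨i + 1, by omega, by omega, by omega, by omega, rfl⟩
    have hPne : ∀ w ∈ P.verts, w ≠ p e ∨ w ∉ H.verts → True := fun _ _ _ => trivial
    have hwne : ∀ k, k ≤ m → k ≠ t → p k ≠ p t := by
      intro k hk hkt heq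
      exact hkt (pinj k t hk (by omega) (by omega) (by omega) heq)
    have hPinH : ∀ w ∈ P.verts, w ∈ H.verts → w = p e := by
      intro w hw hwH
      obtain ⟨k, hk, hkt, hk0, hk1, rfl⟩ := hPverts_sub w hw
      rcases Nat.eq_zero_or_pos k with rfl | hkpos
      · have : t % 2 = 0 := by
          by_contra h
          exact absurd (hk1 (by omega)) (by omega)
        rw [he, if_pos this]
      · rcases eq_or_lt_of_le hk with rfl | hklt
        · have : t % 2 = 1 := by
            by_contra h
            exact absurd (hk0 (by omega)) (by omega)
          rw [he, if_neg (by omega)]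
        · exact absurd hwH (hint k hkpos hklt)
    have hdisj : Disjoint M.support P.support := by
      rw [hMmatch.support_eq_verts, hPmatch.support_eq_verts, Set.disjoint_left]
      intro w hw hw'
      rw [hMverts] at hw
      exact hw.2 (hPinH w hw' hw.1)
    have hPle : P ≤ H' := by
      constructor
      · intro w hw
        obtain ⟨k, hk, hkt, hk0, hk1, rfl⟩ := hPverts_sub w hw
        rw [hverts]
        rcases Nat.eq_zero_or_pos k with rfl | hkpos
        · exact Or.inl h0
        · rcases eq_or_lt_of_le hk with rfl | hklt
          · exact Or.inl hm
          · exact Or.inr ⟨k, hkpos, hklt, rfl⟩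
      · intro a b hab
        rw [chainSub_adj] at hab
        obtain ⟨i, hi, hab⟩ := hab
        exact (hAdj a b).2 (Or.inr ⟨i, hIm i hi, hab⟩)
    refine ⟨M ⊔ P, sup_le (hMle.trans hHle) hPle, hMmatch.sup hPmatch hdisj, ?_⟩
    rw [Subgraph.verts_sup, hMverts, hverts]
    ext z
    simp only [Set.mem_union, Set.mem_diff, Set.mem_singleton_iff, Set.mem_setOf_eq]
    constructor
    · rintro (⟨hz, hze⟩ | hz)
      · exact ⟨Or.inl hz, fun h => hint t ht0 htm (h ▸ hz)⟩
      · obtain ⟨k, hk, hkt, hk0, hk1, rfl⟩ := hPverts_sub z hz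
        refine ⟨?_, hwne k hk hkt⟩
        rcases Nat.eq_zero_or_pos k with rfl | hkpos
        · exact Or.inl h0
        · rcases eq_or_lt_of_le hk with rfl | hklt
          · exact Or.inl hm
          · exact Or.inr ⟨k, hkpos, hklt, rfl⟩
    · rintro ⟨hz | ⟨s, hs0, hsm, rfl⟩, hzt⟩
      · by_cases hze : z = p e
        · right
          rw [chainSub_verts]
          subst hze
          by_cases ht2 : t % 2 = 0
          · have he0 : e = 0 := by rw [he, if_pos ht2]
            rw [he0]
            exact ⟨0, ⟨by omega, Or.inl ⟨by omega, by omega⟩⟩, Or.inl rfl⟩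
          · have hem : e = m := by rw [he, if_neg ht2]
            rw [hem]
            refine ⟨m - 1, ⟨by omega, Or.inr ⟨by omega, by omega⟩⟩, Or.inr ?_⟩
            rw [show m - 1 + 1 = m by omega]
        · exact Or.inl ⟨hz, hze⟩
      · -- z = p s, internal, s ≠ t as index?
        have hst : s ≠ t := fun h => hzt (by rw [h])
        right
        rw [chainSub_verts]
        rcases Nat.lt_or_ge s t with hlt | hge
        · by_cases hpar : s % 2 = t % 2
          · exact ⟨s, ⟨by omega, Or.inl ⟨hlt, hpar⟩⟩, Or.inl rfl⟩
          · exact ⟨s - 1, ⟨by omega, Or.inl ⟨by omega, by omega⟩⟩,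
              Or.inr (by rw [show s - 1 + 1 = s by omega])⟩
        · by_cases hpar : s % 2 = t % 2
          · exact ⟨s - 1, ⟨by omega, Or.inr ⟨by omega, by omega⟩⟩,
              Or.inr (by rw [show s - 1 + 1 = s by omega])⟩
          · exact ⟨s, ⟨by omega, Or.inr ⟨by omega, hpar⟩⟩, Or.inl rfl⟩


lemma factorCritical_of_decomp {r : ℕ} {v : V}
    (h : HasOddEarDecomposition G r v) : IsFactorCritical G := by
  obtain ⟨Hs, hv0, hadj0, hstep, htop⟩ := h
  have hfc : ∀ i ≤ r, FCSub (Hs i) := by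
    intro i
    induction i with
    | zero =>
      intro _ u hu
      rw [hv0] at hu
      refine ⟨⊥, bot_le, ?_, ?_⟩
      · intro w hw
        simp [Subgraph.verts_bot] at hw
      · rw [hv0, hu]
        simp
    | succ n ih =>
      intro hn
      exact fc_step (hstep n (by omega)) (ih (by omega))
  have htopfc : FCSub (⊤ : G.Subgraph) := htop ▸ hfc r le_rfl
  intro u
  obtain ⟨M, _, hMmatch, hMverts⟩ := htopfc u (by trivial)
  have hvertsmem : ∀ w : V, w ≠ u → w ∈ M.verts := by
    intro w hw
    rw [hMverts]
    exact ⟨trivial, hw⟩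
  have hne : ∀ {a b : V}, M.Adj a b → b ≠ u := by
    intro a b hab h
    have : b ∈ M.verts := M.edge_vert (M.adj_symm hab)
    rw [hMverts, h] at this
    exact this.2 rfl
  refine ⟨⟨Set.univ, fun a b => M.Adj a.1 b.1, ?_, fun _ => trivial, ?_⟩, ?_, fun a => trivial⟩
  · intro a b hab
    exact M.adj_sub hab
  · constructor
    intro a b hab
    exact M.adj_symm hab
  · intro a ha
    obtain ⟨w, hw, huniq⟩ := hMmatch (hvertsmem a.1 a.2)
    refine ⟨⟨w, hne hw⟩, hw, ?_⟩
    intro b hb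
    exact Subtype.ext (huniq b.1 hb)



/-- The alternating walk: start at `y`, follow `fM`, then `fN`, alternately. -/
def walkSeq (fM fN : V → V) (y : V) : ℕ → V
  | 0 => y
  | (t + 1) => if t % 2 = 0 then fM (walkSeq fM fN y t) else fN (walkSeq fM fN y t)

section Walk

variable {fM fN : V → V} {y v : V} {S : Set V}

lemma walkSeq_stepM (t : ℕ) (h : t % 2 = 0) :
    walkSeq fM fN y (t + 1) = fM (walkSeq fM fN y t) := by
  simp [walkSeq, h]

lemma walkSeq_stepN (t : ℕ) (h : t % 2 = 1) :
    walkSeq fM fN y (t + 1) = fN (walkSeq fM fN y t) := by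
  simp [walkSeq, h]

lemma walkSeq_in {fM fN : V → V} {y : V} (t : ℕ) (h : 1 ≤ t) :
    walkSeq fM fN y t =
      if (t - 1) % 2 = 0 then fM (walkSeq fM fN y (t - 1)) else fN (walkSeq fM fN y (t - 1)) := by
  obtain ⟨r, rfl⟩ : ∃ r, t = r + 1 := ⟨t - 1, by omega⟩
  simp only [Nat.add_sub_cancel]
  by_cases h : r % 2 = 0
  · rw [if_pos h]; exact walkSeq_stepM r h
  · rw [if_neg h]; exact walkSeq_stepN r (by omega)


variable (hinvM : ∀ x, fM (fM x) = x) (hinvN : ∀ x, fN (fN x) = x)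
    (hfixM : ∀ x, fM x = x → x = v) (hfixN : ∀ x, fN x = x → x = y)
    (hNy : fN y = y) (hvS : v ∈ S) (hyS : y ∉ S)

include hinvM hinvN hfixM hfixN hNy hvS hyS in
lemma walk_inj : ∀ t, (∀ r, r < t → walkSeq fM fN y r ∉ S) →
    ∀ s, s < t → walkSeq fM fN y s ≠ walkSeq fM fN y t := by
  set u : ℕ → V := walkSeq fM fN y with hu
  intro t
  induction t using Nat.strong_induction_on with
  | _ t IH =>
  intro hS s hst heq
  rcases eq_or_lt_of_le (Nat.succ_le_of_lt hst) with hcons | hlt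
  · -- t = s + 1
    subst hcons
    by_cases hp : s % 2 = 0
    · have h1 : u (s + 1) = fM (u s) := walkSeq_stepM s hp
      have h2 : fM (u s) = u s := by rw [← h1, ← heq]
      have := hfixM _ h2
      exact hS s hst (this ▸ hvS)
    · have h1 : u (s + 1) = fN (u s) := walkSeq_stepN s (by omega)
      have h2 : fN (u s) = u s := by rw [← h1, ← heq]
      have h3 : u s = y := hfixN _ h2
      have hs1 : 0 < s := by
        rcases Nat.eq_zero_or_pos s with rfl | h
        · omega
        · exact h
      exact IH s hst (fun r hr => hS r (by omega)) 0 hs1 (h3 ▸ rfl)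
  · -- s + 1 < t
    have ht2 : 2 ≤ t := by omega
    have hin : u t = if (t - 1) % 2 = 0 then fM (u (t - 1)) else fN (u (t - 1)) :=
      walkSeq_in t (by omega)
    rcases Nat.eq_zero_or_pos s with rfl | hs0
    · -- s = 0 : u t = y
      by_cases h : (t - 1) % 2 = 0
      · rw [if_pos h] at hin
        have h2 : u (t - 1) = fM (u t) := by rw [hin, hinvM]
        have h3 : fM (u t) = u 1 := by
          rw [← heq]
          exact (walkSeq_stepM 0 rfl).symm
        have h4 : u (t - 1) = u 1 := by rw [h2, h3]
        have h5 : 1 < t - 1 := by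
          rcases Nat.lt_or_ge 1 (t - 1) with h' | h'
          · exact h'
          · exfalso
            have : t - 1 = 1 := by omega
            rw [this] at h
            omega
        exact IH (t - 1) (by omega) (fun r hr => hS r (by omega)) 1 h5 h4.symm
      · rw [if_neg h] at hin
        have h2 : u (t - 1) = fN (u t) := by rw [hin, hinvN]
        have h3 : fN (u t) = y := by rw [← heq]; exact hNy
        have h4 : u (t - 1) = u 0 := by rw [h2, h3]; rfl
        exact IH (t - 1) (by omega) (fun r hr => hS r (by omega)) 0 (by omega) h4.symm
    · -- 0 < s
      have hins : u s = if (s - 1) % 2 = 0 then fM (u (s - 1)) else fN (u (s - 1)) :=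
        walkSeq_in s (by omega)
      by_cases hpar : (s - 1) % 2 = (t - 1) % 2
      · -- same parity incoming
        have h4 : u (s - 1) = u (t - 1) := by
          by_cases h : (s - 1) % 2 = 0
          · rw [if_pos h] at hins
            rw [if_pos (hpar ▸ h)] at hin
            have := congrArg fM (hins.symm.trans (heq.trans hin) : fM (u (s-1)) = fM (u (t-1)))
            rwa [hinvM, hinvM] at this
            
          · rw [if_neg h] at hins
            rw [if_neg (by omega)] at hin
            have := congrArg fN (hins.symm.trans (heq.trans hin) : fN (u (s-1)) = fN (u (t-1)))
            rwa [hinvN, hinvN] at this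
        exact IH (t - 1) (by omega) (fun r hr => hS r (by omega)) (s - 1) (by omega) h4
      · -- opposite parity: s % 2 = (t-1) % 2
        have hspar : s % 2 = (t - 1) % 2 := by omega
        have hout : u (s + 1) = if s % 2 = 0 then fM (u s) else fN (u s) := by
          by_cases h : s % 2 = 0
          · rw [if_pos h]; exact walkSeq_stepM _ h
          · rw [if_neg h]; exact walkSeq_stepN _ (by omega)
        have h4 : u (s + 1) = u (t - 1) := by
          by_cases h : s % 2 = 0
          · rw [if_pos h] at hout
            rw [if_pos (by omega)] at hin
            rw [hout, heq, hin, hinvM]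
          · rw [if_neg h] at hout
            rw [if_neg (by omega)] at hin
            rw [hout, heq, hin, hinvN]
        rcases Nat.lt_trichotomy (s + 1) (t - 1) with h' | h' | h'
        · exact IH (t - 1) (by omega) (fun r hr => hS r (by omega)) (s + 1) h' h4
        · omega
        · omega

include hinvM hinvN hfixM hfixN hNy hvS hyS in
lemma walk_hits [Finite V] : ∃ t, walkSeq fM fN y t ∈ S := by
  by_contra h
  push_neg at h
  obtain ⟨a, b, hne, heq⟩ := Finite.exists_ne_map_eq_of_infinite (walkSeq fM fN y)
  rcases Nat.lt_trichotomy a b with h' | h' | h'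
  · exact walk_inj hinvM hinvN hfixM hfixN hNy hvS hyS b (fun r _ => h r) a h' heq
  · exact hne h'
  · exact walk_inj hinvM hinvN hfixM hfixN hNy hvS hyS a (fun r _ => h r) b h' heq.symm

end Walk

/-- Parity: if an involution matches every vertex of `S` within `S` along graph
edges, then `S` has even cardinality. -/
lemma matching_parity [Fintype V] (f : V → V) (S : Set V)
    (hinv : ∀ x, f (f x) = x) (hS : ∀ x ∈ S, f x ∈ S ∧ G.Adj x (f x)) :
    Even S.ncard := by
  classical
  set N : G.Subgraph :=
    { verts := S
      Adj := fun a b => a ∈ S ∧ b ∈ S ∧ (b = f a ∨ a = f b)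
      adj_sub := by
        rintro a b ⟨ha, hb, rfl | rfl⟩
        · exact (hS a ha).2
        · exact ((hS b hb).2).symm
      edge_vert := by
        rintro a b ⟨ha, _, _⟩
        exact ha
      symm := by
        constructor
        rintro a b ⟨ha, hb, h | h⟩
        · exact ⟨hb, ha, Or.inr h⟩
        · exact ⟨hb, ha, Or.inl h⟩ } with hN
  have hmatch : N.IsMatching := by
    intro a ha
    refine ⟨f a, ⟨ha, (hS a ha).1, Or.inl rfl⟩, ?_⟩
    rintro b ⟨_, hb, rfl | rfl⟩
    · rfl
    · rw [hinv]
  haveI : Fintype (N.verts : Set V) := Fintype.ofFinite _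
  have h4 : Even N.verts.ncard := by
    rw [Set.ncard_eq_toFinset_card']
    exact hmatch.even_card
  exact h4


/-- Add the ear given by `p 0, …, p m` to `H`. -/
def earExtSub (H : G.Subgraph) (m : ℕ) (p : ℕ → V)
    (hadj : ∀ i < m, G.Adj (p i) (p (i + 1))) (h0 : p 0 ∈ H.verts) (hm : p m ∈ H.verts) :
    G.Subgraph where
  verts := H.verts ∪ {w | ∃ i, 0 < i ∧ i < m ∧ w = p i}
  Adj x y := H.Adj x y ∨ ∃ i < m, (x = p i ∧ y = p (i + 1)) ∨ (y = p i ∧ x = p (i + 1))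
  adj_sub := by
    rintro x y (h | ⟨i, him, ⟨rfl, rfl⟩ | ⟨rfl, rfl⟩⟩)
    · exact H.adj_sub h
    · exact hadj i him
    · exact (hadj i him).symm
  edge_vert := by
    rintro x y (h | ⟨i, him, ⟨rfl, rfl⟩ | ⟨rfl, rfl⟩⟩)
    · exact Or.inl (H.edge_vert h)
    · rcases Nat.eq_zero_or_pos i with rfl | hi
      · exact Or.inl h0
      · exact Or.inr ⟨i, hi, him, rfl⟩
    · rcases eq_or_lt_of_le (Nat.succ_le_of_lt him) with hi | hi
      · exact Or.inl (by rw [show i + 1 = m from hi]; exact hm)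
      · exact Or.inr ⟨i + 1, by omega, hi, rfl⟩
  symm := by
    constructor
    rintro x y (h | ⟨i, him, h⟩)
    · exact Or.inl (H.adj_symm h)
    · exact Or.inr ⟨i, him, h.symm⟩

lemma earExtSub_isEar {H : G.Subgraph} {m : ℕ} {p : ℕ → V}
    (hadj : ∀ i < m, G.Adj (p i) (p (i + 1))) (h0 : p 0 ∈ H.verts) (hm : p m ∈ H.verts)
    (hodd : Odd m) (hint : ∀ i, 0 < i → i < m → p i ∉ H.verts)
    (hdist : ∀ i j, 0 < i → i < j → j < m → p i ≠ p j) (hfirst : ¬ H.Adj (p 0) (p 1)) :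
    IsEarExtension H (earExtSub H m p hadj h0 hm) :=
  ⟨m, p, hodd, hadj, h0, hm, hint, hdist, hfirst, rfl, fun _ _ => Iff.rfl⟩

lemma exists_step [Fintype V] (hfc : IsFactorCritical G) {v : V} {fM : V → V}
    (hMv : fM v = v) (hinvM : ∀ x, fM (fM x) = x) (hadjM : ∀ x, x ≠ v → G.Adj x (fM x))
    {H : G.Subgraph} (hvH : v ∈ H.verts)
    (hInv : ∀ z ∈ H.verts, z ≠ v → H.Adj z (fM z)) (hne : H ≠ ⊤) :
    ∃ H' : G.Subgraph, IsEarExtension H H' ∧ v ∈ H'.verts ∧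
      (∀ z ∈ H'.verts, z ≠ v → H'.Adj z (fM z)) ∧
      (∀ c d, H.Adj c d → H'.Adj c d) ∧
      ∃ a b, G.Adj a b ∧ ¬ H.Adj a b ∧ H'.Adj a b := by
  classical
  have hfixM : ∀ x, fM x = x → x = v := by
    intro x h
    by_contra hx
    exact G.irrefl (h ▸ hadjM x hx)
  by_cases hin : ∃ a b, G.Adj a b ∧ a ∈ H.verts ∧ b ∈ H.verts ∧ ¬ H.Adj a b
  · -- add a single edge inside H
    obtain ⟨a, b, hab, haH, hbH, hnadj⟩ := hin
    set p : ℕ → V := fun i => if i = 0 then a else b with hp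
    have hp0 : p 0 = a := rfl
    have hp1 : p 1 = b := rfl
    have hadj1 : ∀ i < 1, G.Adj (p i) (p (i + 1)) := by
      intro i hi
      have : i = 0 := by omega
      subst this
      rw [hp0, hp1]
      exact hab
    refine ⟨earExtSub H 1 p hadj1 (hp0 ▸ haH) (hp1 ▸ hbH),
      earExtSub_isEar hadj1 (hp0 ▸ haH) (hp1 ▸ hbH) odd_one
        (fun i h1 h2 => absurd h2 (by omega)) (fun i j h1 h2 h3 => absurd h3 (by omega))
        (by rw [hp0, hp1]; exact hnadj), Or.inl hvH, ?_, fun c d h => Or.inl h,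
      a, b, hab, hnadj, Or.inr ⟨0, by omega, Or.inl ⟨hp0.symm, hp1.symm⟩⟩⟩
    rintro z (hz | ⟨i, hi0, hi1, rfl⟩) hzv
    · exact Or.inl (hInv z hz hzv)
    · omega
  · by_cases hcross : ∃ x y, G.Adj x y ∧ x ∈ H.verts ∧ y ∉ H.verts
    · -- the main case: grow an ear along an alternating walk
      obtain ⟨x, y, hxy, hxH, hyH⟩ := hcross
      obtain ⟨fN, hNy, hinvN, hadjN⟩ := exists_matchFun hfc y
      have hfixN : ∀ z, fN z = z → z = y := by
        intro z h
        by_contra hz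
        exact G.irrefl (h ▸ hadjN z hz)
      set u : ℕ → V := walkSeq fM fN y with hu
      have hu0 : u 0 = y := rfl
      have hhit : ∃ t, u t ∈ H.verts :=
        walk_hits hinvM hinvN hfixM hfixN hNy hvH hyH
      set j := Nat.find hhit with hjdef
      have hjS : u j ∈ H.verts := Nat.find_spec hhit
      have hbefore : ∀ r, r < j → u r ∉ H.verts := fun r hr => Nat.find_min hhit hr
      have hj0 : j ≠ 0 := by
        intro h
        rw [h, hu0] at hjS
        exact hyH hjS
      have hinj : ∀ t, t < j → ∀ s, s < t → u s ≠ u t := fun t htj =>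
        walk_inj hinvM hinvN hfixM hfixN hNy hvH hyH t
          (fun r hr => hbefore r (hr.trans htj))
      have hjpar : j % 2 = 0 := by
        by_contra hpar
        have hj1 : 1 ≤ j := by omega
        have h1 : u j = fM (u (j - 1)) := by
          have := walkSeq_in (fM := fM) (fN := fN) (y := y) j hj1
          rwa [if_pos (by omega : (j - 1) % 2 = 0)] at this
        have h2 : fM (u j) = u (j - 1) := by rw [h1, hinvM]
        by_cases hv : u j = v
        · rw [hv, hMv] at h2
          exact hbefore (j - 1) (by omega) (h2 ▸ hvH)
        · have h3 := hInv (u j) hjS hv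
          have h4 : fM (u j) ∈ H.verts := H.edge_vert (H.adj_symm h3)
          rw [h2] at h4
          exact hbefore (j - 1) (by omega) h4
      have hGadj : ∀ r, r < j → G.Adj (u r) (u (r + 1)) := by
        intro r hr
        by_cases hpar : r % 2 = 0
        · rw [show u (r + 1) = fM (u r) from walkSeq_stepM r hpar]
          exact hadjM (u r) (fun h => hbefore r hr (h ▸ hvH))
        · rw [show u (r + 1) = fN (u r) from walkSeq_stepN r (by omega)]
          refine hadjN (u r) (fun h => ?_)
          have h0r : 0 < r := by omega
          exact hinj r hr 0 h0r (by rw [hu0, h])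
      set m := j + 1 with hmdef
      set p : ℕ → V := fun i => if i = 0 then x else u (i - 1) with hp
      have hp0 : p 0 = x := rfl
      have hpi : ∀ i, i ≠ 0 → p i = u (i - 1) := fun i hi => if_neg hi
      have hadj' : ∀ i < m, G.Adj (p i) (p (i + 1)) := by
        intro i hi
        rcases Nat.eq_zero_or_pos i with rfl | hipos
        · rw [hp0, hpi 1 one_ne_zero]
          exact hxy
        · rw [hpi i (by omega), hpi (i + 1) (by omega),
            show i + 1 - 1 = (i - 1) + 1 by omega]
          exact hGadj (i - 1) (by omega)
      have h0' : p 0 ∈ H.verts := by rw [hp0]; exact hxH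
      have hm' : p m ∈ H.verts := by
        rw [hpi m (by omega), show m - 1 = j by omega]
        exact hjS
      have hint' : ∀ i, 0 < i → i < m → p i ∉ H.verts := by
        intro i h1 h2
        rw [hpi i (by omega)]
        exact hbefore (i - 1) (by omega)
      have hdist' : ∀ i i', 0 < i → i < i' → i' < m → p i ≠ p i' := by
        intro i i' h1 h2 h3
        rw [hpi i (by omega), hpi i' (by omega)]
        exact hinj (i' - 1) (by omega) (i - 1) (by omega)
      have hfirst' : ¬ H.Adj (p 0) (p 1) := by
        rw [hpi 1 one_ne_zero]
        intro h
        exact hbefore 0 (by omega) (H.edge_vert (H.adj_symm h))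
      have hodd' : Odd m := Nat.odd_iff.mpr (by omega)
      refine ⟨earExtSub H m p hadj' h0' hm',
        earExtSub_isEar hadj' h0' hm' hodd' hint' hdist' hfirst', Or.inl hvH, ?_,
        fun c d h => Or.inl h,
        x, y, hxy, (fun h => hyH (H.edge_vert (H.adj_symm h))), Or.inr ⟨0, by omega,
          Or.inl ⟨hp0.symm, by rw [hpi (0 + 1) one_ne_zero]; exact hu0.symm⟩⟩⟩
      rintro z (hz | ⟨i, hi0, him, rfl⟩) hzv
      · exact Or.inl (hInv z hz hzv)
      · have hpiu : p i = u (i - 1) := hpi i (by omega)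
        set t := i - 1 with htdef
        have hti : i = t + 1 := by omega
        have htj : t < j := by omega
        by_cases hpar : t % 2 = 0
        · have h1 : fM (u t) = u (t + 1) := (walkSeq_stepM t hpar).symm
          refine Or.inr ⟨t + 1, by omega, Or.inl ⟨?_, ?_⟩⟩
          · rw [hpiu, hpi (t + 1) (by omega)]
            congr 1 <;> omega
          · rw [hpiu, hpi (t + 2) (by omega), htdef, h1]
            congr 1 <;> omega
        · have ht1 : 1 ≤ t := by omega
          have h1 : u t = fM (u (t - 1)) := by
            have := walkSeq_in (fM := fM) (fN := fN) (y := y) t ht1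
            rwa [if_pos (by omega : (t - 1) % 2 = 0)] at this
          have h2 : fM (u t) = u (t - 1) := by rw [h1, hinvM]
          refine Or.inr ⟨t, by omega, Or.inr ⟨?_, ?_⟩⟩
          · rw [hpiu, hpi t (by omega), htdef, h2]
          · rw [hpiu, hpi (t + 1) (by omega)]
            congr 1 <;> omega
    · -- stuck case is impossible
      exfalso
      push_neg at hin hcross
      have hcross' : ∀ z ∈ H.verts, ∀ w, G.Adj z w → w ∈ H.verts := by
        intro z hz w hzw
        exact hcross z w hzw hz
      have hverts : H.verts = Set.univ := by
        by_contra h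
        obtain ⟨w, hw⟩ : ∃ w, w ∉ H.verts := by
          by_contra h'
          push_neg at h'
          exact h (Set.eq_univ_of_forall h')
        obtain ⟨fN, hNw, hinvN, hadjN⟩ := exists_matchFun hfc w
        have heven1 : Even (H.verts.ncard) := by
          refine matching_parity (G := G) fN H.verts hinvN (fun z hz => ?_)
          have hzw : z ≠ w := fun h => hw (h ▸ hz)
          exact ⟨hcross' z hz (fN z) (hadjN z hzw), hadjN z hzw⟩
        have heven2 : Even ((H.verts \ {v}).ncard) := by
          refine matching_parity (G := G) fM (H.verts \ {v}) hinvM (fun z hz => ?_)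
          have hzv : z ≠ v := hz.2
          refine ⟨⟨H.edge_vert (H.adj_symm (hInv z hz.1 hzv)), ?_⟩, hadjM z hzv⟩
          intro hfzv
          have : z = v := by
            have := congrArg fM (Set.mem_singleton_iff.mp hfzv)
            rwa [hinvM, hMv] at this
          exact hzv this
        have hcard : (H.verts \ {v}).ncard + 1 = H.verts.ncard :=
          Set.ncard_diff_singleton_add_one hvH (Set.toFinite _)
        rw [Nat.even_iff] at heven1 heven2
        omega
      apply hne
      apply SimpleGraph.Subgraph.ext
      · rw [hverts]; rfl
      · ext a b
        constructor
        · exact fun h => H.adj_sub h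
        · intro h
          exact hin a b h (by rw [hverts]; trivial) (by rw [hverts]; trivial)


def Decomp (G : SimpleGraph V) (v : V) (K : G.Subgraph) : Prop :=
  ∃ (r : ℕ) (Hs : ℕ → G.Subgraph),
    (Hs 0).verts = {v} ∧ (∀ x y, ¬ (Hs 0).Adj x y) ∧
    (∀ i < r, IsEarExtension (Hs i) (Hs (i + 1))) ∧ Hs r = K

lemma decomp_extend {v : V} {K K' : G.Subgraph} (h : Decomp G v K)
    (hext : IsEarExtension K K') : Decomp G v K' := by
  classical
  obtain ⟨r, Hs, h0, hA, hstep, hend⟩ := h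
  refine ⟨r + 1, Function.update Hs (r + 1) K', ?_, ?_, ?_, ?_⟩
  · rw [Function.update_of_ne (by omega)]; exact h0
  · rw [Function.update_of_ne (by omega)]; exact hA
  · intro i hi
    rcases Nat.lt_or_ge i r with hir | hir
    · rw [Function.update_of_ne (by omega), Function.update_of_ne (by omega)]
      exact hstep i hir
    · have : i = r := by omega
      subst this
      rw [Function.update_of_ne (by omega), Function.update_self, hend]
      exact hext
  · rw [Function.update_self]

lemma decomp_top [Fintype V] (hfc : IsFactorCritical G) (v : V) :
    ∃ r, HasOddEarDecomposition G r v := by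
  classical
  obtain ⟨fM, hMv, hinvM, hadjM⟩ := exists_matchFun hfc v
  suffices h : ∀ n (H : G.Subgraph), (G.edgeSet \ H.edgeSet).ncard = n →
      v ∈ H.verts → (∀ z ∈ H.verts, z ≠ v → H.Adj z (fM z)) → Decomp G v H →
      ∃ r, HasOddEarDecomposition G r v by
    refine h _ (SimpleGraph.singletonSubgraph G v) rfl rfl ?_ ?_
    · intro z hz hzv
      exact absurd hz hzv
    · exact ⟨0, fun _ => SimpleGraph.singletonSubgraph G v, rfl, fun x y h => h,
        fun i hi => absurd hi (by omega), rfl⟩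
  intro n
  induction n using Nat.strong_induction_on with
  | _ n IH =>
  intro H hcard hvH hInv hdec
  by_cases htop : H = ⊤
  · subst htop
    exact ⟨hdec.choose, hdec.choose_spec⟩
  · obtain ⟨H', hext, hvH', hInv', hmono, a, b, hab, hnadj, hadj'⟩ :=
      exists_step hfc hMv hinvM hadjM hvH hInv htop
    have hedge : H.edgeSet ⊆ H'.edgeSet := by
      intro e
      induction e with
      | h c d => exact fun h => hmono c d h
    have hsub : G.edgeSet \ H'.edgeSet ⊂ G.edgeSet \ H.edgeSet := by
      constructor
      · exact fun e he => ⟨he.1, fun hH => he.2 (hedge hH)⟩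
      · intro hcon
        have h1 : s(a, b) ∈ G.edgeSet \ H.edgeSet := ⟨hab, hnadj⟩
        have h2 := hcon h1
        exact h2.2 hadj'
    have hlt : (G.edgeSet \ H'.edgeSet).ncard < n :=
      hcard ▸ Set.ncard_lt_ncard hsub (Set.toFinite _)
    exact IH _ hlt H' rfl hvH' hInv' (decomp_extend hdec hext)


end EarDecompProof

/-- A finite (nonempty) graph is factor-critical if and only if it admits an odd
ear decomposition; moreover, if `G` is factor-critical then for every vertex `v`
there is an odd ear decomposition starting from `v`. -/
theorem factorCritical_iff_oddEarDecomposition {V : Type*} [Fintype V] [Nonempty V]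
    (G : SimpleGraph V) :
    (IsFactorCritical G ↔ ∃ r v, HasOddEarDecomposition G r v) ∧
    (IsFactorCritical G → ∀ v : V, ∃ r, HasOddEarDecomposition G r v) := by
  constructor
  · constructor
    · intro hfc
      obtain ⟨v⟩ := (inferInstance : Nonempty V)
      obtain ⟨r, h⟩ := EarDecompProof.decomp_top hfc v
      exact ⟨r, v, h⟩
    · rintro ⟨r, v, h⟩
      exact EarDecompProof.factorCritical_of_decomp h
  · intro hfc v
    exact EarDecompProof.decomp_top hfc v
end

section
/- For every finite graph G, each connected component of the subgraph of G induced on D(G) is factor-critical. -/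
/-- A maximum matching of `G`: a matching with the greatest possible number of
edges. -/
def IsMaximumMatching {V : Type*} (G : SimpleGraph V) (M : G.Subgraph) : Prop :=
  M.IsMatching ∧ ∀ M' : G.Subgraph, M'.IsMatching → M'.edgeSet.ncard ≤ M.edgeSet.ncard

/-- `D(G)`: the set of vertices left unmatched by some maximum matching of `G`. -/
def Dset {V : Type*} (G : SimpleGraph V) : Set V :=
  {v | ∃ M : G.Subgraph, IsMaximumMatching G M ∧ v ∉ M.verts}

/-- `A(G)`: the set of vertices not in `D(G)` having a neighbor in `D(G)`. -/
def Aset {V : Type*} (G : SimpleGraph V) : Set V :=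
  {v | v ∉ Dset G ∧ ∃ w ∈ Dset G, G.Adj v w}

/-- `C(G) = V(G) \ (D(G) ∪ A(G))`. -/
def Cset {V : Type*} (G : SimpleGraph V) : Set V :=
  (Dset G ∪ Aset G)ᶜ

open SimpleGraph Set
open scoped symmDiff

namespace GE

variable {V : Type*} [Fintype V] (G : SimpleGraph V)

instance : Finite (G.Subgraph) := by
  classical
  exact Finite.of_injective (fun M => (M.verts, M.Adj))
    (fun M N h => by
      obtain ⟨h1, h2⟩ := Prod.mk.injEq _ _ _ _ ▸ h
      exact SimpleGraph.Subgraph.ext h1 h2)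

/-- A matching within vertex set `s`. -/
def MW (s : Set V) (M : G.Subgraph) : Prop := M.IsMatching ∧ M.verts ⊆ s

/-- A maximum matching within vertex set `s`. -/
def MaxW (s : Set V) (M : G.Subgraph) : Prop :=
  MW G s M ∧ ∀ M', MW G s M' → M'.edgeSet.ncard ≤ M.edgeSet.ncard

/-- Vertices of `s` exposed by some maximum matching within `s`. -/
def DW (s : Set V) : Set V := {v | v ∈ s ∧ ∃ M, MaxW G s M ∧ v ∉ M.verts}

variable {G}

lemma bot_mw (s : Set V) : MW G s ⊥ := by
  constructor
  · intro v hv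
    simp only [SimpleGraph.Subgraph.verts_bot, Set.mem_empty_iff_false] at hv
  · simp

lemma exists_maxW (s : Set V) : ∃ M, MaxW G s M := by
  classical
  obtain ⟨M, hM, hmax⟩ := Set.exists_max_image {M : G.Subgraph | MW G s M}
    (fun M => M.edgeSet.ncard) (Set.toFinite _) ⟨⊥, bot_mw s⟩
  exact ⟨M, ⟨hM, fun M' h => hmax M' h⟩⟩

lemma exists_maxW_best (s : Set V) (f : G.Subgraph → ℕ) {P : G.Subgraph → Prop}
    (hP : ∃ M, MaxW G s M ∧ P M) :
    ∃ M, (MaxW G s M ∧ P M) ∧ ∀ M', MaxW G s M' → P M' → f M' ≤ f M := by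
  classical
  obtain ⟨M, hM, hmax⟩ := Set.exists_max_image {M : G.Subgraph | MaxW G s M ∧ P M}
    f (Set.toFinite _) hP
  exact ⟨M, hM, fun M' h1 h2 => hmax M' ⟨h1, h2⟩⟩

set_option linter.unusedSectionVars false

section SymmDiff

variable {M N : G.Subgraph} {u : V}

lemma symmdiff_adj {x y : V} :
    (M.spanningCoe ∆ N.spanningCoe).Adj x y ↔
      (M.Adj x y ∧ ¬ N.Adj x y) ∨ (N.Adj x y ∧ ¬ M.Adj x y) := by
  simp [symmDiff_def]

lemma comp_closed (c : (M.spanningCoe ∆ N.spanningCoe).ConnectedComponent)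
    {x y : V} (hx : x ∈ c.supp) (h : (M.spanningCoe ∆ N.spanningCoe).Adj x y) :
    y ∈ c.supp := by
  rw [ConnectedComponent.mem_supp_iff] at hx ⊢
  rw [← hx]
  exact ConnectedComponent.sound h.symm.reachable

lemma no_common_edge (hM : M.IsMatching) (hN : N.IsMatching) (hu : u ∉ M.verts)
    {x y : V}
    (hx : x ∈ ((M.spanningCoe ∆ N.spanningCoe).connectedComponentMk u).supp)
    (hMxy : M.Adj x y) (hNxy : N.Adj x y) : False := by
  rcases eq_or_ne x u with rfl | hne
  · exact hu (M.edge_vert hMxy)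
  · rw [ConnectedComponent.mem_supp_iff, ConnectedComponent.eq] at hx
    obtain ⟨w⟩ := hx
    cases w with
    | nil => exact hne rfl
    | cons hadj _ =>
      rename_i z _
      rcases symmdiff_adj.mp hadj with ⟨h1, h2⟩ | ⟨h1, h2⟩
      · obtain ⟨w', hw', huniq⟩ := hM (M.edge_vert hMxy)
        rw [huniq z h1] at h2
        rw [huniq y hMxy] at hNxy
        exact h2 hNxy
      · obtain ⟨w', hw', huniq⟩ := hN (N.edge_vert hNxy)
        rw [huniq z h1] at h2
        rw [huniq y hNxy] at hMxy
        exact h2 hMxy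

lemma matching_partner_subsingleton (hM : M.IsMatching) (x : V) :
    {y | M.Adj x y}.Subsingleton := by
  intro a ha b hb
  obtain ⟨w, hw, huniq⟩ := hM (M.edge_vert ha)
  rw [huniq a ha, huniq b hb]

lemma symmdiff_deg_le_two (hM : M.IsMatching) (hN : N.IsMatching) (x : V) :
    ((M.spanningCoe ∆ N.spanningCoe).neighborSet x).ncard ≤ 2 := by
  have hsub : (M.spanningCoe ∆ N.spanningCoe).neighborSet x ⊆
      {y | M.Adj x y} ∪ {y | N.Adj x y} := by
    intro y hy
    rcases symmdiff_adj.mp hy with ⟨h, _⟩ | ⟨h, _⟩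
    · exact Or.inl h
    · exact Or.inr h
  calc ((M.spanningCoe ∆ N.spanningCoe).neighborSet x).ncard
      ≤ ({y | M.Adj x y} ∪ {y | N.Adj x y}).ncard := Set.ncard_le_ncard hsub (Set.toFinite _)
    _ ≤ {y | M.Adj x y}.ncard + {y | N.Adj x y}.ncard := Set.ncard_union_le _ _
    _ ≤ 1 + 1 := Nat.add_le_add
        ((Set.ncard_le_one (Set.toFinite _)).mpr (matching_partner_subsingleton hM x))
        ((Set.ncard_le_one (Set.toFinite _)).mpr (matching_partner_subsingleton hN x))

lemma symmdiff_deg_le_one (hN : N.IsMatching) (hu : u ∉ M.verts) :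
    ((M.spanningCoe ∆ N.spanningCoe).neighborSet u).ncard ≤ 1 := by
  have hsub : (M.spanningCoe ∆ N.spanningCoe).neighborSet u ⊆ {y | N.Adj u y} := by
    intro y hy
    rcases symmdiff_adj.mp hy with ⟨h, _⟩ | ⟨h, _⟩
    · exact absurd (M.edge_vert h) hu
    · exact h
  exact le_trans (Set.ncard_le_ncard hsub (Set.toFinite _))
    ((Set.ncard_le_one (Set.toFinite _)).mpr (matching_partner_subsingleton hN u))

end SymmDiff

section Leaves

variable {S : SimpleGraph V}

/-- Internal vertex of a path has two distinct neighbors on the path's support. -/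
lemma internal_two_neighbors {a b t : V} (p : S.Walk a b) (hp : p.IsPath)
    (ht : t ∈ p.support) (hta : t ≠ a) (htb : t ≠ b) :
    ∃ w₁ w₂, w₁ ≠ w₂ ∧ w₁ ∈ p.support ∧ w₂ ∈ p.support ∧ S.Adj t w₁ ∧ S.Adj t w₂ := by
  induction p with
  | nil => simp at ht; exact absurd ht hta
  | @cons xx yy zz h q ih =>
    rw [SimpleGraph.Walk.support_cons, List.mem_cons] at ht
    rcases ht with rfl | ht
    · exact absurd rfl hta
    rcases eq_or_ne t yy with rfl | hty
    · cases q with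
      | nil => exact absurd rfl htb
      | @cons _ ww _ h₂ q₂ =>
        refine ⟨xx, ww, ?_, ?_, ?_, h.symm, h₂⟩
        · rintro rfl
          rw [SimpleGraph.Walk.cons_isPath_iff] at hp
          exact hp.2 (by simp)
        · simp
        · simp
    · obtain ⟨w₁, w₂, h12, hw1, hw2, ha1, ha2⟩ := ih hp.of_cons ht hty htb
      exact ⟨w₁, w₂, h12, by simp [hw1], by simp [hw2], ha1, ha2⟩

/-- An endpoint of a nontrivial walk has a neighbor on the support. -/
lemma endpoint_neighbor {a b : V} (p : S.Walk a b) (hab : a ≠ b) :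
    ∃ w ∈ p.support, S.Adj a w := by
  cases p with
  | nil => exact absurd rfl hab
  | cons h q => exact ⟨_, by simp, h⟩

/-- From a walk starting outside a set and ending in the set, we get a crossing edge. -/
lemma crossing_edge {a b : V} (q : S.Walk a b) (P : Set V) (ha : a ∉ P) (hb : b ∈ P) :
    ∃ s t, s ∉ P ∧ t ∈ P ∧ S.Adj s t := by
  induction q with
  | nil => exact absurd hb ha
  | @cons xx yy zz h q ih =>
    by_cases hy : yy ∈ P
    · exact ⟨xx, yy, ha, hy, h⟩
    · exact ih hy hb

lemma not_three_leaves [Finite V] (hdeg : ∀ v : V, (S.neighborSet v).ncard ≤ 2)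
    {x y z : V} (hxy : x ≠ y) (hxz : x ≠ z) (hyz : y ≠ z)
    (hx : (S.neighborSet x).ncard ≤ 1) (hy : (S.neighborSet y).ncard ≤ 1)
    (hz : (S.neighborSet z).ncard ≤ 1)
    (hrxy : S.Reachable x y) (hrxz : S.Reachable x z) : False := by
  classical
  obtain ⟨p, hp, _⟩ := hrxy.exists_path_of_dist
  by_cases hzp : z ∈ p.support
  · obtain ⟨w₁, w₂, h12, _, _, ha1, ha2⟩ :=
      internal_two_neighbors p hp hzp (Ne.symm hxz) (Ne.symm hyz)
    have : 1 < (S.neighborSet z).ncard := by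
      rw [Set.one_lt_ncard (Set.toFinite _)]
      exact ⟨w₁, ha1, w₂, ha2, h12⟩
    omega
  · obtain ⟨q⟩ := hrxz.symm
    obtain ⟨s, t, hs, ht, hst⟩ := crossing_edge q {w | w ∈ p.support} hzp (by simp)
    rcases eq_or_ne t x with rfl | htx
    · obtain ⟨w, hw, haw⟩ := endpoint_neighbor p hxy
      have : 1 < (S.neighborSet t).ncard := by
        rw [Set.one_lt_ncard (Set.toFinite _)]
        exact ⟨s, hst.symm, w, haw, fun h => hs (h ▸ hw)⟩
      omega
    rcases eq_or_ne t y with rfl | hty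
    · obtain ⟨w, hw, haw⟩ := endpoint_neighbor p.reverse hxy.symm
      rw [SimpleGraph.Walk.support_reverse, List.mem_reverse] at hw
      have : 1 < (S.neighborSet t).ncard := by
        rw [Set.one_lt_ncard (Set.toFinite _)]
        exact ⟨s, hst.symm, w, haw, fun h => hs (h ▸ hw)⟩
      omega
    · obtain ⟨w₁, w₂, h12, hw1, hw2, ha1, ha2⟩ := internal_two_neighbors p hp ht htx hty
      have : 2 < (S.neighborSet t).ncard := by
        rw [Set.two_lt_ncard (Set.toFinite _)]
        exact ⟨s, hst.symm, w₁, ha1, w₂, ha2, fun h => hs (h ▸ hw1), fun h => hs (h ▸ hw2), h12⟩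
      exact absurd (hdeg t) (by omega)

end Leaves

section Exchange

variable {M N : G.Subgraph}

/-- Exchange: take `N`'s edges inside `c` and `M`'s edges outside `c`. -/
def xch (M N : G.Subgraph) (c : Set V) : G.Subgraph where
  verts := (M.verts \ c) ∪ (N.verts ∩ c)
  Adj v w := (v ∈ c ∧ w ∈ c ∧ N.Adj v w) ∨ (v ∉ c ∧ w ∉ c ∧ M.Adj v w)
  adj_sub := by
    rintro v w (⟨_, _, h⟩ | ⟨_, _, h⟩)
    · exact N.adj_sub h
    · exact M.adj_sub h
  edge_vert := by
    rintro v w (⟨h1, h2, h⟩ | ⟨h1, h2, h⟩)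
    · exact Or.inr ⟨N.edge_vert h, h1⟩
    · exact Or.inl ⟨M.edge_vert h, h1⟩
  symm := by
    constructor
    rintro v w (⟨h1, h2, h⟩ | ⟨h1, h2, h⟩)
    · exact Or.inl ⟨h2, h1, h.symm⟩
    · exact Or.inr ⟨h2, h1, h.symm⟩

lemma xch_verts (c : Set V) : (xch M N c).verts = (M.verts \ c) ∪ (N.verts ∩ c) := rfl

/-- `c` is closed under both `M`- and `N`-adjacency. -/
def cClosed (M N : G.Subgraph) (c : Set V) : Prop :=
  (∀ x ∈ c, ∀ y, N.Adj x y → y ∈ c) ∧ (∀ x ∈ c, ∀ y, M.Adj x y → y ∈ c)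

lemma xch_isMatching (hM : M.IsMatching) (hN : N.IsMatching) {c : Set V}
    (hc : cClosed M N c) : (xch M N c).IsMatching := by
  rintro v (⟨hv, hvc⟩ | ⟨hv, hvc⟩)
  · obtain ⟨w, hw, huniq⟩ := hM hv
    have hwc : w ∉ c := fun hwc => hvc (hc.2 w hwc v hw.symm)
    refine ⟨w, Or.inr ⟨hvc, hwc, hw⟩, ?_⟩
    rintro y (⟨h1, _, _⟩ | ⟨_, _, h⟩)
    · exact absurd h1 hvc
    · exact huniq y h
  · obtain ⟨w, hw, huniq⟩ := hN hv
    have hwc : w ∈ c := hc.1 v hvc w hw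
    refine ⟨w, Or.inl ⟨hvc, hwc, hw⟩, ?_⟩
    rintro y (⟨_, _, h⟩ | ⟨h1, _, _⟩)
    · exact huniq y h
    · exact absurd hvc h1

/-- Edges with both ends in `c`. -/
def E1 (c : Set V) : Set (Sym2 V) := {e | ∀ x ∈ e, x ∈ c}
/-- Edges with both ends outside `c`. -/
def E2 (c : Set V) : Set (Sym2 V) := {e | ∀ x ∈ e, x ∉ c}

lemma xch_edgeSet (c : Set V) :
    (xch M N c).edgeSet = (N.edgeSet ∩ E1 c) ∪ (M.edgeSet ∩ E2 c) := by
  ext e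
  refine Sym2.ind (fun v w => ?_) e
  simp only [SimpleGraph.Subgraph.mem_edgeSet, Set.mem_union, Set.mem_inter_iff, E1, E2,
    Set.mem_setOf_eq, Sym2.mem_iff]
  constructor
  · rintro (⟨h1, h2, h⟩ | ⟨h1, h2, h⟩)
    · exact Or.inl ⟨h, by rintro x (rfl | rfl) <;> assumption⟩
    · exact Or.inr ⟨h, by rintro x (rfl | rfl) <;> assumption⟩
  · rintro (⟨h, hc⟩ | ⟨h, hc⟩)
    · exact Or.inl ⟨hc v (Or.inl rfl), hc w (Or.inr rfl), h⟩
    · exact Or.inr ⟨hc v (Or.inl rfl), hc w (Or.inr rfl), h⟩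

lemma edgeSet_split {c : Set V} (hc : ∀ x ∈ c, ∀ y, M.Adj x y → y ∈ c) :
    M.edgeSet = (M.edgeSet ∩ E1 c) ∪ (M.edgeSet ∩ E2 c) := by
  rw [← Set.inter_union_distrib_left]
  refine (Set.inter_eq_left.mpr ?_).symm
  intro e he
  refine Sym2.ind (fun v w hvw => ?_) e he
  rw [SimpleGraph.Subgraph.mem_edgeSet] at hvw
  by_cases hv : v ∈ c
  · have hw : w ∈ c := hc v hv w hvw
    exact Or.inl (by simp only [E1, Set.mem_setOf_eq, Sym2.mem_iff]
                     rintro x (rfl | rfl) <;> assumption)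
  · have hw : w ∉ c := fun hw => hv (hc w hw v hvw.symm)
    exact Or.inr (by simp only [E2, Set.mem_setOf_eq, Sym2.mem_iff]
                     rintro x (rfl | rfl) <;> assumption)

lemma E1_E2_disjoint {c : Set V} {s t : Set (Sym2 V)} :
    Disjoint (s ∩ E1 c) (t ∩ E2 c) := by
  rw [Set.disjoint_iff_inter_eq_empty]
  ext e
  refine Sym2.ind (fun v w => ?_) e
  simp only [Set.mem_inter_iff, Set.mem_empty_iff_false, iff_false, E1, E2,
    Set.mem_setOf_eq]
  rintro ⟨⟨_, h1⟩, ⟨_, h2⟩⟩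
  exact h2 v (by simp) (h1 v (by simp))

/-- The key cardinality identity for exchanging. -/
lemma xch_card {c : Set V} (hcM : ∀ x ∈ c, ∀ y, M.Adj x y → y ∈ c) :
    (xch M N c).edgeSet.ncard + (M.edgeSet ∩ E1 c).ncard
      = M.edgeSet.ncard + (N.edgeSet ∩ E1 c).ncard := by
  have hsplit : M.edgeSet.ncard = (M.edgeSet ∩ E1 c).ncard + (M.edgeSet ∩ E2 c).ncard := by
    rw [← Set.ncard_union_eq E1_E2_disjoint (Set.toFinite _) (Set.toFinite _),
      ← edgeSet_split hcM]
  rw [xch_edgeSet, Set.ncard_union_eq E1_E2_disjoint (Set.toFinite _) (Set.toFinite _), hsplit]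
  omega

end Exchange

section Util

variable {M N M' M₀ : G.Subgraph} {s : Set V} {a b u v w : V}

lemma maxW_of_card (hM : MaxW G s M) (hM' : MW G s M')
    (h : M.edgeSet.ncard ≤ M'.edgeSet.ncard) : MaxW G s M' :=
  ⟨hM', fun K hK => le_trans (hM.2 K hK) h⟩

lemma mem_DW (hv : v ∈ s) (hM : MaxW G s M) (h : v ∉ M.verts) : v ∈ DW G s :=
  ⟨hv, M, hM, h⟩

/-- An essential vertex is covered by every maximum matching. -/
lemma essential_covered (ha : a ∈ s) (haD : a ∉ DW G s) (hM : MaxW G s M) :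
    a ∈ M.verts := by
  by_contra h
  exact haD (mem_DW ha hM h)

lemma delete_pair_isMatching (hM : M.IsMatching) (hab : M.Adj a b) :
    (M.deleteVerts {a, b}).IsMatching := by
  rintro v hv
  rw [SimpleGraph.Subgraph.deleteVerts_verts] at hv
  obtain ⟨hv1, hv2⟩ := hv
  obtain ⟨x, hx, huniq⟩ := hM hv1
  have hxa : x ≠ a := by
    rintro rfl
    obtain ⟨y, hy, huniq'⟩ := hM (M.edge_vert hab)
    rw [huniq' v hx.symm, ← huniq' b hab] at hv2
    exact hv2 (by simp)
  have hxb : x ≠ b := by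
    rintro rfl
    obtain ⟨y, hy, huniq'⟩ := hM (M.edge_vert hab.symm)
    rw [huniq' v hx.symm, ← huniq' a hab.symm] at hv2
    exact hv2 (by simp)
  refine ⟨x, ?_, ?_⟩
  · show (M.deleteVerts {a, b}).Adj v x
    rw [SimpleGraph.Subgraph.deleteVerts_adj]
    exact ⟨hv1, hv2, M.edge_vert hx.symm, by simp [hxa, hxb], hx⟩
  · intro y hy
    have hy' : (M.deleteVerts {a, b}).Adj v y := hy
    rw [SimpleGraph.Subgraph.deleteVerts_adj] at hy'
    exact huniq y hy'.2.2.2.2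

lemma delete_pair_edgeSet (hM : M.IsMatching) (hab : M.Adj a b) :
    (M.deleteVerts {a, b}).edgeSet = M.edgeSet \ {s(a, b)} := by
  ext e
  refine Sym2.ind (fun x y => ?_) e
  simp only [SimpleGraph.Subgraph.mem_edgeSet, SimpleGraph.Subgraph.deleteVerts_adj,
    Set.mem_diff, Set.mem_singleton_iff, Set.mem_insert_iff]
  constructor
  · rintro ⟨_, hx, _, hy, hadj⟩
    refine ⟨hadj, fun h => ?_⟩
    rw [Sym2.eq_iff] at h
    rcases h with ⟨rfl, rfl⟩ | ⟨rfl, rfl⟩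
    · exact hx (by simp)
    · exact hy (by simp)
  · rintro ⟨hadj, hne⟩
    have hxa : x ≠ a ∨ y ≠ b := by
      by_contra hc
      push_neg at hc
      exact hne (by rw [hc.1, hc.2])
    have hx : x ∉ ({a, b} : Set V) := by
      rintro (rfl | rfl)
      · obtain ⟨z, hz, huniq⟩ := hM (M.edge_vert hab)
        rw [huniq y hadj, ← huniq b hab] at hne
        exact hne rfl
      · obtain ⟨z, hz, huniq⟩ := hM (M.edge_vert hab.symm)
        rw [huniq y hadj] at hne
        rw [huniq a hab.symm] at hne
        exact hne (Sym2.eq_swap)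
    have hy : y ∉ ({a, b} : Set V) := by
      rintro (rfl | rfl)
      · obtain ⟨z, hz, huniq⟩ := hM (M.edge_vert hab)
        rw [huniq x hadj.symm, ← huniq b hab] at hne
        exact hne (Sym2.eq_swap)
      · obtain ⟨z, hz, huniq⟩ := hM (M.edge_vert hab.symm)
        rw [huniq x hadj.symm, ← huniq a hab.symm] at hne
        exact hne rfl
    exact ⟨M.edge_vert hadj, hx, M.edge_vert hadj.symm, hy, hadj⟩

lemma insert_edge_isMatching (hM : M.IsMatching) (hadj : G.Adj a b)
    (ha : a ∉ M.verts) (hb : b ∉ M.verts) :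
    (M ⊔ G.subgraphOfAdj hadj).IsMatching := by
  refine hM.sup (SimpleGraph.Subgraph.IsMatching.subgraphOfAdj hadj) ?_
  rw [hM.support_eq_verts,
    (SimpleGraph.Subgraph.IsMatching.subgraphOfAdj hadj).support_eq_verts]
  simp only [SimpleGraph.subgraphOfAdj_verts]
  rw [Set.disjoint_iff_inter_eq_empty]
  ext x
  simp only [Set.mem_inter_iff, Set.mem_insert_iff, Set.mem_singleton_iff,
    Set.mem_empty_iff_false, iff_false, not_and]
  rintro hx (rfl | rfl)
  · exact ha hx
  · exact hb hx

lemma insert_edge_card (hadj : G.Adj a b) (ha : a ∉ M.verts) :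
    (M ⊔ G.subgraphOfAdj hadj).edgeSet.ncard = M.edgeSet.ncard + 1 := by
  rw [SimpleGraph.Subgraph.edgeSet_sup, SimpleGraph.edgeSet_subgraphOfAdj hadj,
    Set.ncard_union_eq ?_ (Set.toFinite _) (Set.toFinite _), Set.ncard_singleton]
  rw [Set.disjoint_singleton_right]
  intro h
  exact ha (M.edge_vert h)

/-- With an essential vertex `a ∈ s`, every matching within `s \ {a}` is strictly smaller
than a maximum matching within `s`. -/
lemma card_lt_of_essential (ha : a ∈ s) (haD : a ∉ DW G s) (hM₀ : MaxW G s M₀)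
    (hM' : MW G (s \ {a}) M') : M'.edgeSet.ncard < M₀.edgeSet.ncard := by
  have h1 : MW G s M' := ⟨hM'.1, hM'.2.trans Set.diff_subset⟩
  rcases lt_or_eq_of_le (hM₀.2 M' h1) with h | h
  · exact h
  · exfalso
    have : MaxW G s M' := maxW_of_card hM₀ h1 h.ge
    exact haD (mem_DW ha this (fun hav => (hM'.2 hav).2 rfl))

/-- Deleting an essential vertex decreases the maximum matching size by exactly one. -/
lemma exists_max_of_delete_essential (ha : a ∈ s) (haD : a ∉ DW G s) (hM₀ : MaxW G s M₀) :
    ∃ Md, (MaxW G (s \ {a}) Md ∧ Md.edgeSet.ncard + 1 = M₀.edgeSet.ncard)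
      ∧ Md.verts ⊆ M₀.verts := by
  have haM : a ∈ M₀.verts := essential_covered ha haD hM₀
  obtain ⟨b, hab, _⟩ := hM₀.1.1 haM
  refine ⟨M₀.deleteVerts {a, b}, ⟨⟨⟨delete_pair_isMatching hM₀.1.1 hab, ?_⟩, ?_⟩, ?_⟩,
    by rw [SimpleGraph.Subgraph.deleteVerts_verts]; exact Set.diff_subset⟩
  · rw [SimpleGraph.Subgraph.deleteVerts_verts]
    intro x hx
    exact ⟨hM₀.1.2 hx.1, fun hxa => hx.2 (Or.inl (by simpa using hxa))⟩
  · intro M' hM'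
    have := card_lt_of_essential ha haD hM₀ hM'
    have hd : (M₀.deleteVerts {a, b}).edgeSet.ncard = M₀.edgeSet.ncard - 1 := by
      rw [delete_pair_edgeSet hM₀.1.1 hab]
      rw [Set.ncard_diff_singleton_of_mem (by exact hab)]
    omega
  · rw [delete_pair_edgeSet hM₀.1.1 hab,
      Set.ncard_diff_singleton_of_mem (by exact hab)]
    have : s(a, b) ∈ M₀.edgeSet := hab
    have hpos : 0 < M₀.edgeSet.ncard := by
      rw [Set.ncard_pos (Set.toFinite _)]
      exact ⟨_, this⟩
    omega

end Util

section Comp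

variable {M N : G.Subgraph} {u v w : V}

lemma symmdiff_deg_le_one' (hM : M.IsMatching) (hu : u ∉ N.verts) :
    ((M.spanningCoe ∆ N.spanningCoe).neighborSet u).ncard ≤ 1 := by
  have hsub : (M.spanningCoe ∆ N.spanningCoe).neighborSet u ⊆ {y | M.Adj u y} := by
    intro y hy
    rcases symmdiff_adj.mp hy with ⟨h, _⟩ | ⟨h, _⟩
    · exact h
    · exact absurd (N.edge_vert h) hu
  exact le_trans (Set.ncard_le_ncard hsub (Set.toFinite _))
    ((Set.ncard_le_one (Set.toFinite _)).mpr (matching_partner_subsingleton hM u))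

lemma comp_cClosed (hM : M.IsMatching) (hN : N.IsMatching) (hu : u ∉ M.verts) :
    cClosed M N ((M.spanningCoe ∆ N.spanningCoe).connectedComponentMk u).supp := by
  constructor
  · intro x hx y hNy
    by_cases hMy : M.Adj x y
    · exact absurd (no_common_edge hM hN hu hx hMy hNy) not_false
    · exact comp_closed _ hx (symmdiff_adj.mpr (Or.inr ⟨hNy, hMy⟩))
  · intro x hx y hMy
    by_cases hNy : N.Adj x y
    · exact absurd (no_common_edge hM hN hu hx hMy hNy) not_false
    · exact comp_closed _ hx (symmdiff_adj.mpr (Or.inl ⟨hMy, hNy⟩))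

lemma mem_comp_self (S : SimpleGraph V) (u : V) : u ∈ (S.connectedComponentMk u).supp := by
  rw [SimpleGraph.ConnectedComponent.mem_supp_iff]

lemma comp_reachable {S : SimpleGraph V} {c : S.ConnectedComponent}
    (hx : x ∈ c.supp) (hy : y ∈ c.supp) : S.Reachable x y := by
  rw [SimpleGraph.ConnectedComponent.mem_supp_iff] at hx hy
  exact SimpleGraph.ConnectedComponent.exact (hx.trans hy.symm)

/-- The first edge of the component of an `M`-exposed, `N`-covered vertex
contributes to `β ≥ 1`. -/
lemma beta_pos (hM : M.IsMatching) (hN : N.IsMatching) (hu : u ∉ M.verts) (huN : u ∈ N.verts) :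
    1 ≤ (N.edgeSet ∩
      E1 ((M.spanningCoe ∆ N.spanningCoe).connectedComponentMk u).supp).ncard := by
  obtain ⟨y, hy, _⟩ := hN huN
  have hMy : ¬ M.Adj u y := fun h => hu (M.edge_vert h)
  have hSy : (M.spanningCoe ∆ N.spanningCoe).Adj u y :=
    symmdiff_adj.mpr (Or.inr ⟨hy, hMy⟩)
  have hyc := comp_closed _ (mem_comp_self _ u) hSy
  have hmem : s(u, y) ∈ N.edgeSet ∩
      E1 ((M.spanningCoe ∆ N.spanningCoe).connectedComponentMk u).supp := by
    refine ⟨hy, ?_⟩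
    simp only [E1, Set.mem_setOf_eq, Sym2.mem_iff]
    rintro x (rfl | rfl)
    · exact mem_comp_self _ x
    · exact hyc
  rw [Nat.one_le_iff_ne_zero, Ne, Set.ncard_eq_zero (Set.toFinite _),
    Set.eq_empty_iff_forall_notMem]
  exact fun h => h _ hmem

end Comp

section Stability

variable {s : Set V} {a v : V}

lemma stability (ha : a ∈ s) (haD : a ∉ DW G s) (hw : ∃ w ∈ DW G s, G.Adj a w) :
    DW G (s \ {a}) = DW G s := by
  obtain ⟨w, hwD, haw⟩ := hw
  obtain ⟨hws, N, hN, hwN⟩ := hwD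
  apply Set.Subset.antisymm
  · rintro v ⟨hvs', M', hM', hvM'⟩
    have hvs : v ∈ s := hvs'.1
    have hva : v ≠ a := fun h => hvs'.2 (by simp [h])
    by_contra hv
    have hvw : v ≠ w := by rintro rfl; exact hv ⟨hws, N, hN, hwN⟩
    have hvN : v ∈ N.verts := by
      by_contra h; exact hv ⟨hvs, N, hN, h⟩
    have haM' : a ∉ M'.verts := fun h => (hM'.1.2 h).2 rfl
    have hsize : M'.edgeSet.ncard + 1 = N.edgeSet.ncard := by
      obtain ⟨⟨hMd, hMdcard⟩, _⟩ :=
        (exists_max_of_delete_essential ha haD hN).choose_spec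
      have h1 := card_lt_of_essential ha haD hN hM'.1
      have h2 := hM'.2 _ hMd.1
      omega
    set S := M'.spanningCoe ∆ N.spanningCoe with hS
    set c := (S.connectedComponentMk v).supp with hc
    have hcC : cClosed M' N c := comp_cClosed hM'.1.1 hN.1.1 hvM'
    have hvc : v ∈ c := mem_comp_self _ _
    set α := (M'.edgeSet ∩ E1 c).ncard with hα
    set β := (N.edgeSet ∩ E1 c).ncard with hβ
    have hX2m : (xch M' N c).IsMatching := xch_isMatching hM'.1.1 hN.1.1 hcC
    have hX2v : (xch M' N c).verts ⊆ s := by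
      rw [xch_verts]
      rintro x (⟨hx, _⟩ | ⟨hx, _⟩)
      · exact (hM'.1.2 hx).1
      · exact hN.1.2 hx
    have hX2card : (xch M' N c).edgeSet.ncard + α = M'.edgeSet.ncard + β :=
      xch_card hcC.2
    have hcC' : cClosed N M' c := ⟨hcC.2, hcC.1⟩
    have hX1m : (xch N M' c).IsMatching := xch_isMatching hN.1.1 hM'.1.1 hcC'
    have hX1card : (xch N M' c).edgeSet.ncard + β = N.edgeSet.ncard + α :=
      xch_card hcC.1
    have hX1v : (xch N M' c).verts ⊆ s := by
      rw [xch_verts]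
      rintro x (⟨hx, _⟩ | ⟨hx, _⟩)
      · exact hN.1.2 hx
      · exact (hM'.1.2 hx).1
    have hvX1 : v ∉ (xch N M' c).verts := by
      rw [xch_verts]
      rintro (⟨_, hvc'⟩ | ⟨hvm, _⟩)
      · exact hvc' hvc
      · exact hvM' hvm
    by_cases hac : a ∈ c
    · have hwa : a ≠ w := haw.ne
      have hwc : w ∉ c := by
        intro hwc
        exact not_three_leaves (S := S) (fun x => symmdiff_deg_le_two hM'.1.1 hN.1.1 x)
          hva hvw hwa
          (symmdiff_deg_le_one hN.1.1 hvM')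
          (symmdiff_deg_le_one hN.1.1 haM')
          (symmdiff_deg_le_one' hM'.1.1 hwN)
          (comp_reachable hvc hac) (comp_reachable hvc hwc)
      have hβα : β ≤ α + 1 := by
        have hle := hN.2 (xch M' N c) ⟨hX2m, hX2v⟩
        omega
      have haX1 : a ∉ (xch N M' c).verts := by
        rw [xch_verts]
        rintro (⟨_, hac'⟩ | ⟨ham, _⟩)
        · exact hac' hac
        · exact haM' ham
      have hαβ : α + 1 ≤ β := by
        have hX1mw : MW G (s \ {a}) (xch N M' c) :=
          ⟨hX1m, fun x hx => ⟨hX1v hx, fun h => haX1 ((Set.mem_singleton_iff.mp h) ▸ hx)⟩⟩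
        have := card_lt_of_essential ha haD hN hX1mw
        omega
      have hwX1 : w ∉ (xch N M' c).verts := by
        rw [xch_verts]
        rintro (⟨hwn, _⟩ | ⟨_, hwc'⟩)
        · exact hwN hwn
        · exact hwc hwc'
      have hYm := insert_edge_isMatching hX1m haw haX1 hwX1
      have hYcard := insert_edge_card (M := xch N M' c) haw haX1
      have hYv : (xch N M' c ⊔ G.subgraphOfAdj haw).verts ⊆ s := by
        rw [SimpleGraph.Subgraph.verts_sup]
        rintro x (hx | hx)
        · exact hX1v hx
        · rcases hx with rfl | hx
          · exact ha
          · rw [Set.mem_singleton_iff] at hx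
            exact hx ▸ hws
      have hYmax : MaxW G s (xch N M' c ⊔ G.subgraphOfAdj haw) :=
        maxW_of_card hN ⟨hYm, hYv⟩ (by omega)
      have hvY : v ∉ (xch N M' c ⊔ G.subgraphOfAdj haw).verts := by
        rw [SimpleGraph.Subgraph.verts_sup]
        rintro (hx | hx)
        · exact hvX1 hx
        · rcases hx with rfl | hx
          · exact hva rfl
          · rw [Set.mem_singleton_iff] at hx
            exact hvw hx
      exact hv (mem_DW hvs hYmax hvY)
    · have hX2mw : MW G (s \ {a}) (xch M' N c) := by
        refine ⟨hX2m, fun x hx => ⟨hX2v hx, fun h => ?_⟩⟩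
        rw [Set.mem_singleton_iff] at h
        subst h
        rw [xch_verts] at hx
        rcases hx with ⟨hx1, _⟩ | ⟨_, hx2⟩
        · exact haM' hx1
        · exact hac hx2
      have h1 := card_lt_of_essential ha haD hN hX2mw
      have h2 := hN.2 (xch N M' c) ⟨hX1m, hX1v⟩
      have hX1max : MaxW G s (xch N M' c) :=
        maxW_of_card hN ⟨hX1m, hX1v⟩ (by omega)
      exact hv (mem_DW hvs hX1max hvX1)
  · rintro v ⟨hvs, M, hM, hvM⟩
    have hva : v ≠ a := by
      rintro rfl
      exact haD ⟨hvs, M, hM, hvM⟩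
    obtain ⟨⟨hMd, _⟩, hMdv⟩ := (exists_max_of_delete_essential ha haD hM).choose_spec
    exact ⟨⟨hvs, hva⟩, _, hMd, fun h => hvM (hMdv h)⟩

end Stability

section Gallai

variable {k : Set V}

/-- Common edges of two matchings avoid the component of an `M`-exposed vertex. -/
lemma common_edges_E2 {M N : G.Subgraph} {u : V} (hM : M.IsMatching) (hN : N.IsMatching)
    (hu : u ∉ M.verts) :
    N.edgeSet ∩ M.edgeSet ⊆
      E2 ((M.spanningCoe ∆ N.spanningCoe).connectedComponentMk u).supp := by
  intro e
  refine Sym2.ind (fun x y he => ?_) e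
  obtain ⟨heN, heM⟩ := he
  rw [SimpleGraph.Subgraph.mem_edgeSet] at heN heM
  simp only [E2, Set.mem_setOf_eq, Sym2.mem_iff]
  rintro z (rfl | rfl) hz
  · exact no_common_edge hM hN hu hz heM heN
  · exact no_common_edge hM hN hu hz heM.symm heN.symm

/-- Gallai's lemma core: within a connected vertex set in which every vertex is
inessential, a maximum matching cannot expose two distinct vertices. -/
lemma gallai_core (hconn : (G.induce k).Connected) (hD : ∀ v ∈ k, v ∈ DW G k) :
    ¬ ∃ n : ℕ, ∃ (M : G.Subgraph) (u u' : ↥k), MaxW G k M ∧ u ≠ u' ∧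
      ↑u ∉ M.verts ∧ ↑u' ∉ M.verts ∧ (G.induce k).dist u u' = n := by
  intro h
  classical
  set d₀ := Nat.find h with hd₀
  obtain ⟨M, u, u', hM, huu', huM, hu'M, hdist⟩ := Nat.find_spec h
  rw [← hd₀] at hdist
  have hadj_coe : ∀ (x y : ↥k), (G.induce k).Adj x y → G.Adj ↑x ↑y := fun x y hxy => hxy
  -- d₀ ≥ 2
  have hd2 : 2 ≤ d₀ := by
    by_contra hlt
    push_neg at hlt
    have hcase : d₀ = 0 ∨ d₀ = 1 := by omega
    rcases hcase with h0 | h1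
    · rw [h0] at hdist
      exact huu' (hconn.dist_eq_zero_iff.mp hdist)
    · rw [h1] at hdist
      have hadj : (G.induce k).Adj u u' := SimpleGraph.dist_eq_one_iff_adj.mp hdist
      have hG : G.Adj ↑u ↑u' := hadj_coe _ _ hadj
      have hYm := insert_edge_isMatching hM.1.1 hG huM hu'M
      have hYc := insert_edge_card (M := M) hG huM
      have hYv : (M ⊔ G.subgraphOfAdj hG).verts ⊆ k := by
        rw [SimpleGraph.Subgraph.verts_sup]
        rintro x (hx | hx)
        · exact hM.1.2 hx
        · rcases hx with rfl | hx
          · exact u.2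
          · rw [Set.mem_singleton_iff] at hx
            exact hx ▸ u'.2
      have := hM.2 _ ⟨hYm, hYv⟩
      omega
  -- find t
  obtain ⟨p, hp, hplen⟩ := hconn.exists_path_of_dist u u'
  rw [hdist] at hplen
  obtain ⟨t, hut, q, hqlen⟩ : ∃ (t : ↥k), (G.induce k).Adj u t ∧
      ∃ q : (G.induce k).Walk t u', q.length + 1 = d₀ := by
    cases p with
    | nil =>
      exfalso
      simp only [SimpleGraph.Walk.length_nil] at hplen
      omega
    | cons hadj q => exact ⟨_, hadj, q, by simpa using hplen⟩
  have hdist_tu' : (G.induce k).dist t u' < d₀ := by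
    have := SimpleGraph.dist_le q
    omega
  have htu : t ≠ u := hut.ne.symm
  have htu' : t ≠ u' := by
    rintro rfl
    have : (G.induce k).dist u t ≤ 1 := by
      rw [SimpleGraph.dist_eq_one_iff_adj.mpr hut]
    omega
  -- t is covered by M
  have htM : ↑t ∈ M.verts := by
    by_contra htM
    exact Nat.find_min h hdist_tu' ⟨M, t, u', hM, htu', htM, hu'M, rfl⟩
  -- choose N missing t with maximal overlap with M
  have htD := hD ↑t t.2
  obtain ⟨N, ⟨hN, htN⟩, hNbest⟩ := exists_maxW_best k
    (fun N => (N.edgeSet ∩ M.edgeSet).ncard) (P := fun N => (t : V) ∉ N.verts)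
    ⟨htD.2.choose, htD.2.choose_spec⟩
  have hNu : ↑u ∈ N.verts := by
    by_contra hNu
    have hd1 : (G.induce k).dist u t < d₀ := by
      rw [SimpleGraph.dist_eq_one_iff_adj.mpr hut]
      omega
    exact Nat.find_min h hd1 ⟨N, u, t, hN, htu.symm, hNu, htN, rfl⟩
  have hNu' : ↑u' ∈ N.verts := by
    by_contra hNu'
    have hd1 : (G.induce k).dist u' t < d₀ := by
      rw [SimpleGraph.dist_comm]
      exact hdist_tu'
    exact Nat.find_min h hd1 ⟨N, u', t, hN, Ne.symm htu', hNu', htN, rfl⟩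
  have hMN : M.edgeSet.ncard = N.edgeSet.ncard :=
    le_antisymm (hN.2 _ hM.1) (hM.2 _ hN.1)
  set S := M.spanningCoe ∆ N.spanningCoe with hS
  set c := (S.connectedComponentMk ↑u).supp with hc
  have hcC : cClosed M N c := comp_cClosed hM.1.1 hN.1.1 huM
  have huc : (u : V) ∈ c := mem_comp_self _ _
  set α := (M.edgeSet ∩ E1 c).ncard with hα
  set β := (N.edgeSet ∩ E1 c).ncard with hβ
  have hX1m : (xch M N c).IsMatching := xch_isMatching hM.1.1 hN.1.1 hcC
  have hX1card : (xch M N c).edgeSet.ncard + α = M.edgeSet.ncard + β := xch_card hcC.2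
  have hX1v : (xch M N c).verts ⊆ k := by
    rw [xch_verts]
    rintro x (⟨hx, _⟩ | ⟨hx, _⟩)
    · exact hM.1.2 hx
    · exact hN.1.2 hx
  have hcC' : cClosed N M c := ⟨hcC.2, hcC.1⟩
  have hX2m : (xch N M c).IsMatching := xch_isMatching hN.1.1 hM.1.1 hcC'
  have hX2card : (xch N M c).edgeSet.ncard + β = N.edgeSet.ncard + α := xch_card hcC.1
  have hX2v : (xch N M c).verts ⊆ k := by
    rw [xch_verts]
    rintro x (⟨hx, _⟩ | ⟨hx, _⟩)
    · exact hN.1.2 hx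
    · exact hM.1.2 hx
  have hb1 : 1 ≤ β := beta_pos hM.1.1 hN.1.1 huM hNu
  have hab : α = β := by
    have h1 := hM.2 _ ⟨hX1m, hX1v⟩
    have h2 := hN.2 _ ⟨hX2m, hX2v⟩
    omega
  by_cases htc : (t : V) ∈ c
  · -- t in the component: u' is not, and exchanging M misses t and u'
    have hu'c : (u' : V) ∉ c := by
      intro hu'c
      have hne1 : (u : V) ≠ ↑u' := fun hh => huu' (Subtype.ext hh)
      have hne2 : (u : V) ≠ ↑t := fun hh => htu (Subtype.ext hh.symm)
      have hne3 : (u' : V) ≠ ↑t := fun hh => htu' (Subtype.ext hh.symm)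
      exact not_three_leaves (S := S) (fun x => symmdiff_deg_le_two hM.1.1 hN.1.1 x)
        hne1 hne2 hne3
        (symmdiff_deg_le_one hN.1.1 huM)
        (symmdiff_deg_le_one hN.1.1 hu'M)
        (symmdiff_deg_le_one' hM.1.1 htN)
        (comp_reachable huc hu'c) (comp_reachable huc htc)
    have hX1max : MaxW G k (xch M N c) := maxW_of_card hM ⟨hX1m, hX1v⟩ (by omega)
    have htX1 : (t : V) ∉ (xch M N c).verts := by
      rw [xch_verts]
      rintro (⟨_, htc'⟩ | ⟨htn, _⟩)
      · exact htc' htc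
      · exact htN htn
    have hu'X1 : (u' : V) ∉ (xch M N c).verts := by
      rw [xch_verts]
      rintro (⟨hm, _⟩ | ⟨_, hcc⟩)
      · exact hu'M hm
      · exact hu'c hcc
    exact Nat.find_min h hdist_tu' ⟨xch M N c, t, u', hX1max, htu', htX1, hu'X1, rfl⟩
  · -- t not in the component: exchange N to gain overlap with M
    have hX2max : MaxW G k (xch N M c) := maxW_of_card hN ⟨hX2m, hX2v⟩ (by omega)
    have htX2 : (t : V) ∉ (xch N M c).verts := by
      rw [xch_verts]
      rintro (⟨htn, _⟩ | ⟨_, hcc⟩)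
      · exact htN htn
      · exact htc hcc
    have hcommon : N.edgeSet ∩ M.edgeSet ⊆ E2 c := common_edges_E2 hM.1.1 hN.1.1 huM
    have hXM : (xch N M c).edgeSet ∩ M.edgeSet
        = (M.edgeSet ∩ E1 c) ∪ (N.edgeSet ∩ M.edgeSet) := by
      rw [xch_edgeSet]
      ext e
      simp only [Set.mem_inter_iff, Set.mem_union]
      constructor
      · rintro ⟨hl | hr, hm⟩
        · exact Or.inl hl
        · exact Or.inr ⟨hr.1, hm⟩
      · rintro (⟨hm, he⟩ | ⟨hn, hm⟩)
        · exact ⟨Or.inl ⟨hm, he⟩, hm⟩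
        · exact ⟨Or.inr ⟨hn, hcommon ⟨hn, hm⟩⟩, hm⟩
    have hdisj : Disjoint (M.edgeSet ∩ E1 c) (N.edgeSet ∩ M.edgeSet) := by
      refine Disjoint.mono_right ?_ (E1_E2_disjoint (s := M.edgeSet) (t := N.edgeSet))
      intro e he
      exact ⟨he.1, hcommon he⟩
    have hXMcard : ((xch N M c).edgeSet ∩ M.edgeSet).ncard
        = α + (N.edgeSet ∩ M.edgeSet).ncard := by
      rw [hXM, Set.ncard_union_eq hdisj (Set.toFinite _) (Set.toFinite _)]
    have := hNbest _ hX2max htX2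
    omega

/-- Gallai's lemma: every maximum matching within a connected inessential set
exposes exactly the one vertex. -/
lemma gallai (hconn : (G.induce k).Connected) (hD : ∀ v ∈ k, v ∈ DW G k)
    {v : V} (hv : v ∈ k) :
    ∃ M : G.Subgraph, M.IsMatching ∧ M.verts = k \ {v} := by
  obtain ⟨_, M, hM, hvM⟩ := hD v hv
  refine ⟨M, hM.1.1, ?_⟩
  apply Set.Subset.antisymm
  · intro x hx
    exact ⟨hM.1.2 hx, fun hxv => hvM ((Set.mem_singleton_iff.mp hxv) ▸ hx)⟩
  · rintro x ⟨hxk, hxv⟩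
    by_contra hxM
    rw [Set.mem_singleton_iff] at hxv
    exact gallai_core hconn hD
      ⟨_, M, ⟨x, hxk⟩, ⟨v, hv⟩, hM, fun hh => hxv (congrArg Subtype.val hh), hxM, hvM, rfl⟩

end Gallai

section Restrict

variable {M : G.Subgraph} {s k : Set V}

/-- Restriction of a subgraph to a vertex set. -/
def restrict (M : G.Subgraph) (k : Set V) : G.Subgraph where
  verts := M.verts ∩ k
  Adj x y := x ∈ k ∧ y ∈ k ∧ M.Adj x y
  adj_sub h := M.adj_sub h.2.2
  edge_vert h := ⟨M.edge_vert h.2.2, h.1⟩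
  symm := ⟨fun x y h => ⟨h.2.1, h.1, h.2.2.symm⟩⟩

lemma restrict_isMatching (hM : M.IsMatching)
    (hcl : ∀ x ∈ k, ∀ y, M.Adj x y → y ∈ k) : (restrict M k).IsMatching := by
  rintro v ⟨hv, hvk⟩
  obtain ⟨w, hw, huniq⟩ := hM hv
  refine ⟨w, ⟨hvk, hcl v hvk w hw, hw⟩, fun y hy => huniq y hy.2.2⟩

lemma corestrict_isMatching (hM : M.IsMatching)
    (hcl : ∀ x ∈ k, ∀ y, M.Adj x y → y ∈ k) : (restrict M kᶜ).IsMatching := by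
  rintro v ⟨hv, hvk⟩
  obtain ⟨w, hw, huniq⟩ := hM hv
  have hwk : w ∈ kᶜ := fun hwk => hvk (hcl w hwk v hw.symm)
  refine ⟨w, ⟨hvk, hwk, hw⟩, fun y hy => huniq y hy.2.2⟩

lemma restrict_edgeSet : (restrict M k).edgeSet = M.edgeSet ∩ E1 k := by
  ext e
  refine Sym2.ind (fun x y => ?_) e
  simp only [SimpleGraph.Subgraph.mem_edgeSet, Set.mem_inter_iff, E1, Set.mem_setOf_eq,
    Sym2.mem_iff]
  constructor
  · rintro ⟨h1, h2, h⟩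
    exact ⟨h, by rintro z (rfl | rfl) <;> assumption⟩
  · rintro ⟨h, hc⟩
    exact ⟨hc x (Or.inl rfl), hc y (Or.inr rfl), h⟩

lemma corestrict_edgeSet : (restrict M kᶜ).edgeSet = M.edgeSet ∩ E2 k := by
  rw [restrict_edgeSet]
  congr 1

/-- Restriction of a maximum matching to a closed subset is a maximum matching. -/
lemma restrict_maxW (hM : MaxW G s M) (hks : k ⊆ s)
    (hcl : ∀ x ∈ k, ∀ y ∈ s, G.Adj x y → y ∈ k) : MaxW G k (restrict M k) := by
  have hclM : ∀ x ∈ k, ∀ y, M.Adj x y → y ∈ k := by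
    intro x hx y hxy
    exact hcl x hx y (hM.1.2 (M.edge_vert hxy.symm)) (M.adj_sub hxy)
  refine ⟨⟨restrict_isMatching hM.1.1 hclM, fun x hx => hx.2⟩, ?_⟩
  intro K hK
  by_contra hlt
  push_neg at hlt
  -- K ⊔ restrict M kᶜ would beat M
  have hcm : (restrict M kᶜ).IsMatching := corestrict_isMatching hM.1.1 hclM
  have hdisj : Disjoint K.support (restrict M kᶜ).support := by
    rw [hK.1.support_eq_verts, hcm.support_eq_verts]
    exact Set.disjoint_of_subset hK.2 (fun x hx => hx.2) disjoint_compl_right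
  have hsm : (K ⊔ restrict M kᶜ).IsMatching := hK.1.sup hcm hdisj
  have hsv : (K ⊔ restrict M kᶜ).verts ⊆ s := by
    rw [SimpleGraph.Subgraph.verts_sup]
    rintro x (hx | hx)
    · exact hks (hK.2 hx)
    · exact hM.1.2 hx.1
  have hedisj : Disjoint K.edgeSet (restrict M kᶜ).edgeSet := by
    rw [corestrict_edgeSet]
    have h1 : K.edgeSet ⊆ K.edgeSet ∩ E1 k := by
      intro e he
      refine ⟨he, ?_⟩
      revert he
      refine Sym2.ind (fun x y he => ?_) e
      rw [SimpleGraph.Subgraph.mem_edgeSet] at he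
      simp only [E1, Set.mem_setOf_eq, Sym2.mem_iff]
      rintro z (rfl | rfl)
      · exact hK.2 (K.edge_vert he)
      · exact hK.2 (K.edge_vert he.symm)
    exact Disjoint.mono_left h1 E1_E2_disjoint
  have hcard : (K ⊔ restrict M kᶜ).edgeSet.ncard
      = K.edgeSet.ncard + (restrict M kᶜ).edgeSet.ncard := by
    rw [SimpleGraph.Subgraph.edgeSet_sup,
      Set.ncard_union_eq hedisj (Set.toFinite _) (Set.toFinite _)]
  have hsplit : M.edgeSet.ncard
      = (restrict M k).edgeSet.ncard + (restrict M kᶜ).edgeSet.ncard := by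
    rw [restrict_edgeSet, corestrict_edgeSet,
      ← Set.ncard_union_eq E1_E2_disjoint (Set.toFinite _) (Set.toFinite _),
      ← edgeSet_split hclM]
  have := hM.2 _ ⟨hsm, hsv⟩
  omega

end Restrict

section Iter

/-- Iterated stability: deleting a set of essential vertices, each with a neighbor in `D`,
preserves `D`. -/
lemma stability_iter {A : Set V}
    (hA : ∀ a ∈ A, a ∉ DW G Set.univ ∧ ∃ w ∈ DW G Set.univ, G.Adj a w) :
    DW G (Set.univ \ A) = DW G Set.univ := by
  classical
  refine Set.Finite.induction_on (motive := fun B _ =>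
      (∀ a ∈ B, a ∉ DW G Set.univ ∧ ∃ w ∈ DW G Set.univ, G.Adj a w) →
      DW G (Set.univ \ B) = DW G Set.univ)
    A (Set.toFinite A) (fun _ => by simp) ?_ hA
  intro a B haB hBfin ih hA'
  have hIH := ih (fun b hb => hA' b (Set.mem_insert_of_mem _ hb))
  have hrw : Set.univ \ insert a B = (Set.univ \ B) \ {a} := by
    rw [Set.diff_diff]
    congr 1
    rw [Set.union_comm, Set.insert_eq]
  obtain ⟨haD, w, hwD, haw⟩ := hA' a (Set.mem_insert _ _)
  rw [hrw]
  rw [stability (s := Set.univ \ B) ⟨trivial, haB⟩ (hIH ▸ haD) ⟨w, hIH ▸ hwD, haw⟩]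
  exact hIH

end Iter

section Transfer

variable {D : Set V}

lemma reachable_transfer (K : (G.induce D).ConnectedComponent) :
    ∀ {x y : ↥D} (w : (G.induce D).Walk x y) (hx : x ∈ K.supp) (hy : y ∈ K.supp),
    (G.induce (Subtype.val '' K.supp)).Reachable ⟨x.1, ⟨x, hx, rfl⟩⟩ ⟨y.1, ⟨y, hy, rfl⟩⟩ := by
  intro x y w
  induction w with
  | nil =>
    intro hx hy
    exact SimpleGraph.Reachable.refl _
  | @cons a b c h p ih =>
    intro hx hy
    have hb : b ∈ K.supp := by
      rw [SimpleGraph.ConnectedComponent.mem_supp_iff] at hx ⊢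
      rw [← hx]
      exact SimpleGraph.ConnectedComponent.sound h.symm.reachable
    have hadj : (G.induce (Subtype.val '' K.supp)).Adj ⟨a.1, ⟨a, hx, rfl⟩⟩ ⟨b.1, ⟨b, hb, rfl⟩⟩ := h
    exact hadj.reachable.trans (ih hb hy)

end Transfer

end GE

lemma GE.Dset_eq {V : Type*} [Fintype V] (G : SimpleGraph V) :
    Dset G = GE.DW G Set.univ := by
  ext v
  constructor
  · rintro ⟨M, ⟨hm, hmax⟩, hv⟩
    exact ⟨trivial, M, ⟨⟨hm, Set.subset_univ _⟩, fun M' hM' => hmax M' hM'.1⟩, hv⟩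
  · rintro ⟨-, M, ⟨⟨hm, -⟩, hmax⟩, hv⟩
    exact ⟨M, ⟨hm, fun M' hM' => hmax M' ⟨hM', Set.subset_univ _⟩⟩, hv⟩

/-- Every connected component of the subgraph of a finite graph `G` induced on
`D(G)` is factor-critical. -/
theorem gallaiEdmonds_D_components_factorCritical {V : Type*} [Fintype V]
    (G : SimpleGraph V) (K : (G.induce (Dset G)).ConnectedComponent) :
    IsFactorCritical ((G.induce (Dset G)).induce K.supp) := by

  classical
  intro v
  have hDW : Dset G = GE.DW G Set.univ := GE.Dset_eq G
  set k : Set V := Subtype.val '' K.supp with hk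
  have hkD : k ⊆ Dset G := by rintro _ ⟨b, hb, rfl⟩; exact b.2
  have hA : ∀ a ∈ Aset G, a ∉ GE.DW G Set.univ ∧ ∃ w ∈ GE.DW G Set.univ, G.Adj a w := by
    rintro a ⟨haD, w, hwD, haw⟩
    exact ⟨hDW ▸ haD, w, hDW ▸ hwD, haw⟩
  have hstar := GE.stability_iter hA
  have hclD : ∀ x ∈ k, ∀ y ∈ Dset G, G.Adj x y → y ∈ k := by
    rintro _ ⟨b, hb, rfl⟩ y hy hadj
    refine ⟨⟨y, hy⟩, ?_, rfl⟩
    rw [SimpleGraph.ConnectedComponent.mem_supp_iff] at hb ⊢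
    rw [← hb]
    exact SimpleGraph.ConnectedComponent.sound
      (SimpleGraph.Adj.reachable (show (G.induce (Dset G)).Adj ⟨y, hy⟩ b from hadj.symm))
  have hkA : k ⊆ Set.univ \ Aset G := by
    intro x hx
    exact ⟨trivial, fun hxA => hxA.1 (hkD hx)⟩
  have hcl : ∀ x ∈ k, ∀ y ∈ Set.univ \ Aset G, G.Adj x y → y ∈ k := by
    intro x hx y hy hadj
    by_cases hyD : y ∈ Dset G
    · exact hclD x hx y hyD hadj
    · exact absurd ⟨hyD, x, hkD hx, hadj.symm⟩ hy.2
  have hDk : ∀ u ∈ k, u ∈ GE.DW G k := by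
    intro u hu
    have huD : u ∈ GE.DW G (Set.univ \ Aset G) := by
      rw [hstar, ← hDW]
      exact hkD hu
    obtain ⟨hus, M, hM, huM⟩ := huD
    exact ⟨hu, GE.restrict M k, GE.restrict_maxW hM hkA hcl, fun hc => huM hc.1⟩
  have hconn : (G.induce k).Connected := by
    obtain ⟨x0, hx0⟩ := K.exists_rep
    have hx0' : x0 ∈ K.supp := by
      rw [SimpleGraph.ConnectedComponent.mem_supp_iff]
      exact hx0
    have hne : Nonempty ↥k := ⟨⟨x0.1, ⟨x0, hx0', rfl⟩⟩⟩
    refine SimpleGraph.Connected.mk ?_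
    rintro ⟨_, ⟨b1, hb1, rfl⟩⟩ ⟨_, ⟨b2, hb2, rfl⟩⟩
    obtain ⟨w⟩ := GE.comp_reachable hb1 hb2
    exact GE.reachable_transfer K w hb1 hb2
  have hv0k : (v.1.1 : V) ∈ k := ⟨v.1, v.2, rfl⟩
  obtain ⟨M, hMm, hMv⟩ := GE.gallai hconn hDk hv0k
  refine ⟨{ verts := Set.univ
            Adj := fun x y => M.Adj x.1.1.1 y.1.1.1
            adj_sub := fun h => M.adj_sub h
            edge_vert := fun _ => Set.mem_univ _
            symm := ⟨fun x y h => M.adj_symm h⟩ }, ?_, fun x => Set.mem_univ _⟩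
  intro x hx
  have hxk : (x.1.1.1 : V) ∈ k := ⟨x.1.1, x.1.2, rfl⟩
  have hxv : (x.1.1.1 : V) ≠ v.1.1 := by
    intro heq
    exact x.2 (Subtype.ext (Subtype.ext heq))
  have hxM : (x.1.1.1 : V) ∈ M.verts := by
    rw [hMv]
    exact ⟨hxk, by simpa using hxv⟩
  obtain ⟨y0, hy0, huniq⟩ := hMm hxM
  have hy0M : y0 ∈ M.verts := M.edge_vert hy0.symm
  rw [hMv] at hy0M
  obtain ⟨⟨b, hb, rfl⟩, hy0v⟩ := hy0M
  refine ⟨⟨⟨b, hb⟩, ?_⟩, hy0, ?_⟩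
  · intro heq
    exact hy0v (Set.mem_singleton_iff.mpr (congrArg (fun t : ↥K.supp => t.1.1) heq))
  · intro y hy
    exact Subtype.ext (Subtype.ext (Subtype.ext (huniq y.1.1.1 hy)))
end
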